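/- arXiv:1606.03792 — 12 statements merged into one kernel-verified Lean document; each statement's English description precedes it below -/
import Mathlib

section
/- Let C ⊆ ℝ^m be a convex set, and let K, L be normal cones of C at points of C with K ⊆ L, where L is a proper normal cone (i.e., L ≠ ℝ^m and L is not the normal cone of all of C). Then K is an exposed face of L. -/
/-- The normal cone of a convex set `C` at a point `x`. -/
def normalCone {m : ℕ} (C : Set (EuclideanSpace ℝ (Fin m))) (x : EuclideanSpace ℝ (Fin m)) :
    Set (EuclideanSpace ℝ (Fin m)) :=
  {u | ∀ y ∈ C, @inner ℝ _ _ u (y - x) ≤ 0}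

/-- if `K ⊆ L` are normal cones of a convex set `C` at points of `C` and `L`
is a proper normal cone (`L ≠ ℝ^m` and `L` is not the normal cone of all of `C`),
then `K` is an exposed face of `L`. -/
theorem stmt0 {m : ℕ} (C : Set (EuclideanSpace ℝ (Fin m))) (hC : Convex ℝ C)
    (x y : EuclideanSpace ℝ (Fin m)) (hx : x ∈ C) (hy : y ∈ C)
    (K L : Set (EuclideanSpace ℝ (Fin m)))
    (hK : K = normalCone C x) (hL : L = normalCone C y)
    (hKL : K ⊆ L)
    (hLuniv : L ≠ Set.univ)
    (hLtop : L ≠ {u | ∀ z ∈ C, ∀ w ∈ C, @inner ℝ _ _ u (z - w) ≤ 0}) :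
    IsExposed ℝ L K := by
  intro _
  refine ⟨innerSL ℝ (x - y), ?_⟩
  have h0L : (0 : EuclideanSpace ℝ (Fin m)) ∈ L := by
    rw [hL]; intro z hz; simp
  have hKzero : ∀ u ∈ K, @inner ℝ _ _ (x - y) u = 0 := by
    intro u hu
    have h1 : @inner ℝ _ _ u (y - x) ≤ 0 := by
      rw [hK] at hu; exact hu y hy
    have h2 : @inner ℝ _ _ u (x - y) ≤ 0 := by
      have := hKL hu; rw [hL] at this; exact this x hx
    have hsym := real_inner_comm (x - y) u
    rw [← hsym]
    have h3 : @inner ℝ _ _ u (x - y) + @inner ℝ _ _ u (y - x) = 0 := by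
      rw [← inner_add_right]; simp
    linarith
  have hLle : ∀ v ∈ L, @inner ℝ _ _ (x - y) v ≤ 0 := by
    intro v hv
    rw [hL] at hv
    have := hv x hx
    rwa [real_inner_comm]
  ext u
  constructor
  · intro hu
    refine ⟨hKL hu, fun v hv => ?_⟩
    simp only [innerSL_apply_apply]
    rw [hKzero u hu]
    exact hLle v hv
  · rintro ⟨huL, hmax⟩
    have h1 : (0 : ℝ) ≤ @inner ℝ _ _ (x - y) u := by
      have := hmax 0 h0L
      simp only [innerSL_apply_apply, inner_zero_right] at this
      exact this
    have h2 : @inner ℝ _ _ (x - y) u = 0 := le_antisymm (hLle u huL) h1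
    rw [hK]
    intro z hz
    have hz' : @inner ℝ _ _ u (z - y) ≤ 0 := by rw [hL] at huL; exact huL z hz
    have : @inner ℝ _ _ u (z - x) = @inner ℝ _ _ u (z - y) + @inner ℝ _ _ u (y - x) := by
      rw [← inner_add_right]; congr 1; abel
    rw [this]
    have : @inner ℝ _ _ u (y - x) = 0 := by
      rw [real_inner_comm] at h2
      rw [show y - x = -(x - y) by abel, inner_neg_right, h2, neg_zero]
    linarith
end

section
/- Let C be a convex subset of ℝ^m with nonempty interior that is a proper convex set (has a proper exposed face). If for every x in the boundary of C the normal cone N_C(x), whenever it is a minimal element among nonzero normal cones of C, is a ray, then every coatom of the lattice of exposed faces of C is a smooth exposed face (i.e., its normal cone is one-dimensional). -/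
open Set RealInnerProductSpace

/-- A ray `{α u | α ≥ 0}` for some nonzero `u`. -/
def IsRay {m : ℕ} (R : Set (EuclideanSpace ℝ (Fin m))) : Prop :=
  ∃ u : EuclideanSpace ℝ (Fin m), u ≠ 0 ∧ R = {v | ∃ a : ℝ, 0 ≤ a ∧ v = a • u}

/-- A coatom of the lattice of exposed faces of `C`: an exposed face `F ≠ C` such that any
exposed face strictly containing it is `C`. -/
def IsCoatomExposedFace {m : ℕ} (C F : Set (EuclideanSpace ℝ (Fin m))) : Prop :=
  IsExposed ℝ C F ∧ F ≠ C ∧ ∀ G, IsExposed ℝ C G → F ⊆ G → G = F ∨ G = C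

section aux

variable {m : ℕ}

lemma normal_eq_zero_of_mem_interior {C : Set (EuclideanSpace ℝ (Fin m))}
    {z u : EuclideanSpace ℝ (Fin m)} (hz : z ∈ interior C) (hu : u ∈ normalCone C z) :
    u = 0 := by
  obtain ⟨ε, hε, hball⟩ := Metric.isOpen_iff.1 isOpen_interior z hz
  by_contra h
  have hn : 0 < ‖u‖ := norm_pos_iff.2 h
  set δ : ℝ := ε / (2 * ‖u‖) with hδdef
  have hδ : 0 < δ := div_pos hε (by positivity)
  have hmem : z + δ • u ∈ C := by
    apply interior_subset
    apply hball
    rw [Metric.mem_ball, dist_eq_norm, add_sub_cancel_left, norm_smul, Real.norm_eq_abs,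
      abs_of_pos hδ, hδdef]
    have he : ε / (2 * ‖u‖) * ‖u‖ = ε / 2 := by
      field_simp
    rw [he]
    linarith
  have h1 := hu _ hmem
  rw [add_sub_cancel_left, real_inner_smul_right, real_inner_self_eq_norm_sq] at h1
  nlinarith [mul_pos hδ (pow_pos hn 2)]

lemma exists_mem_openSegment {F : Set (EuclideanSpace ℝ (Fin m))}
    {x z : EuclideanSpace ℝ (Fin m)} (hx : x ∈ intrinsicInterior ℝ F) (hz : z ∈ F) :
    ∃ w ∈ F, x ∈ openSegment ℝ z w := by
  obtain ⟨x', hx', rfl⟩ := hx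
  obtain ⟨ε, hε, hball⟩ := Metric.isOpen_iff.1 isOpen_interior x' hx'
  set t : ℝ := ε / (2 * (‖(x' : EuclideanSpace ℝ (Fin m)) - z‖ + 1)) with htdef
  have ht : 0 < t := div_pos hε (by positivity)
  have hzspan : z ∈ affineSpan ℝ F := subset_affineSpan ℝ F hz
  have hwspan : t • ((x' : EuclideanSpace ℝ (Fin m)) -ᵥ z) +ᵥ (x' : EuclideanSpace ℝ (Fin m))
      ∈ affineSpan ℝ F :=
    AffineSubspace.smul_vsub_vadd_mem _ t x'.2 hzspan x'.2
  set w : EuclideanSpace ℝ (Fin m) := t • ((x' : EuclideanSpace ℝ (Fin m)) - z) + x' with hwdef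
  have hwspan' : w ∈ affineSpan ℝ F := hwspan
  have hwF : w ∈ F := by
    have : (⟨w, hwspan'⟩ : affineSpan ℝ F) ∈ interior ((↑) ⁻¹' F : Set (affineSpan ℝ F)) := by
      apply hball
      rw [Metric.mem_ball, Subtype.dist_eq, dist_eq_norm]
      have : w - (x' : EuclideanSpace ℝ (Fin m)) = t • ((x' : EuclideanSpace ℝ (Fin m)) - z) := by
        rw [hwdef]; abel
      rw [this, norm_smul, Real.norm_eq_abs, abs_of_pos ht, htdef]
      set c : ℝ := ‖(x' : EuclideanSpace ℝ (Fin m)) - z‖ with hcdef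
      have hc : 0 ≤ c := norm_nonneg _
      rw [div_mul_eq_mul_div]
      rw [div_lt_iff₀ (by positivity)]
      nlinarith
    have h2 := interior_subset this
    exact h2
  refine ⟨w, hwF, ?_⟩
  have h1t : (1 : ℝ) + t ≠ 0 := by positivity
  refine ⟨t / (1 + t), 1 / (1 + t), by positivity, by positivity, ?_, ?_⟩
  · field_simp
    ring
  · rw [hwdef]
    match_scalars <;> (field_simp; try ring)

lemma face_subset_of_relint {C F G : Set (EuclideanSpace ℝ (Fin m))}
    (hG : IsExtreme ℝ C G) (hFC : F ⊆ C) {x : EuclideanSpace ℝ (Fin m)}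
    (hx : x ∈ intrinsicInterior ℝ F) (hxG : x ∈ G) : F ⊆ G := by
  intro z hz
  obtain ⟨w, hw, hseg⟩ := exists_mem_openSegment hx hz
  exact hG.2 (hFC hz) (hFC hw) hxG hseg

lemma exists_normal_ne_zero {C : Set (EuclideanSpace ℝ (Fin m))} (hC : Convex ℝ C)
    (hint : (interior C).Nonempty) {x : EuclideanSpace ℝ (Fin m)} (hx : x ∈ frontier C) :
    ∃ u : EuclideanSpace ℝ (Fin m), u ≠ 0 ∧ u ∈ normalCone C x := by
  have hxi : x ∉ interior C := hx.2
  obtain ⟨f, hf⟩ := geometric_hahn_banach_open_point hC.interior isOpen_interior hxi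
  obtain ⟨a₀, ha₀⟩ := hint
  set u : EuclideanSpace ℝ (Fin m) := (InnerProductSpace.toDual ℝ _).symm f with hudef
  have huf : ∀ y, ⟪u, y⟫ = f y := fun y => InnerProductSpace.toDual_symm_apply
  have hune : u ≠ 0 := by
    intro h
    have := hf a₀ ha₀
    rw [← huf a₀, ← huf x, h] at this
    simp at this
  refine ⟨u, hune, ?_⟩
  intro y hy
  rw [inner_sub_right, huf, huf, sub_nonpos]
  -- f y ≤ f x via limit along the segment from y to a₀
  have hle : ∀ s : ℝ, s ∈ Ioc (0:ℝ) 1 → f (s • a₀ + (1 - s) • y) ≤ f x := by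
    intro s hs
    exact le_of_lt (hf _ (hC.combo_interior_closure_mem_interior ha₀ (subset_closure hy)
      hs.1 (by linarith [hs.2]) (by ring)))
  have htend : Filter.Tendsto (fun s : ℝ => f (s • a₀ + (1 - s) • y))
      (nhdsWithin 0 (Ioi 0)) (nhds (f y)) := by
    apply Filter.Tendsto.mono_left _ nhdsWithin_le_nhds
    have : Continuous (fun s : ℝ => f (s • a₀ + (1 - s) • y)) := by
      apply f.continuous.comp
      continuity
    have h0 : f ((0:ℝ) • a₀ + (1 - (0:ℝ)) • y) = f y := by simp
    simpa [h0] using this.tendsto 0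
  exact le_of_tendsto htend (Filter.eventually_of_mem (Ioc_mem_nhdsGT_of_mem ⟨le_refl 0, zero_lt_one⟩) hle)

end aux

/-- if `C` is a proper convex set (nonempty interior and a proper exposed face)
such that every normal cone at a boundary point of `C` which is minimal among nonzero normal
cones of `C` is a ray, then every coatom of the lattice of exposed faces of `C` is a smooth
exposed face: its normal cone (the normal cone at any relative interior point) is a ray. -/
theorem stmt3 {m : ℕ} (C : Set (EuclideanSpace ℝ (Fin m))) (hC : Convex ℝ C)
    (hint : (interior C).Nonempty)
    (hproper : ∃ F, IsExposed ℝ C F ∧ F ≠ ∅ ∧ F ≠ C)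
    (hmin : ∀ x ∈ frontier C,
      (normalCone C x ≠ {0} ∧
        ∀ y ∈ C, normalCone C y ≠ {0} → normalCone C y ⊆ normalCone C x →
          normalCone C y = normalCone C x) →
      IsRay (normalCone C x)) :
    ∀ F, IsCoatomExposedFace C F → ∀ x ∈ intrinsicInterior ℝ F, IsRay (normalCone C x) := by
  rintro F ⟨hFexp, hFneC, hFcoatom⟩ x hx
  have hxF : x ∈ F := intrinsicInterior_subset hx
  have hFC : F ⊆ C := hFexp.subset
  have hxC : x ∈ C := hFC hxF
  -- x is on the frontier of C
  have hxfr : x ∈ frontier C := by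
    refine ⟨subset_closure hxC, ?_⟩
    intro hxint
    apply hFneC
    obtain ⟨l, hl⟩ := hFexp ⟨x, hxF⟩
    set u : EuclideanSpace ℝ (Fin m) := (InnerProductSpace.toDual ℝ _).symm l with hudef
    have huf : ∀ y, ⟪u, y⟫ = l y := fun y => InnerProductSpace.toDual_symm_apply
    have hun : u ∈ normalCone C x := by
      intro y hy
      rw [inner_sub_right, huf, huf, sub_nonpos]
      exact (hl ▸ hxF).2 y hy
    have hu0 : u = 0 := normal_eq_zero_of_mem_interior hxint hun
    have hl0 : ∀ y, l y = 0 := by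
      intro y; rw [← huf, hu0, inner_zero_left]
    rw [hl]
    ext z
    simp [hl0]
  -- the normal cone at x is nonzero
  obtain ⟨u₀, hu₀ne, hu₀⟩ := exists_normal_ne_zero hC hint hxfr
  have hne : normalCone C x ≠ ({0} : Set _) := by
    intro h
    exact hu₀ne (by rwa [h, mem_singleton_iff] at hu₀)
  -- key: the exposed face of any nonzero normal vector at x equals F
  have key : ∀ v : EuclideanSpace ℝ (Fin m), v ≠ 0 → v ∈ normalCone C x →
      {z ∈ C | ∀ w ∈ C, ⟪v, w⟫ ≤ ⟪v, z⟫} = F := by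
    intro v hv hvx
    set lv : EuclideanSpace ℝ (Fin m) →L[ℝ] ℝ := InnerProductSpace.toDual ℝ _ v with hlvdef
    have hlv : ∀ y, lv y = ⟪v, y⟫ := fun y => rfl
    set G : Set (EuclideanSpace ℝ (Fin m)) := {z ∈ C | ∀ w ∈ C, ⟪v, w⟫ ≤ ⟪v, z⟫} with hGdef
    have hGexp : IsExposed ℝ C G := by
      intro _
      exact ⟨lv, rfl⟩
    have hxG : x ∈ G := by
      refine ⟨hxC, fun w hw => ?_⟩
      have := hvx w hw
      rw [inner_sub_right, sub_nonpos] at this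
      exact this
    have hFG : F ⊆ G := face_subset_of_relint (hGexp.isExtreme) hFC hx hxG
    rcases hFcoatom G hGexp hFG with h | h
    · exact h
    · exfalso
      obtain ⟨z₀, hz₀⟩ := hint
      have hz₀G : z₀ ∈ G := h ▸ interior_subset hz₀
      have : v ∈ normalCone C z₀ := by
        intro y hy
        rw [inner_sub_right, sub_nonpos]
        exact hz₀G.2 y hy
      exact hv (normal_eq_zero_of_mem_interior hz₀ this)
  -- minimality of the normal cone at x
  have hminimal : ∀ y ∈ C, normalCone C y ≠ {0} → normalCone C y ⊆ normalCone C x →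
      normalCone C y = normalCone C x := by
    intro y hy hyne hsub
    obtain ⟨u, huy, hune⟩ : ∃ u, u ∈ normalCone C y ∧ u ≠ 0 := by
      by_contra h
      push_neg at h
      apply hyne
      ext v
      simp only [mem_singleton_iff]
      constructor
      · intro hv
        by_contra hv0
        exact hv0 (h v hv)
      · rintro rfl
        intro w hw
        simp
    have hux : u ∈ normalCone C x := hsub huy
    have hGu := key u hune hux
    have hyF : y ∈ F := by
      rw [← hGu]
      refine ⟨hy, fun w hw => ?_⟩
      have := huy w hw
      rw [inner_sub_right, sub_nonpos] at this
      exact this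
    refine Set.Subset.antisymm hsub ?_
    intro v hvx
    by_cases hv : v = 0
    · subst hv
      intro w hw
      simp
    · have hGv := key v hv hvx
      have hyGv : y ∈ {z ∈ C | ∀ w ∈ C, ⟪v, w⟫ ≤ ⟪v, z⟫} := by rw [hGv]; exact hyF
      intro w hw
      rw [inner_sub_right, sub_nonpos]
      exact hyGv.2 w hw
  exact hmin x hxfr ⟨hne, hminimal⟩
end

section
/- Let C be a convex body in ℝ^m with nonempty interior. Then C is strictly convex if and only if every proper exposed face of C that is maximal among proper exposed faces (coatom) is a singleton, and this holds if and only if every boundary point of C is an exposed point of C. -/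
/-- A coatom of the exposed-face lattice in the sense of maximal proper exposed faces:
a proper exposed face (`≠ ∅, C`) such that any proper exposed face containing it equals it. -/
def IsMaxProperExposedFace {m : ℕ} (C F : Set (EuclideanSpace ℝ (Fin m))) : Prop :=
  IsExposed ℝ C F ∧ F ≠ ∅ ∧ F ≠ C ∧
    ∀ G, IsExposed ℝ C G → G ≠ C → F ⊆ G → G = F

open Set

variable {m : ℕ}

/-- From an interior point one can move a little in any direction and stay in the set. -/
lemma nudge {C : Set (EuclideanSpace ℝ (Fin m))} {x : EuclideanSpace ℝ (Fin m)}
    (hx : x ∈ interior C) (v : EuclideanSpace ℝ (Fin m)) :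
    ∃ t : ℝ, 0 < t ∧ x + t • v ∈ C := by
  obtain ⟨ε, hε, hball⟩ := Metric.mem_nhds_iff.1 (mem_interior_iff_mem_nhds.1 hx)
  refine ⟨ε / (2 * (‖v‖ + 1)), by positivity, hball ?_⟩
  rw [Metric.mem_ball, dist_eq_norm]
  have h1 : ‖x + (ε / (2 * (‖v‖ + 1))) • v - x‖ = (ε / (2 * (‖v‖ + 1))) * ‖v‖ := by
    rw [add_sub_cancel_left, norm_smul, Real.norm_eq_abs, abs_of_pos (by positivity)]
  rw [h1]
  have hv : (0:ℝ) ≤ ‖v‖ := norm_nonneg v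
  rw [div_mul_eq_mul_div, div_lt_iff₀ (by positivity)]
  nlinarith

/-- A linear functional maximized over `C` at an interior point is constant on `C`. -/
lemma max_at_interior {C : Set (EuclideanSpace ℝ (Fin m))}
    {l : EuclideanSpace ℝ (Fin m) →L[ℝ] ℝ} {x : EuclideanSpace ℝ (Fin m)}
    (hx : x ∈ interior C) (hmax : ∀ y ∈ C, l y ≤ l x) :
    ∀ c ∈ C, l c = l x := by
  intro c hc
  refine le_antisymm (hmax c hc) ?_
  obtain ⟨t, ht, htc⟩ := nudge hx (x - c)
  have := hmax _ htc
  rw [map_add, map_smul] at this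
  simp only [map_sub, smul_eq_mul] at this
  nlinarith

/-- Every frontier point of a convex body with nonempty interior lies in a proper exposed face. -/
lemma exists_proper_exposed_face {C : Set (EuclideanSpace ℝ (Fin m))} (hC : Convex ℝ C)
    (hcl : IsClosed C) (hint : (interior C).Nonempty) {z : EuclideanSpace ℝ (Fin m)}
    (hz : z ∈ frontier C) :
    ∃ F, IsExposed ℝ C F ∧ z ∈ F ∧ F ≠ C := by
  rw [hcl.frontier_eq] at hz
  obtain ⟨hzC, hzi⟩ := hz
  obtain ⟨f, hf⟩ := geometric_hahn_banach_open_point hC.interior isOpen_interior hzi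
  obtain ⟨a, ha⟩ := hint
  -- f ≤ f z on all of C
  have hmax : ∀ w ∈ C, f w ≤ f z := by
    intro w hw
    have key : ∀ t : ℝ, 0 < t → t ≤ 1 → t * f a + (1 - t) * f w < f z := by
      intro t ht ht1
      have hmem : t • a + (1 - t) • w ∈ interior C :=
        hC.combo_interior_closure_mem_interior ha (subset_closure hw) ht (by linarith) (by ring)
      have := hf _ hmem
      simpa using this
    by_contra hlt
    push_neg at hlt
    set d := f w - f z with hd
    have hd0 : 0 < d := by simp [hd]; linarith
    set t : ℝ := min 1 (d / (|f a - f w| + 1)) with htd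
    have ht0 : 0 < t := lt_min one_pos (by positivity)
    have ht1 : t ≤ 1 := min_le_left _ _
    have habs : t * |f a - f w| < d := by
      have h2 : t ≤ d / (|f a - f w| + 1) := min_le_right _ _
      have h3 : (0:ℝ) ≤ |f a - f w| := abs_nonneg _
      calc t * |f a - f w| ≤ (d / (|f a - f w| + 1)) * |f a - f w| := by
            apply mul_le_mul_of_nonneg_right h2 h3
        _ < d := by
            rw [div_mul_eq_mul_div, div_lt_iff₀ (by positivity)]
            nlinarith
    have := key t ht0 ht1
    have h4 : -(t * |f a - f w|) ≤ t * (f a - f w) := by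
      have := neg_abs_le (f a - f w)
      nlinarith
    nlinarith
  refine ⟨{x ∈ C | ∀ y ∈ C, f y ≤ f x}, fun _ => ⟨f, rfl⟩, ⟨hzC, hmax⟩, ?_⟩
  intro hFC
  have haC : a ∈ C := interior_subset ha
  rw [← hFC] at haC
  exact absurd (haC.2 z hzC) (not_le.2 (hf a ha))

/-- A proper extreme subset spans a strictly smaller affine subspace. -/
lemma span_lt_of_extreme {F G : Set (EuclideanSpace ℝ (Fin m))} (hFconv : Convex ℝ F)
    (hFne : F.Nonempty) (hex : IsExtreme ℝ G F) (hFG : F ≠ G) :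
    affineSpan ℝ F < affineSpan ℝ G := by
  have hsub : F ⊆ G := hex.1
  refine lt_of_le_of_ne (affineSpan_mono ℝ hsub) fun hspan => hFG ?_
  refine Subset.antisymm hsub fun y hy => ?_
  obtain ⟨x, hxi⟩ := hFne.intrinsicInterior hFconv
  obtain ⟨x', hx'int, hx'x⟩ := mem_intrinsicInterior.1 hxi
  have hxF : x ∈ F := intrinsicInterior_subset hxi
  by_cases hyx : y = x
  · exact hyx ▸ hxF
  have hyspan : y ∈ affineSpan ℝ F := by
    rw [hspan]; exact subset_affineSpan ℝ G hy
  have hxspan : x ∈ affineSpan ℝ F := subset_affineSpan ℝ F hxF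
  -- the curve t ↦ y + t • (x - y) inside the affine span
  set φ : ℝ → affineSpan ℝ F := fun t =>
    ⟨t • (x -ᵥ y) +ᵥ y, (affineSpan ℝ F).smul_vsub_vadd_mem t hxspan hyspan hyspan⟩ with hφ
  have hφcont : Continuous φ := by
    rw [hφ]
    apply Continuous.subtype_mk
    exact ((continuous_id.smul (continuous_const : Continuous fun _ : ℝ => x -ᵥ y)).vadd continuous_const)
  have hφ1 : φ 1 = x' := by
    apply Subtype.ext
    simp [hφ, hx'x]
  have hopen : IsOpen (φ ⁻¹' interior ((↑) ⁻¹' F : Set (affineSpan ℝ F))) :=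
    isOpen_interior.preimage hφcont
  have h1mem : (1:ℝ) ∈ φ ⁻¹' interior ((↑) ⁻¹' F : Set (affineSpan ℝ F)) := by
    simp [hφ1, hx'int]
  obtain ⟨ε, hε, hball⟩ := Metric.mem_nhds_iff.1 (hopen.mem_nhds h1mem)
  set δ : ℝ := min (ε / 2) 1 with hδd
  have hδ0 : 0 < δ := lt_min (by linarith) one_pos
  have hδε : (1 + δ) ∈ Metric.ball (1:ℝ) ε := by
    rw [Metric.mem_ball, dist_eq_norm]
    have : δ ≤ ε / 2 := min_le_left _ _
    simp only [add_sub_cancel_left, Real.norm_eq_abs, abs_of_pos hδ0]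
    linarith
  have hp0 : φ (1 + δ) ∈ interior ((↑) ⁻¹' F : Set (affineSpan ℝ F)) := hball hδε
  have hp1 : φ (1 + δ) ∈ ((↑) ⁻¹' F : Set (affineSpan ℝ F)) := interior_subset hp0
  have hp : ((1 + δ) • (x -ᵥ y) +ᵥ y) ∈ F := hp1
  set p := (1 + δ) • (x -ᵥ y) +ᵥ y with hpd
  have hseg : x ∈ openSegment ℝ y p := by
    have h1δ : (0:ℝ) < 1 + δ := by positivity
    set c : ℝ := 1 / (1 + δ) with hcd
    have hc0 : 0 < c := by positivity
    have hclt : c < 1 := by rw [hcd, div_lt_one h1δ]; linarith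
    refine ⟨1 - c, c, by linarith, hc0, by ring, ?_⟩
    simp only [hpd, vsub_eq_sub, vadd_eq_add, smul_add, smul_smul]
    have hcc : c * (1 + δ) = 1 := by rw [hcd]; field_simp
    rw [hcc]
    module
  exact hex.2 hy (hex.1 hp) hxF hseg

/-- Strict monotonicity of the dimension along proper extreme inclusions. -/
lemma finrank_lt_of_extreme {F G : Set (EuclideanSpace ℝ (Fin m))} (hFconv : Convex ℝ F)
    (hFne : F.Nonempty) (hex : IsExtreme ℝ G F) (hFG : F ≠ G) :
    Module.finrank ℝ (affineSpan ℝ F).direction < Module.finrank ℝ (affineSpan ℝ G).direction :=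
  Submodule.finrank_lt_finrank_of_lt
    (AffineSubspace.direction_lt_of_nonempty (span_lt_of_extreme hFconv hFne hex hFG)
      ((affineSpan_nonempty ℝ).2 hFne))

/-- Every frontier point lies in some maximal proper exposed face. -/
lemma exists_max_face {C : Set (EuclideanSpace ℝ (Fin m))} (hC : Convex ℝ C)
    (hcl : IsClosed C) (hint : (interior C).Nonempty) {z : EuclideanSpace ℝ (Fin m)}
    (hz : z ∈ frontier C) :
    ∃ G, IsMaxProperExposedFace C G ∧ z ∈ G := by
  set S : Set ℕ := {n | ∃ G, IsExposed ℝ C G ∧ G ≠ C ∧ z ∈ G ∧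
    n = Module.finrank ℝ (affineSpan ℝ G).direction} with hS
  obtain ⟨F, hFexp, hzF, hFC⟩ := exists_proper_exposed_face hC hcl hint hz
  have hSne : S.Nonempty := ⟨_, F, hFexp, hFC, hzF, rfl⟩
  have hSbdd : BddAbove S := by
    refine ⟨m, fun n hn => ?_⟩
    obtain ⟨G, _, _, _, rfl⟩ := hn
    have := Submodule.finrank_le (affineSpan ℝ G).direction
    simpa using this
  obtain ⟨G, hGexp, hGC, hzG, hGr⟩ := Nat.sSup_mem hSne hSbdd
  refine ⟨G, ⟨hGexp, ?_, hGC, ?_⟩, hzG⟩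
  · exact Nonempty.ne_empty ⟨z, hzG⟩
  intro G' hG'exp hG'C hGG'
  by_contra hne
  have hGconv : Convex ℝ G := hGexp.convex hC
  have hext : IsExtreme ℝ G' G := by
    refine ⟨hGG', fun x1 h1 x2 h2 x hx hseg => ?_⟩
    exact hGexp.isExtreme.2 (hG'exp.subset h1) (hG'exp.subset h2) hx hseg
  have hlt := finrank_lt_of_extreme hGconv ⟨z, hzG⟩ hext (Ne.symm hne)
  have hmem : Module.finrank ℝ (affineSpan ℝ G').direction ∈ S :=
    ⟨G', hG'exp, hG'C, hGG' hzG, rfl⟩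
  have := le_csSup hSbdd hmem
  omega

/-- A strictly convex body has only singleton proper exposed faces. -/
lemma strict_singleton {C : Set (EuclideanSpace ℝ (Fin m))} (hC : Convex ℝ C)
    (hS : StrictConvex ℝ C) {F : Set (EuclideanSpace ℝ (Fin m))}
    (hFexp : IsExposed ℝ C F) (hFne : F.Nonempty) (hFC : F ≠ C) : ∃ x, F = {x} := by
  obtain ⟨x, hx⟩ := hFne
  refine ⟨x, Subset.antisymm (fun y hy => ?_) (by simpa)⟩
  by_contra hyx
  obtain ⟨l, hl⟩ := hFexp ⟨x, hx⟩
  rw [hl] at hx hy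
  have hxC := hx.1
  have hyC := hy.1
  have hlxy : l y = l x := le_antisymm (hx.2 y hyC) (hy.2 x hxC)
  have hmid : (1/2 : ℝ) • x + (1/2 : ℝ) • y ∈ interior C :=
    hS hxC hyC (Ne.symm hyx) (by norm_num) (by norm_num) (by norm_num)
  have hmidmax : ∀ w ∈ C, l w ≤ l ((1/2 : ℝ) • x + (1/2 : ℝ) • y) := by
    intro w hw
    have : l ((1/2 : ℝ) • x + (1/2 : ℝ) • y) = l x := by
      simp [map_add, map_smul, hlxy]; ring
    rw [this]; exact hx.2 w hw
  have hconst := max_at_interior hmid hmidmax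
  apply hFC
  rw [hl]
  refine Subset.antisymm (fun w hw => hw.1) (fun w hw => ⟨hw, fun v hv => ?_⟩)
  rw [hconst w hw, hconst v hv]

/-- a convex body `C` with nonempty interior is strictly convex iff every
coatom of the lattice of exposed faces of `C` is a singleton, and iff every boundary point
of `C` is an exposed point of `C`. -/
theorem stmt4 {m : ℕ} (C : Set (EuclideanSpace ℝ (Fin m))) (hC : Convex ℝ C)
    (hcomp : IsCompact C) (hint : (interior C).Nonempty) :
    (StrictConvex ℝ C ↔ ∀ F, IsMaxProperExposedFace C F → ∃ x, F = {x}) ∧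
    (StrictConvex ℝ C ↔ ∀ x ∈ frontier C, IsExposed ℝ C {x}) := by
  have hcl : IsClosed C := hcomp.isClosed
  -- B → strictly convex
  have hBS : (∀ x ∈ frontier C, IsExposed ℝ C {x}) → StrictConvex ℝ C := by
    intro hB x hxC y hyC hxy a b ha hb hab
    by_contra hzi
    set z := a • x + b • y with hzd
    have hzC : z ∈ C := hC hxC hyC ha.le hb.le hab
    have hzf : z ∈ frontier C := by
      rw [hcl.frontier_eq]; exact ⟨hzC, hzi⟩
    obtain ⟨l, hl⟩ := hB z hzf ⟨z, rfl⟩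
    have hzmem : z ∈ ({z} : Set _) := rfl
    rw [hl] at hzmem
    have hlx : l x ≤ l z := hzmem.2 x hxC
    have hly : l y ≤ l z := hzmem.2 y hyC
    have hlz : l z = a * l x + b * l y := by simp [hzd, map_add, map_smul]
    have hlxz : l x = l z := by
      by_contra h
      have h1 : l x < l z := lt_of_le_of_ne hlx h
      have h2 : a * l x < a * l z := by nlinarith
      have h3 : b * l y ≤ b * l z := by nlinarith
      have h4 : a * l z + b * l z = l z := by rw [← add_mul, hab, one_mul]
      linarith
    have hxz : x ∈ ({z} : Set _) := by
      rw [hl]; exact ⟨hxC, fun v hv => hlxz ▸ hzmem.2 v hv⟩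
    have hlyz : l y = l z := by
      by_contra h
      have h1 : l y < l z := lt_of_le_of_ne hly h
      have h2 : b * l y < b * l z := by nlinarith
      have h3 : a * l x ≤ a * l z := by nlinarith
      have h4 : a * l z + b * l z = l z := by rw [← add_mul, hab, one_mul]
      linarith
    have hyz : y ∈ ({z} : Set _) := by
      rw [hl]; exact ⟨hyC, fun v hv => hlyz ▸ hzmem.2 v hv⟩
    exact hxy (hxz.trans hyz.symm)
  -- strictly convex → B
  have hSB : StrictConvex ℝ C → ∀ x ∈ frontier C, IsExposed ℝ C {x} := by
    intro hS z hz
    obtain ⟨F, hFexp, hzF, hFC⟩ := exists_proper_exposed_face hC hcl hint hz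
    obtain ⟨x, rfl⟩ := strict_singleton hC hS hFexp ⟨z, hzF⟩ hFC
    have hzx : z = x := hzF
    subst hzx
    exact hFexp
  -- A → B
  have hAB : (∀ F, IsMaxProperExposedFace C F → ∃ x, F = {x}) →
      ∀ x ∈ frontier C, IsExposed ℝ C {x} := by
    intro hA z hz
    obtain ⟨G, hGmax, hzG⟩ := exists_max_face hC hcl hint hz
    obtain ⟨x, rfl⟩ := hA G hGmax
    have hzx : z = x := hzG
    subst hzx
    exact hGmax.1
  constructor
  · constructor
    · intro hS F hF
      exact strict_singleton hC hS hF.1 (nonempty_iff_ne_empty.2 hF.2.1) hF.2.2.1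
    · intro hA
      exact hBS (hAB hA)
  · exact ⟨hSB, hBS⟩
end

section
/- Let C be a smooth convex body in ℝ^m with nonempty interior (every boundary point has a one-dimensional normal cone). Then C is strictly convex if and only if C has no non-exposed face (equivalently, every face of C is an exposed face). -/
lemma exists_ne_zero_normal {m : ℕ} {C : Set (EuclideanSpace ℝ (Fin m))}
    {x : EuclideanSpace ℝ (Fin m)}
    (h : Module.finrank ℝ (Submodule.span ℝ (normalCone C x)) = 1) :
    ∃ u ∈ normalCone C x, u ≠ 0 := by
  by_contra hcon
  push_neg at hcon
  have hb : Submodule.span ℝ (normalCone C x) = ⊥ :=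
    Submodule.span_eq_bot.2 hcon
  rw [hb, finrank_bot] at h
  exact one_ne_zero h.symm

lemma interior_not_max {m : ℕ} {C : Set (EuclideanSpace ℝ (Fin m))}
    {z u : EuclideanSpace ℝ (Fin m)}
    (hz : z ∈ interior C) (hu : u ≠ 0) :
    ∃ w ∈ C, (inner ℝ u z : ℝ) < inner ℝ u w := by
  obtain ⟨r, hr, hball⟩ := Metric.isOpen_iff.1 isOpen_interior z hz
  have hun : (0:ℝ) < ‖u‖ := norm_pos_iff.2 hu
  set c : ℝ := r / (2 * ‖u‖) with hc
  have hcpos : 0 < c := by positivity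
  refine ⟨z + c • u, interior_subset (hball ?_), ?_⟩
  · rw [Metric.mem_ball, dist_eq_norm]
    have : z + c • u - z = c • u := by abel
    rw [this, norm_smul, Real.norm_eq_abs, abs_of_pos hcpos, hc]
    have : r / (2 * ‖u‖) * ‖u‖ = r / 2 := by field_simp
    rw [this]; linarith
  · rw [inner_add_right, real_inner_smul_right, real_inner_self_eq_norm_sq]
    have : 0 < c * ‖u‖ ^ 2 := by positivity
    linarith

-- forward direction
lemma fwd {m : ℕ} (C : Set (EuclideanSpace ℝ (Fin m))) (hC : Convex ℝ C)
    (hcomp : IsCompact C) (hint : (interior C).Nonempty)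
    (hsmooth : ∀ x ∈ frontier C,
      Module.finrank ℝ (Submodule.span ℝ (normalCone C x)) = 1)
    (hsc : StrictConvex ℝ C) :
    ∀ F : Set (EuclideanSpace ℝ (Fin m)),
      Convex ℝ F → IsExtreme ℝ C F → IsExposed ℝ C F := by
  intro F hFconv hFext hFne
  have hfr : frontier C = C \ interior C := by
    rw [frontier, hcomp.isClosed.closure_eq]
  by_cases hi : (F ∩ interior C).Nonempty
  · -- F = C, exposed by 0 functional
    obtain ⟨x, hxF, hxint⟩ := hi
    have hFC : F = C := by
      refine subset_antisymm hFext.1 (fun y hy => ?_)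
      by_cases hyx : y = x
      · exact hyx ▸ hxF
      · obtain ⟨r, hr, hball⟩ := Metric.isOpen_iff.1 isOpen_interior x hxint
        have hxy : (0:ℝ) < ‖x - y‖ := by
          rw [norm_pos_iff, sub_ne_zero]; exact fun h => hyx h.symm
        set t : ℝ := r / (2 * ‖x - y‖) with ht
        have htpos : 0 < t := by positivity
        set x' := x + t • (x - y) with hx'
        have hx'C : x' ∈ C := by
          apply interior_subset; apply hball
          rw [Metric.mem_ball, dist_eq_norm]
          have : x + t • (x - y) - x = t • (x - y) := by abel
          rw [hx', this, norm_smul, Real.norm_eq_abs, abs_of_pos htpos, ht]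
          have : r / (2 * ‖x - y‖) * ‖x - y‖ = r / 2 := by field_simp
          rw [this]; linarith
        have hmem : x ∈ openSegment ℝ y x' := by
          refine ⟨t / (1 + t), 1 / (1 + t), by positivity, by positivity, ?_, ?_⟩
          · field_simp; ring
          · rw [hx']
            match_scalars <;> field_simp <;> ring
        exact hFext.2 hy hx'C hxF hmem
    refine ⟨0, ?_⟩
    rw [hFC]
    ext w
    simp [Set.mem_setOf_eq]
  · -- F is a singleton on the frontier
    obtain ⟨x, hxF⟩ := hFne
    have hxC : x ∈ C := hFext.1 hxF
    have hnotint : ∀ w ∈ F, w ∉ interior C := fun w hw hwi => hi ⟨w, hw, hwi⟩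
    have hFx : F = {x} := by
      refine subset_antisymm (fun y hy => ?_) (by simpa using hxF)
      by_contra hyx
      have hmid : (1/2 : ℝ) • x + (1/2 : ℝ) • y ∈ interior C :=
        hsc hxC (hFext.1 hy) (fun h => hyx (h ▸ rfl)) (by norm_num) (by norm_num) (by norm_num)
      have : (1/2 : ℝ) • x + (1/2 : ℝ) • y ∈ F :=
        hFconv hxF hy (by norm_num) (by norm_num) (by norm_num)
      exact hnotint _ this hmid
    have hxfr : x ∈ frontier C := by
      rw [hfr]; exact ⟨hxC, hnotint x hxF⟩
    obtain ⟨u, hu, hune⟩ := exists_ne_zero_normal (hsmooth x hxfr)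
    refine ⟨innerSL ℝ u, ?_⟩
    rw [hFx]
    ext w
    simp only [Set.mem_singleton_iff, Set.mem_setOf_eq, innerSL_apply_apply]
    constructor
    · rintro rfl
      refine ⟨hxC, fun v hv => ?_⟩
      have := hu v hv
      rw [inner_sub_right] at this
      linarith
    · rintro ⟨hwC, hwmax⟩
      by_contra hwx
      have hmid : (1/2 : ℝ) • x + (1/2 : ℝ) • w ∈ interior C :=
        hsc hxC hwC (fun h => hwx h.symm) (by norm_num) (by norm_num) (by norm_num)
      obtain ⟨v, hvC, hv⟩ := interior_not_max hmid hune
      have h1 : (inner ℝ u x : ℝ) ≤ inner ℝ u w := hwmax x hxC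
      have h2 : (inner ℝ u w : ℝ) ≤ inner ℝ u x := by
        have := hu w hwC
        rw [inner_sub_right] at this; linarith
      have hvw : (inner ℝ u v : ℝ) ≤ inner ℝ u w := hwmax v hvC
      rw [inner_add_right, real_inner_smul_right, real_inner_smul_right] at hv
      linarith

lemma bwd {m : ℕ} (C : Set (EuclideanSpace ℝ (Fin m))) (hC : Convex ℝ C)
    (hcomp : IsCompact C) (hint : (interior C).Nonempty)
    (hsmooth : ∀ x ∈ frontier C,
      Module.finrank ℝ (Submodule.span ℝ (normalCone C x)) = 1)
    (h : ∀ F : Set (EuclideanSpace ℝ (Fin m)),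
      Convex ℝ F → IsExtreme ℝ C F → IsExposed ℝ C F) :
    StrictConvex ℝ C := by
  intro x hx y hy hxy a b ha hb hab
  by_contra hz
  set z := a • x + b • y with hzdef
  have hzC : z ∈ C := hC hx hy ha.le hb.le hab
  have hzfr : z ∈ frontier C := by
    rw [frontier, hcomp.isClosed.closure_eq]
    exact ⟨hzC, hz⟩
  obtain ⟨u, hu, hune⟩ := exists_ne_zero_normal (hsmooth z hzfr)
  -- all points of C have ⟨u, v⟩ ≤ ⟨u, z⟩
  have hmax : ∀ v ∈ C, (inner ℝ u v : ℝ) ≤ inner ℝ u z := by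
    intro v hv
    have := hu v hv
    rw [inner_sub_right] at this; linarith
  -- x and y achieve the max
  have hsum : a * (inner ℝ u x : ℝ) + b * inner ℝ u y = inner ℝ u z := by
    rw [hzdef, inner_add_right, real_inner_smul_right, real_inner_smul_right]
  have hz' : a * (inner ℝ u z : ℝ) + b * inner ℝ u z = inner ℝ u z := by
    rw [← add_mul, hab, one_mul]
  have hxmax : (inner ℝ u x : ℝ) = inner ℝ u z := by
    have h1 := hmax x hx
    have h2 := hmax y hy
    by_contra hne
    have hlt : (inner ℝ u x : ℝ) < inner ℝ u z := lt_of_le_of_ne h1 hne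
    have e1 := mul_lt_mul_of_pos_left hlt ha
    have e2 := mul_le_mul_of_nonneg_left h2 hb.le
    linarith
  have hymax : (inner ℝ u y : ℝ) = inner ℝ u z := by
    have h1 := hmax x hx
    have h2 := hmax y hy
    by_contra hne
    have hlt : (inner ℝ u y : ℝ) < inner ℝ u z := lt_of_le_of_ne h2 hne
    have e1 := mul_lt_mul_of_pos_left hlt hb
    have e2 := mul_le_mul_of_nonneg_left h1 ha.le
    linarith
  -- the exposed face E
  set E : Set (EuclideanSpace ℝ (Fin m)) :=
    {w ∈ C | ∀ v ∈ C, (innerSL ℝ u) v ≤ (innerSL ℝ u) w} with hEdef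
  have hEexp : IsExposed ℝ C E := fun _ => ⟨innerSL ℝ u, rfl⟩
  have hxE : x ∈ E := ⟨hx, fun v hv => by
    simpa using le_trans (hmax v hv) (le_of_eq hxmax.symm)⟩
  have hyE : y ∈ E := ⟨hy, fun v hv => by
    simpa using le_trans (hmax v hv) (le_of_eq hymax.symm)⟩
  have hEext : IsExtreme ℝ C E := hEexp.isExtreme
  have hEcomp : IsCompact E := hEexp.isCompact hcomp
  obtain ⟨p, hp⟩ := hEcomp.extremePoints_nonempty ⟨x, hxE⟩
  have hpE : p ∈ E := hp.1
  have hpC : p ∈ C := hEext.1 hpE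
  have hpmax : ∀ v ∈ C, (inner ℝ u v : ℝ) ≤ inner ℝ u p := by
    intro v hv
    simpa using hpE.2 v hv
  -- {p} is a face of C, hence exposed
  have hpext : IsExtreme ℝ C {p} := hEext.trans (isExtreme_singleton.2 hp)
  obtain ⟨g, hg⟩ := h {p} (convex_singleton p) hpext ⟨p, rfl⟩
  -- Riesz representative of g
  set wg := (InnerProductSpace.toDual ℝ (EuclideanSpace ℝ (Fin m))).symm g with hwg
  have hgapp : ∀ v, (inner ℝ wg v : ℝ) = g v := fun v =>
    InnerProductSpace.toDual_symm_apply
  have hpg : p ∈ ({w ∈ C | ∀ v ∈ C, g v ≤ g w} : Set _) := hg ▸ rfl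
  -- p is on the frontier
  have hpfr : p ∈ frontier C := by
    rw [frontier, hcomp.isClosed.closure_eq]
    refine ⟨hpC, fun hpint => ?_⟩
    obtain ⟨v, hv, hlt⟩ := interior_not_max hpint hune
    exact absurd (hpmax v hv) (not_le.2 hlt)
  -- normal cone at p is one-dimensional, spanned by u
  have huN : u ∈ normalCone C p := by
    intro v hv
    rw [inner_sub_right]
    linarith [hpmax v hv]
  have hwgN : wg ∈ normalCone C p := by
    intro v hv
    rw [inner_sub_right, hgapp, hgapp]
    linarith [hpg.2 v hv]
  have hspan : Submodule.span ℝ (normalCone C p) = Submodule.span ℝ {u} := by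
    symm
    apply Submodule.eq_of_le_of_finrank_eq
    · exact Submodule.span_mono (Set.singleton_subset_iff.2 huN)
    · rw [finrank_span_singleton hune, hsmooth p hpfr]
  have : wg ∈ Submodule.span ℝ ({u} : Set _) :=
    hspan ▸ Submodule.subset_span hwgN
  obtain ⟨c, hc⟩ := Submodule.mem_span_singleton.1 this
  -- case analysis on c
  have hsingleton : ∀ w, w ∈ ({w ∈ C | ∀ v ∈ C, g v ≤ g w} : Set _) → w = p := by
    intro w hw
    have := hg ▸ hw
    simpa using this
  rcases lt_trichotomy c 0 with hcneg | hczero | hcpos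
  · -- c < 0 : C is contained in the hyperplane, so argmax g = C, so x = p = y
    have hflat : ∀ v ∈ C, (inner ℝ u v : ℝ) = inner ℝ u p := by
      intro v hv
      have h1 := hpmax v hv
      have h2 : (inner ℝ wg v : ℝ) ≤ inner ℝ wg p := by
        have := hwgN v hv
        rw [inner_sub_right] at this; linarith
      rw [← hc, real_inner_smul_left, real_inner_smul_left] at h2
      nlinarith
    have hCmax : ∀ w ∈ C, w ∈ ({w ∈ C | ∀ v ∈ C, g v ≤ g w} : Set _) := by
      intro w hw
      refine ⟨hw, fun v hv => ?_⟩
      rw [← hgapp, ← hgapp, ← hc, real_inner_smul_left, real_inner_smul_left,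
        hflat v hv, hflat w hw]
    exact hxy ((hsingleton x (hCmax x hx)).trans (hsingleton y (hCmax y hy)).symm)
  · -- c = 0 : g = 0, argmax g = C
    have hgzero : ∀ v, g v = 0 := by
      intro v
      rw [← hgapp, ← hc, hczero, zero_smul, inner_zero_left]
    have hCmax : ∀ w ∈ C, w ∈ ({w ∈ C | ∀ v ∈ C, g v ≤ g w} : Set _) := by
      intro w hw
      exact ⟨hw, fun v hv => by rw [hgzero, hgzero]⟩
    exact hxy ((hsingleton x (hCmax x hx)).trans (hsingleton y (hCmax y hy)).symm)
  · -- c > 0 : argmax g = E ∋ x, y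
    have hEmax : ∀ w ∈ E, w ∈ ({w ∈ C | ∀ v ∈ C, g v ≤ g w} : Set _) := by
      intro w hw
      refine ⟨hw.1, fun v hv => ?_⟩
      rw [← hgapp, ← hgapp, ← hc, real_inner_smul_left, real_inner_smul_left]
      have : (inner ℝ u v : ℝ) ≤ inner ℝ u w := by simpa using hw.2 v hv
      nlinarith
    exact hxy ((hsingleton x (hEmax x hxE)).trans (hsingleton y (hEmax y hyE)).symm)

/-- a smooth convex body `C` with nonempty interior (every boundary point has a
one-dimensional normal cone) is strictly convex iff every face of `C` is an exposed face. -/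
theorem stmt5 {m : ℕ} (C : Set (EuclideanSpace ℝ (Fin m))) (hC : Convex ℝ C)
    (hcomp : IsCompact C) (hint : (interior C).Nonempty)
    (hsmooth : ∀ x ∈ frontier C,
      Module.finrank ℝ (Submodule.span ℝ (normalCone C x)) = 1) :
    StrictConvex ℝ C ↔ ∀ F : Set (EuclideanSpace ℝ (Fin m)),
      Convex ℝ F → IsExtreme ℝ C F → IsExposed ℝ C F := by
  exact ⟨fwd C hC hcomp hint hsmooth, bwd C hC hcomp hint hsmooth⟩
end

section
/- Let C be a compact convex body in ℝ^m with nonempty interior and at least one proper exposed face. Then the intersection of all coatoms of the lattice of exposed faces of C is empty. -/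
open Set Module

/-- A proper nonempty exposed face of a set misses the interior. -/
lemma aux_disjoint_interior {m : ℕ} {C F : Set (EuclideanSpace ℝ (Fin m))}
    (hF : IsExposed ℝ C F) (hne : F.Nonempty) (hFC : F ≠ C)
    {x : EuclideanSpace ℝ (Fin m)} (hxF : x ∈ F) (hxi : x ∈ interior C) : False := by
  obtain ⟨l, hl⟩ := hF hne
  have hxF' := hxF
  rw [hl] at hxF'
  obtain ⟨hxC, hmax⟩ := hxF'
  have hl0 : ∀ v : EuclideanSpace ℝ (Fin m), l v ≤ 0 := by
    intro v
    obtain ⟨ε, hε, hball⟩ := Metric.isOpen_iff.1 isOpen_interior x hxi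
    set δ : ℝ := ε / (2 * (‖v‖ + 1)) with hδ
    have hδpos : 0 < δ := by positivity
    have hmem : x + δ • v ∈ C := by
      apply interior_subset; apply hball
      rw [Metric.mem_ball, dist_eq_norm]
      have h1 : x + δ • v - x = δ • v := by abel
      rw [h1, norm_smul, Real.norm_eq_abs, abs_of_pos hδpos, hδ,
        div_mul_eq_mul_div, div_lt_iff₀ (by positivity)]
      nlinarith [norm_nonneg v]
    have h2 := hmax _ hmem
    rw [map_add, map_smul, smul_eq_mul] at h2
    nlinarith
  have hlv : ∀ v : EuclideanSpace ℝ (Fin m), l v = 0 := by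
    intro v
    have h1 := hl0 v
    have h2 := hl0 (-v)
    rw [map_neg] at h2
    linarith
  apply hFC
  rw [hl]
  ext u
  simp [hlv]

/-- Strict inclusion of nonempty exposed faces strictly increases the dimension. -/
lemma aux_span_lt {m : ℕ} {C F G : Set (EuclideanSpace ℝ (Fin m))}
    (hF : IsExposed ℝ C F) (hG : IsExposed ℝ C G) (hFne : F.Nonempty)
    (hFG : F ⊆ G) (hne : F ≠ G) :
    finrank ℝ (affineSpan ℝ F).direction < finrank ℝ (affineSpan ℝ G).direction := by
  obtain ⟨l, hl⟩ := hF hFne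
  obtain ⟨x₀, hx₀⟩ := hFne
  obtain ⟨y, hyG, hyF⟩ : ∃ y, y ∈ G ∧ y ∉ F := by
    by_contra h
    push_neg at h
    exact hne (Set.Subset.antisymm hFG h)
  have hx₀' := hx₀
  rw [hl] at hx₀'
  have hconst : ∀ z ∈ F, l z = l x₀ := by
    intro z hz
    rw [hl] at hz
    exact le_antisymm (hx₀'.2 z hz.1) (hz.2 x₀ hx₀'.1)
  set Q : AffineSubspace ℝ (EuclideanSpace ℝ (Fin m)) :=
    AffineSubspace.comap (l : EuclideanSpace ℝ (Fin m) →ₗ[ℝ] ℝ).toAffineMap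
      (AffineSubspace.mk' (l x₀) ⊥) with hQ
  have hFQ : F ⊆ (Q : Set (EuclideanSpace ℝ (Fin m))) := by
    intro z hz
    show z ∈ Q
    rw [hQ, AffineSubspace.mem_comap, AffineSubspace.mem_mk']
    simp [hconst z hz]
  have hspanQ : affineSpan ℝ F ≤ Q := affineSpan_le.2 hFQ
  have hyQ : y ∉ affineSpan ℝ F := by
    intro hy
    have hmem : y ∈ Q := hspanQ hy
    rw [hQ, AffineSubspace.mem_comap, AffineSubspace.mem_mk'] at hmem
    simp only [Submodule.mem_bot, LinearMap.coe_toAffineMap, ContinuousLinearMap.coe_coe,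
      vsub_eq_sub, sub_eq_zero] at hmem
    apply hyF
    rw [hl]
    refine ⟨hG.subset hyG, fun z hz => ?_⟩
    rw [hmem]
    exact hx₀'.2 z hz
  have hlt : affineSpan ℝ F < affineSpan ℝ G := by
    refine lt_of_le_of_ne (affineSpan_mono ℝ hFG) ?_
    intro h
    exact hyQ (h ▸ subset_affineSpan ℝ G hyG)
  have hd : (affineSpan ℝ F).direction < (affineSpan ℝ G).direction :=
    AffineSubspace.direction_lt_of_nonempty hlt ⟨x₀, subset_affineSpan ℝ F hx₀⟩
  exact Submodule.finrank_lt_finrank_of_lt hd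

lemma aux_dim_le {m : ℕ} (G : Set (EuclideanSpace ℝ (Fin m))) :
    finrank ℝ (affineSpan ℝ G).direction ≤ m :=
  (Submodule.finrank_le _).trans (le_of_eq finrank_euclideanSpace_fin)

/-- Every proper nonempty exposed face is contained in a coatom. -/
lemma aux_exists_coatom {m : ℕ} {C : Set (EuclideanSpace ℝ (Fin m))} :
    ∀ k : ℕ, ∀ F : Set (EuclideanSpace ℝ (Fin m)), IsExposed ℝ C F → F.Nonempty → F ≠ C →
      m - finrank ℝ (affineSpan ℝ F).direction ≤ k →
      ∃ F', IsCoatomExposedFace C F' ∧ F ⊆ F' := by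
  intro k
  induction k with
  | zero =>
    intro F hF hFne hFC hdim
    by_cases hco : ∀ G, IsExposed ℝ C G → F ⊆ G → G = F ∨ G = C
    · exact ⟨F, ⟨hF, hFC, hco⟩, subset_rfl⟩
    · push_neg at hco
      obtain ⟨G, hG, hFG, hGF, hGC⟩ := hco
      have h1 := aux_span_lt hF hG hFne hFG (fun h => hGF h.symm)
      have h2 := aux_dim_le G
      omega
  | succ k ih =>
    intro F hF hFne hFC hdim
    by_cases hco : ∀ G, IsExposed ℝ C G → F ⊆ G → G = F ∨ G = C
    · exact ⟨F, ⟨hF, hFC, hco⟩, subset_rfl⟩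
    · push_neg at hco
      obtain ⟨G, hG, hFG, hGF, hGC⟩ := hco
      have h1 := aux_span_lt hF hG hFne hFG (fun h => hGF h.symm)
      obtain ⟨F', hF', hGF'⟩ := ih G hG (hFne.mono hFG) hGC (by omega)
      exact ⟨F', hF', hFG.trans hGF'⟩

/-- for a compact convex body `C` with nonempty interior having at least one
proper exposed face, the intersection of all coatoms of the exposed-face lattice is empty. -/
theorem stmt6 {m : ℕ} (C : Set (EuclideanSpace ℝ (Fin m))) (hC : Convex ℝ C)
    (hcomp : IsCompact C) (hint : (interior C).Nonempty)
    (hproper : ∃ F, IsExposed ℝ C F ∧ F ≠ ∅ ∧ F ≠ C) :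
    ⋂₀ {F | IsCoatomExposedFace C F} = ∅ := by
  rw [Set.eq_empty_iff_forall_notMem]
  intro x hx
  rw [Set.mem_sInter] at hx
  obtain ⟨F, hFexp, hFne, hFC⟩ := hproper
  obtain ⟨F₀, hF₀, hFF₀⟩ := aux_exists_coatom m F hFexp
    (Set.nonempty_iff_ne_empty.2 hFne) hFC (Nat.sub_le _ _)
  have hxF₀ : x ∈ F₀ := hx F₀ hF₀
  have hxC : x ∈ C := hF₀.1.subset hxF₀
  have hxint : x ∉ interior C := fun h =>
    aux_disjoint_interior hF₀.1 ⟨x, hxF₀⟩ hF₀.2.1 hxF₀ h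
  obtain ⟨z, hz⟩ := hint
  have hzC : z ∈ C := interior_subset hz
  have hzx : z - x ≠ 0 := sub_ne_zero.2 (fun h => hxint (h ▸ hz))
  have hnormpos : (0:ℝ) < ‖z - x‖ := norm_pos_iff.2 hzx
  set T : Set ℝ := {t | x + t • (z - x) ∈ C} with hT
  have hTclosed : IsClosed T := IsClosed.preimage (continuous_const.add (continuous_id.smul continuous_const)) hcomp.isClosed
  have h1T : (1:ℝ) ∈ T := by
    show x + (1:ℝ) • (z - x) ∈ C
    rw [one_smul]
    have h : x + (z - x) = z := by abel
    rw [h]; exact hzC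
  have hTbdd : BddAbove T := by
    obtain ⟨R, hR⟩ := hcomp.isBounded.subset_closedBall 0
    refine ⟨(R + ‖x‖) / ‖z - x‖, fun t ht => ?_⟩
    have h1 : ‖x + t • (z - x)‖ ≤ R := by
      have := hR ht
      rwa [Metric.mem_closedBall, dist_zero_right] at this
    have h3 : ‖t • (z - x)‖ ≤ R + ‖x‖ := by
      have heq : t • (z - x) = (x + t • (z - x)) - x := by abel
      rw [heq]
      calc ‖(x + t • (z - x)) - x‖ ≤ ‖x + t • (z - x)‖ + ‖x‖ := norm_sub_le _ _
        _ ≤ R + ‖x‖ := by linarith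
    have h2 : t * ‖z - x‖ ≤ R + ‖x‖ := by
      calc t * ‖z - x‖ ≤ |t| * ‖z - x‖ :=
            mul_le_mul_of_nonneg_right (le_abs_self t) (norm_nonneg _)
        _ = ‖t • (z - x)‖ := by rw [norm_smul, Real.norm_eq_abs]
        _ ≤ R + ‖x‖ := h3
    rw [le_div_iff₀ hnormpos]
    exact h2
  set t₀ : ℝ := sSup T with ht₀
  have ht₀T : t₀ ∈ T := hTclosed.csSup_mem ⟨1, h1T⟩ hTbdd
  have ht₀1 : (1:ℝ) ≤ t₀ := le_csSup hTbdd h1T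
  have ht₀pos : (0:ℝ) < t₀ := lt_of_lt_of_le one_pos ht₀1
  set y : EuclideanSpace ℝ (Fin m) := x + t₀ • (z - x) with hy
  have hyC : y ∈ C := ht₀T
  have hyint : y ∉ interior C := by
    intro hyi
    have hop : IsOpen ((fun t : ℝ => x + t • (z - x)) ⁻¹' interior C) :=
      IsOpen.preimage (continuous_const.add (continuous_id.smul continuous_const)) isOpen_interior
    obtain ⟨ε, hε, hball⟩ := Metric.isOpen_iff.1 hop t₀ hyi
    have hmem : t₀ + ε / 2 ∈ T := by
      have hb : t₀ + ε / 2 ∈ Metric.ball t₀ ε := by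
        rw [Metric.mem_ball, Real.dist_eq, show t₀ + ε / 2 - t₀ = ε / 2 by ring,
          abs_of_pos (by linarith)]
        linarith
      have hmemI : x + (t₀ + ε / 2) • (z - x) ∈ interior C := hball hb
      show x + (t₀ + ε / 2) • (z - x) ∈ C
      exact interior_subset hmemI
    have := le_csSup hTbdd hmem
    linarith
  obtain ⟨f, hf⟩ := geometric_hahn_banach_open_point hC.interior isOpen_interior hyint
  have hfC : ∀ a ∈ C, f a ≤ f y := by
    intro a ha
    have htend : Filter.Tendsto (fun t : ℝ => f ((1 - t) • a + t • z)) (nhdsWithin 0 (Set.Ioi 0))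
        (nhds (f a)) := by
      have hc : Continuous fun t : ℝ => f ((1 - t) • a + t • z) :=
        f.continuous.comp (((continuous_const.sub continuous_id).smul continuous_const).add (continuous_id.smul continuous_const))
      have h0 := hc.tendsto 0
      simp only [sub_zero, one_smul, zero_smul, add_zero] at h0
      exact h0.mono_left nhdsWithin_le_nhds
    refine le_of_tendsto htend ?_
    filter_upwards [Ioo_mem_nhdsGT_of_mem (Set.left_mem_Ico.mpr one_pos)] with t ht
    exact (hf _ (hC.combo_closure_interior_mem_interior (subset_closure ha) hz
      (by linarith [ht.2]) ht.1 (by ring))).le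
  set G : Set (EuclideanSpace ℝ (Fin m)) := {u ∈ C | ∀ v ∈ C, f v ≤ f u} with hG
  have hGexp : IsExposed ℝ C G := fun _ => ⟨f, rfl⟩
  have hyG : y ∈ G := ⟨hyC, hfC⟩
  have hGC : G ≠ C := by
    intro h
    have hzG : z ∈ G := h ▸ hzC
    exact absurd (hf z hz) (not_lt.2 (hzG.2 y hyC))
  obtain ⟨G', hG', hGG'⟩ := aux_exists_coatom m G hGexp ⟨y, hyG⟩ hGC (Nat.sub_le _ _)
  have hxG' : x ∈ G' := hx G' hG'
  have hyG' : y ∈ G' := hGG' hyG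
  have hzseg : z = (1 - t₀⁻¹) • x + t₀⁻¹ • y := by
    rw [hy, smul_add, smul_smul, inv_mul_cancel₀ ht₀pos.ne', one_smul]
    rw [sub_smul, one_smul]
    abel
  have hzG' : z ∈ G' := by
    rw [hzseg]
    exact (hG'.1.convex hC) hxG' hyG' (by
      have := inv_le_one_of_one_le₀ ht₀1
      linarith) (by positivity) (by ring)
  exact aux_disjoint_interior hG'.1 ⟨y, hyG'⟩ hG'.2.1 hzG' hz
end

section
/- Let C ⊆ ℝ^m be a convex set and F ⊆ C a subset. Then F is a face of C if and only if F is a poonem of C, i.e., there exist sets F_0 ⊆ F_1 ⊆ ... ⊆ F_k with F_0 = F, F_k = C, and F_{i−1} an exposed face of F_i for i = 1, ..., k. -/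
open Module Set

lemma mem_openSegment_aux {V : Type*} [AddCommGroup V] [Module ℝ V] (x y : V) (t : ℝ)
    (ht : 0 < t) : x ∈ openSegment ℝ y (x + t • (x - y)) := by
  have h1t : (0:ℝ) < 1 + t := by linarith
  refine ⟨t/(1+t), 1/(1+t), by positivity, by positivity, by field_simp; ring, ?_⟩
  match_scalars <;> field_simp <;> ring

lemma aux1 {m : ℕ} {s : Set (EuclideanSpace ℝ (Fin m))} {x y : EuclideanSpace ℝ (Fin m)}
    (hx : x ∈ intrinsicInterior ℝ s) (hy : y ∈ s) : ∃ z ∈ s, x ∈ openSegment ℝ y z := by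
  rw [mem_intrinsicInterior] at hx
  obtain ⟨⟨x', hx'span⟩, hx'int, rfl⟩ := hx
  rw [mem_interior_iff_mem_nhds, Metric.mem_nhds_iff] at hx'int
  obtain ⟨ε, hε, hball⟩ := hx'int
  set t : ℝ := ε / (2 * (‖x' - y‖ + 1)) with ht
  have htpos : 0 < t := by positivity
  set z := x' + t • (x' - y) with hz
  have hzspan : z ∈ affineSpan ℝ s := by
    have := (affineSpan ℝ s).smul_vsub_vadd_mem t hx'span (subset_affineSpan ℝ s hy) hx'span
    simpa [vsub_eq_sub, vadd_eq_add, add_comm] using this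
  have hdist : dist (⟨z, hzspan⟩ : affineSpan ℝ s) ⟨x', hx'span⟩ < ε := by
    rw [Subtype.dist_eq, dist_eq_norm]
    have h2 : z - x' = t • (x' - y) := by rw [hz]; abel
    rw [h2, norm_smul]
    have h1 : (0:ℝ) ≤ ‖x' - y‖ := norm_nonneg _
    rw [Real.norm_eq_abs, abs_of_pos htpos, ht]
    rw [div_mul_eq_mul_div, div_lt_iff₀ (by positivity)]
    nlinarith
  have hzs : z ∈ s := hball hdist
  exact ⟨z, hzs, mem_openSegment_aux x' y t htpos⟩

lemma exists_exposed_step {m : ℕ} {C F : Set (EuclideanSpace ℝ (Fin m))} (hC : Convex ℝ C)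
    (hF : Convex ℝ F) (hFC : IsExtreme ℝ C F) (hne : F.Nonempty) (hFneC : F ≠ C) :
    ∃ E, IsExposed ℝ C E ∧ F ⊆ E ∧ E.Nonempty ∧ Convex ℝ E ∧
      finrank ℝ (affineSpan ℝ E).direction < finrank ℝ (affineSpan ℝ C).direction := by
  classical
  obtain ⟨x, hxInt⟩ := Set.Nonempty.intrinsicInterior hF hne
  have hxF : x ∈ F := intrinsicInterior_subset hxInt
  have hxC : x ∈ C := hFC.1 hxF
  set W : Submodule ℝ (EuclideanSpace ℝ (Fin m)) := vectorSpan ℝ C with hW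
  have hdiff : ∀ y ∈ C, y - x ∈ W := by
    intro y hy
    have := AffineSubspace.vsub_mem_direction (mem_affineSpan ℝ hy) (mem_affineSpan ℝ hxC)
    rwa [direction_affineSpan] at this
  set D : Set W := {w : W | (w : EuclideanSpace ℝ (Fin m)) + x ∈ C} with hD
  have h0D : (0 : W) ∈ D := by simpa [hD] using hxC
  have hDconv : Convex ℝ D := by
    intro w1 h1 w2 h2 a b ha hb hab
    show ((a • w1 + b • w2 : W) : EuclideanSpace ℝ (Fin m)) + x ∈ C
    have heq : ((a • w1 + b • w2 : W) : EuclideanSpace ℝ (Fin m)) + x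
        = a • ((w1 : EuclideanSpace ℝ (Fin m)) + x) + b • ((w2 : EuclideanSpace ℝ (Fin m)) + x) := by
      push_cast
      match_scalars <;> linarith
    rw [heq]
    exact hC h1 h2 ha hb hab
  -- spanning
  have hspan : affineSpan ℝ D = ⊤ := by
    have hDne : D.Nonempty := ⟨0, h0D⟩
    rw [AffineSubspace.affineSpan_eq_top_iff_vectorSpan_eq_top_of_nonempty ℝ _ _ hDne]
    apply Submodule.map_injective_of_injective W.injective_subtype
    rw [Submodule.map_top, Submodule.range_subtype, vectorSpan_def, Submodule.map_span]
    apply le_antisymm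
    · rw [Submodule.span_le]
      rintro v ⟨w, -, rfl⟩
      exact w.2
    · show vectorSpan ℝ C ≤ Submodule.span ℝ (⇑W.subtype '' (D -ᵥ D))
      rw [vectorSpan_def, Submodule.span_le]
      rintro v ⟨y, hy, z, hz, rfl⟩
      apply Submodule.subset_span
      refine ⟨⟨y - x, hdiff y hy⟩ - ⟨z - x, hdiff z hz⟩,
        ⟨⟨y - x, hdiff y hy⟩, ?_, ⟨z - x, hdiff z hz⟩, ?_, rfl⟩, ?_⟩
      · show (y - x) + x ∈ C
        simpa using hy
      · show (z - x) + x ∈ C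
        simpa using hz
      · show ((⟨y - x, hdiff y hy⟩ - ⟨z - x, hdiff z hz⟩ : W) : EuclideanSpace ℝ (Fin m)) = y -ᵥ z
        push_cast
        rw [vsub_eq_sub]
        abel
  have hint : (interior D).Nonempty := hDconv.interior_nonempty_iff_affineSpan_eq_top.2 hspan
  -- 0 is not in the interior of D
  have h0 : (0 : W) ∉ interior D := by
    intro h0i
    apply hFneC
    refine Subset.antisymm hFC.1 fun y hy => ?_
    rw [mem_interior_iff_mem_nhds, Metric.mem_nhds_iff] at h0i
    obtain ⟨ε, hε, hball⟩ := h0i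
    set t : ℝ := ε / (2 * (‖x - y‖ + 1)) with ht
    have htpos : 0 < t := by positivity
    have hmem : t • (x - y) ∈ W := W.smul_mem t (by simpa using W.neg_mem (hdiff y hy))
    have hballmem : (⟨t • (x - y), hmem⟩ : W) ∈ Metric.ball (0 : W) ε := by
      rw [Metric.mem_ball, dist_zero_right]
      show ‖t • (x - y)‖ < ε
      rw [norm_smul, Real.norm_eq_abs, abs_of_pos htpos, ht]
      have h1 : (0:ℝ) ≤ ‖x - y‖ := norm_nonneg _
      rw [div_mul_eq_mul_div, div_lt_iff₀ (by positivity)]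
      nlinarith
    have hzC : t • (x - y) + x ∈ C := hball hballmem
    have hseg : x ∈ openSegment ℝ y (t • (x - y) + x) := by
      have := mem_openSegment_aux x y t htpos
      rwa [add_comm] at this
    exact hFC.2 hy hzC hxF hseg
  -- separating functional on W
  obtain ⟨f, hsep⟩ := geometric_hahn_banach_open_point (hDconv.interior) isOpen_interior h0
  rw [map_zero] at hsep
  have hfD : ∀ w ∈ D, f w ≤ 0 := by
    intro w hw
    by_contra hpos
    push_neg at hpos
    obtain ⟨a₁, ha₁⟩ := hint
    have hfa₁ : f a₁ < 0 := hsep a₁ ha₁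
    have hden : 0 < f w - f a₁ := by linarith
    set t : ℝ := f w / (2 * (f w - f a₁)) with htdef
    have ht0 : 0 < t := by positivity
    have ht1 : t < 1 := by
      rw [htdef, div_lt_one (by positivity)]
      linarith
    have hmem : t • a₁ + (1 - t) • w ∈ interior D := by
      apply hDconv.openSegment_self_interior_subset_interior hw ha₁
      exact ⟨1 - t, t, by linarith, ht0, by ring, by module⟩
    have hneg := hsep _ hmem
    rw [map_add, map_smul, map_smul, smul_eq_mul, smul_eq_mul] at hneg
    have hkey : t * (f w - f a₁) = f w / 2 := by
      rw [htdef]; field_simp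
    nlinarith
  -- extend to the ambient space via orthogonal projection
  set l : EuclideanSpace ℝ (Fin m) →L[ℝ] ℝ := f.comp (W.orthogonalProjectionOnto) with hl
  have key : ∀ y (hy : y ∈ C), l y = f ⟨y - x, hdiff y hy⟩ + l x := by
    intro y hy
    have h1 : W.orthogonalProjectionOnto y = ⟨y - x, hdiff y hy⟩ + W.orthogonalProjectionOnto x := by
      have h2 : y = ((⟨y - x, hdiff y hy⟩ : W) : EuclideanSpace ℝ (Fin m)) + x := by simp
      conv_lhs => rw [h2]
      rw [map_add, Submodule.orthogonalProjectionOnto_mem_subspace_eq_self]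
    simp only [hl, ContinuousLinearMap.comp_apply, h1, map_add]
  have hmax : ∀ y ∈ C, l y ≤ l x := by
    intro y hy
    rw [key y hy]
    have : f ⟨y - x, hdiff y hy⟩ ≤ 0 := hfD _ (by simpa [hD] using hy)
    linarith
  set E : Set (EuclideanSpace ℝ (Fin m)) := {y ∈ C | ∀ z ∈ C, l z ≤ l y} with hE
  have hexp : IsExposed ℝ C E := fun _ => ⟨l, rfl⟩
  have hxE : x ∈ E := ⟨hxC, hmax⟩
  have hEC : E ⊆ C := fun y hy => hy.1
  obtain ⟨a₀, ha₀⟩ := hint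
  have ha₀D : a₀ ∈ D := interior_subset ha₀
  have hfa₀ : f a₀ < 0 := hsep a₀ ha₀
  have hy₀C : (a₀ : EuclideanSpace ℝ (Fin m)) + x ∈ C := ha₀D
  have hy₀lt : l ((a₀ : EuclideanSpace ℝ (Fin m)) + x) < l x := by
    rw [key _ hy₀C]
    have heq : (⟨(a₀ : EuclideanSpace ℝ (Fin m)) + x - x, hdiff _ hy₀C⟩ : W) = a₀ := by
      ext; simp
    rw [heq]
    linarith
  have hFE : F ⊆ E := by
    intro y hyF
    obtain ⟨z, hzF, hseg⟩ := aux1 hxInt hyF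
    exact (hexp.isExtreme).2 (hFC.1 hyF) (hFC.1 hzF) hxE hseg
  refine ⟨E, hexp, hFE, ⟨x, hxE⟩, hexp.convex hC, ?_⟩
  have hlt : affineSpan ℝ E < affineSpan ℝ C := by
    refine lt_of_le_of_ne (affineSpan_mono ℝ hEC) fun heq => ?_
    have hy₀span : (a₀ : EuclideanSpace ℝ (Fin m)) + x ∈ affineSpan ℝ E := by
      rw [heq]; exact mem_affineSpan ℝ hy₀C
    set H : AffineSubspace ℝ (EuclideanSpace ℝ (Fin m)) :=
      AffineSubspace.comap (l.toLinearMap.toAffineMap) (AffineSubspace.mk' (l x) ⊥) with hH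
    have hEH : (E : Set _) ⊆ (H : Set _) := by
      intro z hz
      have h1 : l z ≤ l x := hmax z hz.1
      have h2 : l x ≤ l z := hz.2 x hxC
      show l z ∈ AffineSubspace.mk' (l x) (⊥ : Submodule ℝ ℝ)
      rw [AffineSubspace.mem_mk']
      simp [le_antisymm h1 h2]
    have hle : affineSpan ℝ E ≤ H := affineSpan_le.2 hEH
    have h4 := hle hy₀span
    have h5 : l ((a₀ : EuclideanSpace ℝ (Fin m)) + x) = l x := by
      have h6 : ((a₀ : EuclideanSpace ℝ (Fin m)) + x) ∈ H := h4
      rw [hH, AffineSubspace.mem_comap, AffineSubspace.mem_mk'] at h6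
      simpa [sub_eq_zero] using h6
    linarith
  exact Submodule.finrank_lt_finrank_of_lt
    (AffineSubspace.direction_lt_of_nonempty (k := ℝ) hlt ⟨x, mem_affineSpan ℝ hxE⟩)

lemma chain_aux {m : ℕ} (G : ℕ → Set (EuclideanSpace ℝ (Fin m))) (k : ℕ)
    (hexp : ∀ i < k, IsExposed ℝ (G (i + 1)) (G i)) (j : ℕ) :
    ∀ i, i + j ≤ k → IsExtreme ℝ (G (i + j)) (G i) ∧ (Convex ℝ (G (i + j)) → Convex ℝ (G i)) := by
  induction j with
  | zero => exact fun i _ => ⟨IsExtreme.refl ℝ _, id⟩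
  | succ j IH =>
    intro i h
    have h1 : i < k := by omega
    have e := hexp i h1
    have key := IH (i + 1) (by omega)
    have harr : i + 1 + j = i + (j + 1) := by omega
    rw [harr] at key
    exact ⟨key.1.trans e.isExtreme, fun hc => e.convex (key.2 hc)⟩

lemma face_poonem {m : ℕ} (n : ℕ) :
    ∀ C F : Set (EuclideanSpace ℝ (Fin m)), Convex ℝ C → Convex ℝ F → IsExtreme ℝ C F →
      finrank ℝ (affineSpan ℝ C).direction ≤ n →
      ∃ (k : ℕ) (G : ℕ → Set (EuclideanSpace ℝ (Fin m))),
        G 0 = F ∧ G k = C ∧ (∀ i < k, G i ⊆ G (i + 1)) ∧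
        ∀ i < k, IsExposed ℝ (G (i + 1)) (G i) := by
  induction n using Nat.strong_induction_on with
  | _ n IH =>
    intro C F hC hF hFC hrank
    by_cases hFeqC : F = C
    · exact ⟨0, fun _ => C, by rw [hFeqC], rfl, fun i hi => absurd hi (Nat.not_lt_zero i),
        fun i hi => absurd hi (Nat.not_lt_zero i)⟩
    rcases F.eq_empty_or_nonempty with hFe | hFne
    · subst hFe
      refine ⟨1, fun i => if i = 0 then ∅ else C, by simp, by simp, ?_, ?_⟩
      · intro i hi
        have : i = 0 := by omega
        subst this
        simp
      · intro i hi
        have : i = 0 := by omega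
        subst this
        simpa using isExposed_empty
    · obtain ⟨E, hEexp, hFE, hEne, hEconv, hElt⟩ := exists_exposed_step hC hF hFC hFne hFeqC
      have hrankE : finrank ℝ (affineSpan ℝ E).direction < n := lt_of_lt_of_le hElt hrank
      have hFEext : IsExtreme ℝ E F :=
        ⟨hFE, fun x1 h1 x2 h2 x3 h3 h4 => hFC.2 (hEexp.subset h1) (hEexp.subset h2) h3 h4⟩
      obtain ⟨k, G, hG0, hGk, hsub, hexp⟩ :=
        IH _ hrankE E F hEconv hF hFEext le_rfl
      refine ⟨k + 1, fun i => if i ≤ k then G i else C, ?_, ?_, ?_, ?_⟩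
      · simpa using hG0
      · simp [Nat.not_succ_le_self]
      · intro i hi
        dsimp only
        rcases Nat.lt_or_ge i k with h | h
        · rw [if_pos (le_of_lt h), if_pos (show i + 1 ≤ k from h)]
          exact hsub i h
        · have : i = k := by omega
          subst this
          rw [if_pos le_rfl, if_neg (Nat.not_succ_le_self i), hGk]
          exact hEexp.subset
      · intro i hi
        dsimp only
        rcases Nat.lt_or_ge i k with h | h
        · rw [if_pos (le_of_lt h), if_pos (show i + 1 ≤ k from h)]
          exact hexp i h
        · have : i = k := by omega
          subst this
          rw [if_pos le_rfl, if_neg (Nat.not_succ_le_self i), hGk]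
          exact hEexp

/-- a subset `F` of a convex set `C ⊆ ℝ^m` is a face of `C` (a convex extreme
subset) iff it is a poonem of `C`: there is a chain `F = F_0 ⊆ F_1 ⊆ ⋯ ⊆ F_k = C` where each
`F_{i-1}` is an exposed face of `F_i`. -/
theorem stmt10 {m : ℕ} (C : Set (EuclideanSpace ℝ (Fin m))) (hC : Convex ℝ C)
    (F : Set (EuclideanSpace ℝ (Fin m))) (hFC : F ⊆ C) :
    (Convex ℝ F ∧ IsExtreme ℝ C F) ↔
      ∃ (k : ℕ) (G : ℕ → Set (EuclideanSpace ℝ (Fin m))),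
        G 0 = F ∧ G k = C ∧ (∀ i < k, G i ⊆ G (i + 1)) ∧
        ∀ i < k, IsExposed ℝ (G (i + 1)) (G i) := by
  constructor
  · rintro ⟨hFconv, hFext⟩
    exact face_poonem (finrank ℝ (affineSpan ℝ C).direction) C F hC hFconv hFext le_rfl
  · rintro ⟨k, G, hG0, hGk, -, hexp⟩
    have h := chain_aux G k hexp k 0 (by omega)
    rw [Nat.zero_add, hGk, hG0] at h
    exact ⟨h.2 hC, h.1⟩
end

section
/- Let C ⊆ ℝ^m be a convex set and F a proper face of C (a face with F ∉ {∅, C}). Then the smallest exposed face of C containing F exists and is a proper exposed face of C. -/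
open Set

section Aux

variable {E : Type*} [NormedAddCommGroup E] [NormedSpace ℝ E]


/-- metric characterization of the intrinsic interior -/
theorem mem_intrinsicInterior_iff' {s : Set E} {x : E} :
    x ∈ intrinsicInterior ℝ s ↔ x ∈ affineSpan ℝ s ∧
      ∃ ε > 0, ∀ y ∈ (affineSpan ℝ s : Set E), dist y x < ε → y ∈ s := by
  rw [mem_intrinsicInterior]
  constructor
  · rintro ⟨y, hy, rfl⟩
    refine ⟨y.2, ?_⟩
    rw [mem_interior_iff_mem_nhds, Metric.mem_nhds_iff] at hy
    obtain ⟨ε, hε, hball⟩ := hy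
    refine ⟨ε, hε, fun z hz hdist => ?_⟩
    have : (⟨z, hz⟩ : affineSpan ℝ s) ∈ Metric.ball y ε := by
      rw [Metric.mem_ball, Subtype.dist_eq]
      exact hdist
    exact hball this
  · rintro ⟨hx, ε, hε, h⟩
    refine ⟨⟨x, hx⟩, ?_, rfl⟩
    rw [mem_interior_iff_mem_nhds, Metric.mem_nhds_iff]
    refine ⟨ε, hε, fun z hz => ?_⟩
    rw [Metric.mem_ball, Subtype.dist_eq] at hz
    exact h z z.2 hz
/-- a segment from any point of `s` to an intrinsic interior point can be extended in `s` -/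
theorem exists_openSegment_of_intrinsicInterior {s : Set E} {x y : E}
    (hx : x ∈ intrinsicInterior ℝ s) (hy : y ∈ s) :
    ∃ z ∈ s, x ∈ openSegment ℝ y z := by
  rcases eq_or_ne y x with rfl | hne
  · exact ⟨y, hy, by rw [openSegment_same]; exact mem_singleton _⟩
  obtain ⟨hxspan, ε, hε, hball⟩ := mem_intrinsicInterior_iff'.1 hx
  have hd : (0:ℝ) < ‖x - y‖ := by
    rw [norm_pos_iff, sub_ne_zero]; exact hne.symm
  set δ : ℝ := ε / (2 * ‖x - y‖) with hδdef
  have hδ : 0 < δ := by positivity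
  set z : E := x + δ • (x - y) with hzdef
  have hzspan : z ∈ affineSpan ℝ s := by
    have := AffineSubspace.smul_vsub_vadd_mem (affineSpan ℝ s) δ hxspan
      (subset_affineSpan ℝ s hy) hxspan
    simpa [vsub_eq_sub, vadd_eq_add, hzdef, add_comm] using this
  have hzs : z ∈ s := by
    apply hball z hzspan
    have : dist z x = δ * ‖x - y‖ := by
      rw [dist_eq_norm, hzdef, add_sub_cancel_left, norm_smul, Real.norm_of_nonneg hδ.le]
    have h2 : δ * ‖x - y‖ = ε / 2 := by
      rw [hδdef]; field_simp
    rw [this, h2]; linarith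
  refine ⟨z, hzs, δ / (1 + δ), 1 / (1 + δ), by positivity, by positivity, ?_, ?_⟩
  · field_simp; ring
  · rw [hzdef]
    match_scalars <;> field_simp <;> ring
/-- a face absorbs any subset whose intrinsic interior it meets -/
theorem subset_of_isExtreme_of_mem_intrinsicInterior {C B s : Set E}
    (hB : IsExtreme ℝ C B) (hsC : s ⊆ C) {x : E} (hxB : x ∈ B)
    (hxs : x ∈ intrinsicInterior ℝ s) : s ⊆ B := fun y hy => by
  obtain ⟨z, hz, hmem⟩ := exists_openSegment_of_intrinsicInterior hxs hy
  exact hB.2 (hsC hy) (hsC hz) hxB hmem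

/-- a proper face drops dimension -/
theorem finrank_lt_of_isExtreme [FiniteDimensional ℝ E] {K B : Set E}
    (hKconv : Convex ℝ K) (hBconv : Convex ℝ B) (hB : IsExtreme ℝ K B)
    (hBne : B.Nonempty) (hBK : B ≠ K) :
    Module.finrank ℝ (vectorSpan ℝ B) < Module.finrank ℝ (vectorSpan ℝ K) := by
  have hle : vectorSpan ℝ B ≤ vectorSpan ℝ K := vectorSpan_mono ℝ hB.1
  rcases hle.lt_or_eq with hlt | heq
  · exact Submodule.finrank_lt_finrank_of_lt hlt
  · exfalso
    obtain ⟨b, hb⟩ := hBne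
    have hspan : affineSpan ℝ B = affineSpan ℝ K := by
      apply AffineSubspace.ext_of_direction_eq
      · rw [direction_affineSpan, direction_affineSpan]; exact heq
      · exact ⟨b, subset_affineSpan ℝ B hb, subset_affineSpan ℝ K (hB.1 hb)⟩
    obtain ⟨x, hx⟩ := Set.Nonempty.intrinsicInterior hBconv ⟨b, hb⟩
    have hxK : x ∈ intrinsicInterior ℝ K := by
      obtain ⟨hxsp, ε, hε, hball⟩ := mem_intrinsicInterior_iff'.1 hx
      refine mem_intrinsicInterior_iff'.2 ⟨hspan ▸ hxsp, ε, hε, fun y hy hd => ?_⟩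
      exact hB.1 (hball y (by rwa [hspan]) hd)
    have : K ⊆ B := subset_of_isExtreme_of_mem_intrinsicInterior hB Subset.rfl
      (intrinsicInterior_subset hx) hxK
    exact hBK (Subset.antisymm hB.1 this)

end Aux

section Aux2

variable {E : Type*} [NormedAddCommGroup E] [InnerProductSpace ℝ E] [FiniteDimensional ℝ E]

/-- supporting functional at a point outside the intrinsic interior -/
theorem exists_supporting_functional {C : Set E} (hC : Convex ℝ C) {x : E}
    (hxC : x ∈ C) (hx : x ∉ intrinsicInterior ℝ C) :
    ∃ l : E →L[ℝ] ℝ, (∀ y ∈ C, l y ≤ l x) ∧ ∃ y ∈ C, l y < l x := by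
  set V : Submodule ℝ E := vectorSpan ℝ C with hV
  set C₀ : Set V := {v : V | (v : E) + x ∈ C} with hC₀
  have hmemV : ∀ {y : E}, y ∈ C → y - x ∈ V := fun {y} hy => by
    have := vsub_mem_vectorSpan ℝ hy hxC
    rwa [vsub_eq_sub] at this
  have hC₀conv : Convex ℝ C₀ := by
    intro u hu w hw a b ha hb hab
    have h := hC hu hw ha hb hab
    have heq : a • ((u : E) + x) + b • ((w : E) + x) = ((a • u + b • w : V) : E) + x := by
      push_cast
      rw [smul_add, smul_add]
      have : a • x + b • x = x := Convex.combo_self hab x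
      rw [add_add_add_comm, this]
    rw [heq] at h
    exact h
  -- interior of C₀ is nonempty
  obtain ⟨x₀, hx₀⟩ := Set.Nonempty.intrinsicInterior hC ⟨x, hxC⟩
  have hx₀C : x₀ ∈ C := intrinsicInterior_subset hx₀
  obtain ⟨hx₀sp, ε₀, hε₀, hball₀⟩ := mem_intrinsicInterior_iff'.1 hx₀
  set v₀ : V := ⟨x₀ - x, hmemV hx₀C⟩ with hv₀
  have hv₀int : v₀ ∈ interior C₀ := by
    rw [mem_interior_iff_mem_nhds, Metric.mem_nhds_iff]
    refine ⟨ε₀, hε₀, fun w hw => ?_⟩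
    rw [Metric.mem_ball, Subtype.dist_eq] at hw
    show (w : E) + x ∈ C
    apply hball₀
    · exact AffineSubspace.vadd_mem_of_mem_direction
        (by rw [direction_affineSpan]; exact w.2) (subset_affineSpan ℝ C hxC)
    · rw [dist_eq_norm]
      have : (w : E) + x - x₀ = (w : E) - (x₀ - x) := by abel
      rw [this]
      rw [dist_eq_norm] at hw
      simpa using hw
  -- 0 is not in the interior of C₀
  have h0 : (0 : V) ∉ interior C₀ := by
    intro h0
    apply hx
    rw [mem_interior_iff_mem_nhds, Metric.mem_nhds_iff] at h0
    obtain ⟨ε, hε, hball⟩ := h0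
    refine mem_intrinsicInterior_iff'.2 ⟨subset_affineSpan ℝ C hxC, ε, hε, fun y hy hd => ?_⟩
    have hyV : y - x ∈ V := by
      have := AffineSubspace.vsub_mem_direction hy (subset_affineSpan ℝ C hxC)
      rwa [direction_affineSpan, vsub_eq_sub] at this
    have : (⟨y - x, hyV⟩ : V) ∈ Metric.ball (0 : V) ε := by
      rw [Metric.mem_ball, Subtype.dist_eq]
      simpa [dist_eq_norm] using hd
    have := hball this
    show y ∈ C
    have h2 : y - x + x = y := by abel
    rw [← h2]
    exact this
  -- separate
  obtain ⟨f, hf⟩ := geometric_hahn_banach_open_point (hC₀conv.interior) isOpen_interior h0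
  rw [map_zero] at hf
  -- f ≤ 0 on all of C₀
  have hfle : ∀ c ∈ C₀, f c ≤ 0 := by
    intro c hc
    by_contra h
    push_neg at h
    have hfa : f v₀ < 0 := hf v₀ hv₀int
    set A := -f v₀ with hA
    have hApos : 0 < A := by simp [hA]; linarith
    set t := A / (A + f c) with ht
    have htpos : 0 < t := by positivity
    have htlt : t < 1 := by
      rw [ht, div_lt_one (by linarith)]; linarith
    have hseg : (1 - t) • v₀ + t • c ∈ interior C₀ := by
      have := (hC₀conv.openSegment_interior_self_subset_interior hv₀int hc)
      apply this
      exact ⟨1 - t, t, by linarith, htpos, by ring, rfl⟩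
    have := hf _ hseg
    rw [map_add, map_smul, map_smul, smul_eq_mul, smul_eq_mul] at this
    have hzero : (1 - t) * f v₀ + t * f c = 0 := by
      rw [ht, hA]
      have hden : -f v₀ + f c ≠ 0 := ne_of_gt (by linarith)
      field_simp
      ring
    linarith [hzero ▸ this]
  -- build the ambient functional
  haveI : CompleteSpace V := FiniteDimensional.complete ℝ V
  set l : E →L[ℝ] ℝ := f.comp (V.orthogonalProjectionOnto) with hl
  have hkey : ∀ {y : E} (hy : y ∈ C), l y - l x = f ⟨y - x, hmemV hy⟩ := by
    intro y hy
    rw [hl]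
    simp only [ContinuousLinearMap.comp_apply]
    rw [← map_sub, ← map_sub]
    congr 1
    exact Submodule.orthogonalProjectionOnto_mem_subspace_eq_self (⟨y - x, hmemV hy⟩ : V)
  refine ⟨l, fun y hy => ?_, (v₀ : E) + x, ?_, ?_⟩
  · have h1 : (⟨y - x, hmemV hy⟩ : V) ∈ C₀ := by
      show y - x + x ∈ C
      have h2 : y - x + x = y := by abel
      rwa [h2]
    have := hfle _ h1
    linarith [hkey hy]
  · show x₀ - x + x ∈ C
    have h2 : x₀ - x + x = x₀ := by abel
    rwa [h2]
  · have hv₀C₀ : v₀ ∈ C₀ := interior_subset hv₀int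
    have hv₀C : (v₀ : E) + x ∈ C := hv₀C₀
    have := hkey hv₀C
    have heq : (⟨(v₀:E) + x - x, hmemV hv₀C⟩ : V) = v₀ := by
      ext; simp
    rw [heq] at this
    have := hf v₀ hv₀int
    linarith [hkey hv₀C, heq ▸ hkey hv₀C]

end Aux2

/-- for a proper face `F` of a convex set `C ⊆ ℝ^m` (a face with
`F ∉ {∅, C}`), the smallest exposed face of `C` containing `F` exists and is a proper
exposed face of `C`. -/
theorem stmt11 {m : ℕ} (C : Set (EuclideanSpace ℝ (Fin m))) (hC : Convex ℝ C)
    (F : Set (EuclideanSpace ℝ (Fin m))) (hFconv : Convex ℝ F)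
    (hFface : IsExtreme ℝ C F) (hFne : F ≠ ∅) (hFC : F ≠ C) :
    ∃ G : Set (EuclideanSpace ℝ (Fin m)),
      IsExposed ℝ C G ∧ F ⊆ G ∧ G ≠ ∅ ∧ G ≠ C ∧
      ∀ G', IsExposed ℝ C G' → F ⊆ G' → G ⊆ G' := by
  have hFne' : F.Nonempty := nonempty_iff_ne_empty.2 hFne
  obtain ⟨x, hx⟩ := Set.Nonempty.intrinsicInterior hFconv hFne'
  have hxF : x ∈ F := intrinsicInterior_subset hx
  have hxC : x ∈ C := hFface.1 hxF
  have hxri : x ∉ intrinsicInterior ℝ C := by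
    intro h
    exact hFC (Subset.antisymm hFface.1
      (subset_of_isExtreme_of_mem_intrinsicInterior hFface Subset.rfl hxF h))
  obtain ⟨l, hle, y₀, hy₀C, hy₀lt⟩ := exists_supporting_functional hC hxC hxri
  set G₁ : Set (EuclideanSpace ℝ (Fin m)) := l.toExposed C with hG₁
  have hG₁exp : IsExposed ℝ C G₁ := ContinuousLinearMap.toExposed.isExposed
  have hxG₁ : x ∈ G₁ := ⟨hxC, hle⟩
  have hFG₁ : F ⊆ G₁ :=
    subset_of_isExtreme_of_mem_intrinsicInterior hG₁exp.isExtreme hFface.1 hxG₁ hx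
  have hG₁neC : G₁ ≠ C := by
    intro h
    have hy₀G₁ : y₀ ∈ G₁ := h ▸ hy₀C
    have := hy₀G₁.2 x hxC
    linarith
  set T : Set ℕ := {n | ∃ G : Set (EuclideanSpace ℝ (Fin m)),
    (IsExposed ℝ C G ∧ F ⊆ G) ∧ Module.finrank ℝ (vectorSpan ℝ G) = n} with hT
  have hTne : T.Nonempty := ⟨_, C, ⟨IsExposed.refl C, hFface.1⟩, rfl⟩
  obtain ⟨G₀, ⟨hG₀exp, hFG₀⟩, hG₀rank⟩ := Nat.sInf_mem hTne
  have hmin : ∀ G', IsExposed ℝ C G' → F ⊆ G' → G₀ ⊆ G' := by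
    intro G' hG'exp hFG'
    by_contra hns
    set B : Set (EuclideanSpace ℝ (Fin m)) := G₀ ∩ G' with hB
    have hBexp : IsExposed ℝ C B := hG₀exp.inter hG'exp
    have hFB : F ⊆ B := subset_inter hFG₀ hFG'
    have hBne : B.Nonempty := hFne'.mono hFB
    have hBneq : B ≠ G₀ := fun h => hns (h ▸ (inter_subset_right : B ⊆ G'))
    have hBextG₀ : IsExtreme ℝ G₀ B :=
      ⟨inter_subset_left, fun x₁ h₁ x₂ h₂ z hz hseg =>
        hBexp.isExtreme.2 (hG₀exp.subset h₁) (hG₀exp.subset h₂) hz hseg⟩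
    have hlt := finrank_lt_of_isExtreme (hG₀exp.convex hC) (hBexp.convex hC)
      hBextG₀ hBne hBneq
    rw [hG₀rank] at hlt
    exact absurd (Nat.sInf_le (show Module.finrank ℝ (vectorSpan ℝ B) ∈ T from ⟨B, ⟨hBexp, hFB⟩, rfl⟩)) (not_le.2 hlt)
  refine ⟨G₀, hG₀exp, hFG₀, (hFne'.mono hFG₀).ne_empty, ?_, hmin⟩
  intro h
  apply hG₁neC
  exact Subset.antisymm hG₁exp.subset (h ▸ hmin G₁ hG₁exp hFG₁)
end

section
/- Let M_n denote the set of n×n density matrices (positive semidefinite hermitian matrices of trace one) and let S ⊆ M_n(ℂ) be an operator system (a complex subspace containing the identity, closed under adjoints). Let π be the orthogonal projection from hermitian n×n matrices onto the real subspace S_h of hermitian elements of S with respect to the Hilbert–Schmidt inner product ⟨a,b⟩ = tr(a*b). Then the state space M(S) := {s ∈ S_h | the functional a ↦ ⟨s, a⟩ is positive on positive semidefinite elements of S and takes value 1 at the identity} is equal to π(M_n), the projection of the set of density matrices onto S_h. -/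
open ComplexOrder Matrix

set_option maxHeartbeats 1000000

section Stmt12Aux

abbrev Stmt12E (n : ℕ) := PiLp 2 (fun _ : Fin n × Fin n => ℂ)
variable {n : ℕ}

noncomputable def stmt12toE : Matrix (Fin n) (Fin n) ℂ ≃ₗ[ℝ] Stmt12E n where
  toFun a := WithLp.toLp 2 (fun p : Fin n × Fin n => a p.1 p.2)
  invFun x := Matrix.of fun i j => x (i, j)
  map_add' _ _ := rfl
  map_smul' _ _ := rfl
  left_inv _ := rfl
  right_inv _ := rfl

lemma stmt12_trace_eq_sum (a b : Matrix (Fin n) (Fin n) ℂ) :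
    Matrix.trace (aᴴ * b) = ∑ p : Fin n × Fin n, (starRingEnd ℂ) (a p.1 p.2) * b p.1 p.2 := by
  rw [← Finset.univ_product_univ, Finset.sum_product]
  simp only [Matrix.trace, Matrix.diag, Matrix.mul_apply, Matrix.conjTranspose_apply,
    RCLike.star_def]
  exact Finset.sum_comm

lemma stmt12_inner (a b : Matrix (Fin n) (Fin n) ℂ) :
    (inner ℝ (stmt12toE a) (stmt12toE b)) = (Matrix.trace (aᴴ * b)).re := by
  rw [stmt12_trace_eq_sum, PiLp.inner_apply, Complex.re_sum]
  refine Finset.sum_congr rfl fun p _ => ?_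
  rw [Complex.inner, mul_comm]; rfl

lemma stmt12_trace_eigen {a : Matrix (Fin n) (Fin n) ℂ} (ha : a.IsHermitian) :
    Matrix.trace a = ((∑ i, ha.eigenvalues i : ℝ) : ℂ) ∧
    Matrix.trace (a * a) = ((∑ i, (ha.eigenvalues i) ^ 2 : ℝ) : ℂ) := by
  have hWU : star (ha.eigenvectorUnitary : Matrix (Fin n) (Fin n) ℂ) *
      (ha.eigenvectorUnitary : Matrix (Fin n) (Fin n) ℂ) = 1 :=
    Matrix.UnitaryGroup.star_mul_self _
  constructor
  · conv_lhs => rw [ha.spectral_theorem, Unitary.conjStarAlgAut_apply]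
    rw [Matrix.trace_mul_cycle, hWU, Matrix.one_mul, Matrix.trace_diagonal]
    push_cast; rfl
  · have key : ((ha.eigenvectorUnitary : Matrix (Fin n) (Fin n) ℂ) *
        Matrix.diagonal (RCLike.ofReal ∘ ha.eigenvalues) *
        star (ha.eigenvectorUnitary : Matrix (Fin n) (Fin n) ℂ)) *
        ((ha.eigenvectorUnitary : Matrix (Fin n) (Fin n) ℂ) *
        Matrix.diagonal (RCLike.ofReal ∘ ha.eigenvalues) *
        star (ha.eigenvectorUnitary : Matrix (Fin n) (Fin n) ℂ)) =
        (ha.eigenvectorUnitary : Matrix (Fin n) (Fin n) ℂ) *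
        (Matrix.diagonal (RCLike.ofReal ∘ ha.eigenvalues) *
        (Matrix.diagonal (RCLike.ofReal ∘ ha.eigenvalues) *
        star (ha.eigenvectorUnitary : Matrix (Fin n) (Fin n) ℂ))) := by
      simp only [Matrix.mul_assoc]
      rw [← Matrix.mul_assoc (star _) _ _, hWU, Matrix.one_mul]
    conv_lhs => rw [ha.spectral_theorem, Unitary.conjStarAlgAut_apply]
    rw [key, Matrix.trace_mul_comm]
    simp only [Matrix.mul_assoc]
    rw [hWU, Matrix.mul_one, Matrix.diagonal_mul_diagonal, Matrix.trace_diagonal]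
    push_cast
    simp [pow_two]

lemma stmt12_norm_le {ρ : Matrix (Fin n) (Fin n) ℂ} (hρ : ρ.PosSemidef)
    (h1 : Matrix.trace ρ = 1) : ‖stmt12toE ρ‖ ≤ 1 := by
  obtain ⟨htr, hsq⟩ := stmt12_trace_eigen hρ.1
  have hev : ∀ i, 0 ≤ hρ.1.eigenvalues i := hρ.eigenvalues_nonneg
  have hsum : (∑ i, hρ.1.eigenvalues i) = 1 := by
    have := htr.symm.trans h1
    exact_mod_cast this
  have hb : (inner ℝ (stmt12toE ρ) (stmt12toE ρ)) ≤ 1 := by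
    rw [stmt12_inner, hρ.1.eq, hsq]
    calc (((∑ i, (hρ.1.eigenvalues i) ^ 2 : ℝ) : ℂ)).re
        = ∑ i, (hρ.1.eigenvalues i) ^ 2 := by rw [Complex.ofReal_re]
      _ ≤ (∑ i, hρ.1.eigenvalues i) ^ 2 :=
          Finset.sum_sq_le_sq_sum_of_nonneg (fun i _ => hev i)
      _ = 1 := by rw [hsum]; norm_num
  rw [real_inner_self_eq_norm_mul_norm] at hb
  nlinarith [norm_nonneg (stmt12toE ρ)]

lemma stmt12_trace_real {a b : Matrix (Fin n) (Fin n) ℂ}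
    (ha : a.IsHermitian) (hb : b.IsHermitian) :
    ((Matrix.trace (a * b)).re : ℂ) = Matrix.trace (a * b) := by
  rw [← Complex.conj_eq_iff_re]
  calc (starRingEnd ℂ) (Matrix.trace (a * b)) = Matrix.trace ((a*b)ᴴ) := by
        rw [Matrix.trace_conjTranspose]; rfl
    _ = Matrix.trace (a * b) := by
        rw [Matrix.conjTranspose_mul, ha.eq, hb.eq, Matrix.trace_mul_comm]

lemma stmt12_trace_nonneg {a : Matrix (Fin n) (Fin n) ℂ} (ha : a.PosSemidef) :
    0 ≤ Matrix.trace a := by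
  rw [Matrix.trace]
  apply Finset.sum_nonneg
  intro i _
  have h := ha.dotProduct_mulVec_nonneg (Pi.single i 1)
  simpa [dotProduct, Matrix.mulVec_single, Pi.single_apply, Finset.sum_ite_eq,
    apply_ite] using h

lemma stmt12_trace_mul_nonneg {a b : Matrix (Fin n) (Fin n) ℂ}
    (ha : a.PosSemidef) (hb : b.PosSemidef) : 0 ≤ Matrix.trace (a * b) := by
  open scoped MatrixOrder Matrix.Norms.L2Operator in
    obtain ⟨B, rfl⟩ := CStarAlgebra.nonneg_iff_eq_star_mul_self.mp ha.nonneg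
  open scoped MatrixOrder Matrix.Norms.L2Operator in
    obtain ⟨C, rfl⟩ := CStarAlgebra.nonneg_iff_eq_star_mul_self.mp hb.nonneg
  rw [Matrix.star_eq_conjTranspose, Matrix.star_eq_conjTranspose]
  have : Matrix.trace (Bᴴ * B * (Cᴴ * C)) = Matrix.trace ((C * Bᴴ)ᴴ * (C * Bᴴ)) := by
    rw [Matrix.conjTranspose_mul, Matrix.conjTranspose_conjTranspose]
    rw [Matrix.mul_assoc, Matrix.trace_mul_comm Bᴴ]
    simp only [Matrix.mul_assoc]
  rw [this]
  exact stmt12_trace_nonneg (Matrix.posSemidef_conjTranspose_mul_self _)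

lemma stmt12_vecMulVec_posSemidef (v : Fin n → ℂ) :
    (Matrix.vecMulVec v (star v)).PosSemidef := by
  refine Matrix.PosSemidef.of_dotProduct_mulVec_nonneg ?_ ?_
  · ext i j
    simp [Matrix.conjTranspose_apply, Matrix.vecMulVec_apply, mul_comm]
  · intro x
    have : star x ⬝ᵥ (Matrix.vecMulVec v (star v)) *ᵥ x
        = star (star v ⬝ᵥ x) * (star v ⬝ᵥ x) := by
      simp only [dotProduct, Matrix.mulVec, Matrix.vecMulVec_apply, Pi.star_apply,
        dotProduct, Finset.mul_sum, Finset.sum_mul, star_sum, star_mul']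
      rw [Finset.sum_comm]
      apply Finset.sum_congr rfl; intro i _
      apply Finset.sum_congr rfl; intro j _
      simp [RCLike.star_def]
      ring
    rw [this]
    exact star_mul_self_nonneg _

lemma stmt12_exists_max (hn : 0 < n) {a : Matrix (Fin n) (Fin n) ℂ} (ha : a.IsHermitian) :
    ∃ (ρ : Matrix (Fin n) (Fin n) ℂ) (t : ℝ), ρ.PosSemidef ∧ Matrix.trace ρ = 1 ∧
      Matrix.trace (a * ρ) = (t : ℂ) ∧ (((t : ℂ) • 1 - a)).PosSemidef := by
  obtain ⟨i0, -, hmax⟩ := Finset.exists_max_image Finset.univ ha.eigenvalues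
    ⟨⟨0, hn⟩, Finset.mem_univ _⟩
  set t := ha.eigenvalues i0 with ht
  set v : Fin n → ℂ := ⇑(ha.eigenvectorBasis i0) with hv
  have hnorm : (∑ i, (starRingEnd ℂ) (v i) * v i) = 1 := by
    have h1 : (inner ℂ (ha.eigenvectorBasis i0) (ha.eigenvectorBasis i0)) = 1 := by
      rw [inner_self_eq_norm_sq_to_K, ha.eigenvectorBasis.orthonormal.1 i0]
      simp
    rw [PiLp.inner_apply] at h1
    simpa [RCLike.inner_apply, Complex.conj_mul'] using h1
  refine ⟨Matrix.vecMulVec v (star v), t, stmt12_vecMulVec_posSemidef v, ?_, ?_, ?_⟩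
  · -- trace ρ = 1
    simp only [Matrix.trace, Matrix.diag, Matrix.vecMulVec_apply, Pi.star_apply]
    rw [← hnorm]
    exact Finset.sum_congr rfl fun i _ => by simp [RCLike.star_def]; ring
  · -- trace (a * ρ) = t
    have hav : a *ᵥ v = t • v := ha.mulVec_eigenvectorBasis i0
    calc Matrix.trace (a * Matrix.vecMulVec v (star v))
        = ∑ i, (starRingEnd ℂ) (v i) * (a *ᵥ v) i := by
          simp only [Matrix.trace, Matrix.diag, Matrix.mul_apply, Matrix.vecMulVec_apply,
            Pi.star_apply, Matrix.mulVec, dotProduct, RCLike.star_def, Finset.mul_sum]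
          exact Finset.sum_congr rfl fun i _ => Finset.sum_congr rfl fun j _ => by ring
      _ = (t : ℂ) * ∑ i, (starRingEnd ℂ) (v i) * v i := by
          rw [hav, Finset.mul_sum]
          exact Finset.sum_congr rfl fun i _ => by
            simp [Pi.smul_apply, Complex.real_smul]; ring
      _ = (t : ℂ) := by rw [hnorm, mul_one]
  · -- (t • 1 - a) psd
    have hU : (ha.eigenvectorUnitary : Matrix (Fin n) (Fin n) ℂ) *
        (star (ha.eigenvectorUnitary : Matrix (Fin n) (Fin n) ℂ)) = 1 :=
      Matrix.mem_unitaryGroup_iff.mp ha.eigenvectorUnitary.2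
    have key : ((t : ℂ) • 1 - a) =
        (ha.eigenvectorUnitary : Matrix (Fin n) (Fin n) ℂ) *
          Matrix.diagonal (fun i => ((t - ha.eigenvalues i : ℝ) : ℂ)) *
          (star (ha.eigenvectorUnitary : Matrix (Fin n) (Fin n) ℂ)) := by
      have hd : Matrix.diagonal (fun i => ((t - ha.eigenvalues i : ℝ) : ℂ)) =
          (t : ℂ) • 1 - Matrix.diagonal (RCLike.ofReal ∘ ha.eigenvalues) := by
        rw [Matrix.smul_one_eq_diagonal]
        ext i j
        rcases eq_or_ne i j with h | h <;>
          simp [h, Matrix.diagonal_apply, Matrix.diagonal_apply_ne, Complex.ofReal_sub]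
      have hid : (ha.eigenvectorUnitary : Matrix (Fin n) (Fin n) ℂ) * ((t : ℂ) • 1) *
          (star (ha.eigenvectorUnitary : Matrix (Fin n) (Fin n) ℂ)) = (t : ℂ) • 1 := by
        rw [Matrix.mul_smul, Matrix.mul_one, Matrix.smul_mul, hU]
      rw [hd]
      conv_lhs => rw [ha.spectral_theorem, Unitary.conjStarAlgAut_apply]
      rw [mul_sub, sub_mul, hid]
    rw [key]
    apply Matrix.PosSemidef.mul_mul_conjTranspose_same
    · apply Matrix.PosSemidef.diagonal
      intro i
      have : ha.eigenvalues i ≤ t := hmax i (Finset.mem_univ i)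
      exact Complex.zero_le_real.mpr (by linarith)

lemma stmt12_real_smul_herm (r : ℝ) {A : Matrix (Fin n) (Fin n) ℂ} (hA : A.IsHermitian) :
    (r • A).IsHermitian := by
  unfold Matrix.IsHermitian
  rw [Matrix.conjTranspose_smul, hA.eq, star_trivial]

lemma stmt12_real_smul_mem (r : ℝ) {S : Submodule ℂ (Matrix (Fin n) (Fin n) ℂ)}
    {A : Matrix (Fin n) (Fin n) ℂ} (hA : A ∈ S) : r • A ∈ S := by
  rw [← algebraMap_smul ℂ r A]
  exact S.smul_mem _ hA

lemma stmt12_psd_comb {a b : ℝ} (ha : 0 ≤ a) (hb : 0 ≤ b)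
    {ρ1 ρ2 : Matrix (Fin n) (Fin n) ℂ} (h1 : ρ1.PosSemidef) (h2 : ρ2.PosSemidef) :
    (a • ρ1 + b • ρ2).PosSemidef := by
  refine Matrix.PosSemidef.of_dotProduct_mulVec_nonneg ((stmt12_real_smul_herm a h1.1).add (stmt12_real_smul_herm b h2.1)) fun x => ?_
  have e1 : star x ⬝ᵥ (a • ρ1 + b • ρ2) *ᵥ x
      = (a : ℂ) * (star x ⬝ᵥ ρ1 *ᵥ x) + (b : ℂ) * (star x ⬝ᵥ ρ2 *ᵥ x) := by
    rw [Matrix.add_mulVec, dotProduct_add]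
    congr 1 <;>
    · rw [← algebraMap_smul ℂ, Matrix.smul_mulVec, dotProduct_smul]
      simp [Algebra.algebraMap_self, smul_eq_mul]
  rw [e1]
  have := h1.dotProduct_mulVec_nonneg x; have := h2.dotProduct_mulVec_nonneg x
  have hac : (0:ℂ) ≤ (a:ℂ) := Complex.zero_le_real.mpr ha
  have hbc : (0:ℂ) ≤ (b:ℂ) := Complex.zero_le_real.mpr hb
  exact add_nonneg (mul_nonneg hac (h1.dotProduct_mulVec_nonneg x)) (mul_nonneg hbc (h2.dotProduct_mulVec_nonneg x))

lemma stmt12_exists_density (hn : 0 < n) (S : Submodule ℂ (Matrix (Fin n) (Fin n) ℂ))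
    (h1 : (1 : Matrix (Fin n) (Fin n) ℂ) ∈ S)
    {s : Matrix (Fin n) (Fin n) ℂ} (hs : s ∈ S) (hsh : s.IsHermitian)
    (hpos : ∀ a ∈ S, a.PosSemidef → 0 ≤ Matrix.trace (sᴴ * a))
    (htr : Matrix.trace s = 1) :
    ∃ ρ : Matrix (Fin n) (Fin n) ℂ, ρ.PosSemidef ∧ Matrix.trace ρ = 1 ∧
      ∀ u ∈ S, u.IsHermitian → Matrix.trace ((ρ - s) * u) = 0 := by
  classical
  -- the real subspace of hermitian elements of S, inside E
  let W : Submodule ℝ (Stmt12E n) :=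
    { carrier := {x | stmt12toE.symm x ∈ S ∧ (stmt12toE.symm x).IsHermitian}
      add_mem' := by
        rintro x y ⟨hx1, hx2⟩ ⟨hy1, hy2⟩
        rw [Set.mem_setOf_eq, map_add]
        exact ⟨S.add_mem hx1 hy1, hx2.add hy2⟩
      zero_mem' := by
        rw [Set.mem_setOf_eq, map_zero]
        exact ⟨S.zero_mem, Matrix.isHermitian_zero⟩
      smul_mem' := by
        rintro r x ⟨hx1, hx2⟩
        rw [Set.mem_setOf_eq, _root_.map_smul]
        exact ⟨stmt12_real_smul_mem r hx1, stmt12_real_smul_herm r hx2⟩ }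
  have hmemW : ∀ x, x ∈ W ↔ stmt12toE.symm x ∈ S ∧ (stmt12toE.symm x).IsHermitian :=
    fun _ => Iff.rfl
  haveI : CompleteSpace W := FiniteDimensional.complete ℝ W
  let P : Stmt12E n →L[ℝ] Stmt12E n := W.subtypeL.comp (Submodule.orthogonalProjection W)
  have hPmem : ∀ x, P x ∈ W := fun x => (Submodule.orthogonalProjection W x).2
  have hPself : ∀ x ∈ W, P x = x := fun x hx =>
    Submodule.starProjection_eq_self_iff.mpr hx
  -- the set of (images of) density matrices
  let D : Set (Stmt12E n) :=
    {x | (stmt12toE.symm x).PosSemidef ∧ Matrix.trace (stmt12toE.symm x) = 1}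
  have hDconv : Convex ℝ D := by
    rintro x ⟨hx1, hx2⟩ y ⟨hy1, hy2⟩ a b ha hb hab
    constructor
    · show (stmt12toE.symm (a • x + b • y)).PosSemidef
      rw [map_add, _root_.map_smul, _root_.map_smul]
      exact stmt12_psd_comb ha hb hx1 hy1
    · show Matrix.trace (stmt12toE.symm (a • x + b • y)) = 1
      rw [map_add, _root_.map_smul, _root_.map_smul, Matrix.trace_add,
        Matrix.trace_smul, Matrix.trace_smul, hx2, hy2]
      simp only [Complex.real_smul, mul_one]
      exact_mod_cast hab
  have hcont : ∀ p : Fin n × Fin n, Continuous (fun x : Stmt12E n => x p) := by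
    intro p
    exact (PiLp.proj (𝕜 := ℝ) 2 (fun _ : Fin n × Fin n => ℂ) p).continuous
  have hDclosed : IsClosed D := by
    haveI := Complex.orderClosedTopology
    have e1 : D = (⋂ v : Fin n → ℂ,
        {x : Stmt12E n | 0 ≤ star v ⬝ᵥ (stmt12toE.symm x) *ᵥ v}) ∩
        (⋂ p : Fin n × Fin n,
          {x : Stmt12E n | star (x (p.2, p.1)) = x (p.1, p.2)}) ∩
        {x : Stmt12E n | Matrix.trace (stmt12toE.symm x) = 1} := by
      ext x
      simp only [Set.mem_inter_iff, Set.mem_iInter, Set.mem_setOf_eq, D]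
      constructor
      · rintro ⟨⟨hherm, hpsd⟩, htr1⟩
        refine ⟨⟨fun v => Matrix.PosSemidef.dotProduct_mulVec_nonneg ⟨hherm, hpsd⟩ v, fun p => ?_⟩, htr1⟩
        have := congrFun (congrFun hherm p.1) p.2
        exact this
      · rintro ⟨⟨hpsd, hherm⟩, htr1⟩
        refine ⟨Matrix.PosSemidef.of_dotProduct_mulVec_nonneg ?_ (fun v => hpsd v), htr1⟩
        ext i j
        exact hherm (i, j)
    rw [e1]
    refine IsClosed.inter (IsClosed.inter ?_ ?_) ?_
    · refine isClosed_iInter fun v => ?_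
      refine isClosed_le continuous_const ?_
      have : (fun x : Stmt12E n => star v ⬝ᵥ (stmt12toE.symm x) *ᵥ v)
          = fun x : Stmt12E n => ∑ p : Fin n × Fin n,
              star (v p.1) * x p * v p.2 := by
        funext x
        rw [← Finset.univ_product_univ, Finset.sum_product]
        simp only [dotProduct, Matrix.mulVec, Pi.star_apply, Finset.mul_sum]
        refine Finset.sum_congr rfl fun i _ => Finset.sum_congr rfl fun j _ => ?_
        rw [← mul_assoc]
        rfl
      rw [this]
      exact continuous_finset_sum _ fun p _ =>
        ((continuous_const.mul (hcont p)).mul continuous_const)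
    · refine isClosed_iInter fun p => ?_
      exact isClosed_eq (Complex.continuous_conj.comp (hcont (p.2, p.1))) (hcont (p.1, p.2))
    · have : (fun x : Stmt12E n => Matrix.trace (stmt12toE.symm x))
          = fun x : Stmt12E n => ∑ i : Fin n, x (i, i) := rfl
      refine isClosed_eq ?_ continuous_const
      rw [this]
      exact continuous_finset_sum _ fun i _ => hcont (i, i)
  have hDbdd : Bornology.IsBounded D := by
    refine (Metric.isBounded_closedBall (x := (0 : Stmt12E n)) (r := 1)).subset ?_
    rintro x ⟨hx1, hx2⟩
    rw [Metric.mem_closedBall, dist_zero_right]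
    have := stmt12_norm_le hx1 hx2
    simpa using this
  have hDcompact : IsCompact D := Metric.isCompact_of_isClosed_isBounded hDclosed hDbdd
  have hKcompact : IsCompact (P '' D) := hDcompact.image P.continuous
  have hKconv : Convex ℝ (P '' D) := hDconv.linear_image (P : Stmt12E n →ₗ[ℝ] Stmt12E n)
  have hsymms : stmt12toE.symm (stmt12toE s) = s := stmt12toE.symm_apply_apply s
  have hsW : stmt12toE s ∈ W := by
    rw [hmemW, hsymms]
    exact ⟨hs, hsh⟩
  have hmain : stmt12toE s ∈ P '' D := by
    by_contra hnot
    obtain ⟨f, u, hfK, hfs⟩ :=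
      geometric_hahn_banach_closed_point hKconv hKcompact.isClosed hnot
    set a0 := (InnerProductSpace.toDual ℝ (Stmt12E n)).symm f with ha0def
    have ha0 : ∀ x, (inner ℝ a0 x) = f x := fun x =>
      InnerProductSpace.toDual_symm_apply
    set a := stmt12toE.symm (P a0) with hadef
    have haW : P a0 ∈ W := hPmem a0
    have haS : a ∈ S := ((hmemW _).1 haW).1
    have hah : a.IsHermitian := ((hmemW _).1 haW).2
    have htoEa : stmt12toE a = P a0 := stmt12toE.apply_symm_apply _
    have hfP : ∀ x, f (P x) = (inner ℝ (stmt12toE a) x) := by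
      intro x
      rw [htoEa, ← ha0 (P x)]
      exact (Submodule.inner_starProjection_left_eq_right W a0 x).symm
    have hub : ∀ ρ : Matrix (Fin n) (Fin n) ℂ, ρ.PosSemidef → Matrix.trace ρ = 1 →
        (Matrix.trace (a * ρ)).re < u := by
      intro ρ hρ hρt
      have hDρ : stmt12toE ρ ∈ D := by
        constructor
        · show (stmt12toE.symm (stmt12toE ρ)).PosSemidef
          rw [stmt12toE.symm_apply_apply]; exact hρ
        · show Matrix.trace (stmt12toE.symm (stmt12toE ρ)) = 1
          rw [stmt12toE.symm_apply_apply]; exact hρt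
      have hlt := hfK _ (Set.mem_image_of_mem P hDρ)
      rw [hfP (stmt12toE ρ), stmt12_inner, hah.eq] at hlt
      exact hlt
    have hlb : u < (Matrix.trace (a * s)).re := by
      have heq := hfP (stmt12toE s)
      rw [hPself _ hsW] at heq
      rw [heq, stmt12_inner, hah.eq] at hfs
      exact hfs
    obtain ⟨ρ0, t, hρ0, hρ0t, htra, hpsd⟩ := stmt12_exists_max hn hah
    have h4 : t < u := by
      have := hub ρ0 hρ0 hρ0t
      rwa [htra, Complex.ofReal_re] at this
    have hbS : ((t : ℂ) • 1 - a) ∈ S := S.sub_mem (S.smul_mem _ h1) haS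
    have h5 := hpos _ hbS hpsd
    rw [hsh.eq] at h5
    have h6 : Matrix.trace (s * ((t : ℂ) • 1 - a)) = (t : ℂ) - Matrix.trace (a * s) := by
      rw [mul_sub, Matrix.trace_sub, Matrix.mul_smul, Matrix.mul_one, Matrix.trace_smul,
        htr, Matrix.trace_mul_comm]
      rw [smul_eq_mul, mul_one]
    rw [h6] at h5
    have h7 : (Matrix.trace (a * s)).re ≤ t := by
      have h8 := (Complex.le_def.mp h5).1
      simp only [Complex.zero_re, Complex.sub_re, Complex.ofReal_re] at h8
      linarith
    linarith
  obtain ⟨x, hxD, hPx⟩ := hmain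
  refine ⟨stmt12toE.symm x, hxD.1, hxD.2, ?_⟩
  intro w hwS hwh
  have hxW : x - stmt12toE s ∈ Wᗮ := by
    have h8 := Submodule.sub_starProjection_mem_orthogonal (K := W) x
    have : W.starProjection x = stmt12toE s := hPx
    rwa [this] at h8
  have hwW : stmt12toE w ∈ W := by
    rw [hmemW, stmt12toE.symm_apply_apply]
    exact ⟨hwS, hwh⟩
  have h9 : (inner ℝ (stmt12toE w) (x - stmt12toE s)) = 0 :=
    (Submodule.mem_orthogonal W _).1 hxW _ hwW
  have h10 : x - stmt12toE s = stmt12toE ((stmt12toE.symm x) - s) := by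
    rw [map_sub, stmt12toE.apply_symm_apply]
  rw [h10, stmt12_inner, hwh.eq] at h9
  have hherm : ((stmt12toE.symm x) - s).IsHermitian := hxD.1.1.sub hsh
  have h11 := stmt12_trace_real hwh hherm
  rw [h9] at h11
  rw [Matrix.trace_mul_comm]
  simpa using h11.symm

lemma stmt12_eq_zero_of_trace {A : Matrix (Fin n) (Fin n) ℂ}
    (h : Matrix.trace (Aᴴ * A) = 0) : A = 0 := by
  rw [stmt12_trace_eq_sum] at h
  have h2 : ∑ p : Fin n × Fin n, Complex.normSq (A p.1 p.2) = 0 := by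
    have := congrArg Complex.re h
    rw [Complex.re_sum] at this
    simpa [Complex.mul_conj', Complex.normSq_apply, Complex.mul_re, Complex.conj_re,
      Complex.conj_im] using this
  have h3 : ∀ p : Fin n × Fin n, Complex.normSq (A p.1 p.2) = 0 := by
    intro p
    have := (Finset.sum_eq_zero_iff_of_nonneg
      (fun q _ => Complex.normSq_nonneg (A q.1 q.2))).1 h2 p (Finset.mem_univ p)
    exact this
  ext i j
  simpa using Complex.normSq_eq_zero.mp (h3 (i, j))

end Stmt12Aux

/-- for an operator system `S ⊆ M_n(ℂ)` and the orthogonal projection `π`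
(w.r.t. the Hilbert–Schmidt inner product) of hermitian matrices onto the hermitian part of
`S`, the state space `M(S) = {s ∈ S | a ↦ tr(sᴴ a) is positive on psd elements of S and
takes value 1 at 𝟙}` equals the image under `π` of the set of density matrices. -/
theorem stmt12 {n : ℕ} (hn : 0 < n) (S : Submodule ℂ (Matrix (Fin n) (Fin n) ℂ))
    (h1 : (1 : Matrix (Fin n) (Fin n) ℂ) ∈ S)
    (hstar : ∀ a ∈ S, aᴴ ∈ S)
    (π : Matrix (Fin n) (Fin n) ℂ → Matrix (Fin n) (Fin n) ℂ)
    (hπmem : ∀ a : Matrix (Fin n) (Fin n) ℂ, a.IsHermitian → π a ∈ S ∧ (π a).IsHermitian)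
    (hπorth : ∀ a : Matrix (Fin n) (Fin n) ℂ, a.IsHermitian →
      ∀ s ∈ S, s.IsHermitian → Matrix.trace ((a - π a) * s) = 0) :
    {s : Matrix (Fin n) (Fin n) ℂ | s ∈ S ∧
        (∀ a ∈ S, a.PosSemidef → 0 ≤ Matrix.trace (sᴴ * a)) ∧
        Matrix.trace (sᴴ * 1) = 1}
      = π '' {ρ : Matrix (Fin n) (Fin n) ℂ | ρ.PosSemidef ∧ Matrix.trace ρ = 1} := by
  ext s
  simp only [Set.mem_setOf_eq, Set.mem_image]
  constructor
  · rintro ⟨hsS, hpos, htr1⟩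
    -- step 1: for hermitian u ∈ S, trace (sᴴ * u) is real
    have hreal : ∀ u, u ∈ S → u.IsHermitian → (Matrix.trace (sᴴ * u)).im = 0 := by
      intro u huS huh
      obtain ⟨ρ0, t, -, -, -, hpsd⟩ := stmt12_exists_max hn huh.neg
      have hbS : ((t : ℂ) • 1 + u) ∈ S := S.add_mem (S.smul_mem _ h1) huS
      have hbpsd : ((t : ℂ) • 1 + u).PosSemidef := by
        simpa [sub_neg_eq_add] using hpsd
      have h0 := hpos _ hbS hbpsd
      have hsplit : Matrix.trace (sᴴ * ((t : ℂ) • 1 + u))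
          = (t : ℂ) * Matrix.trace (sᴴ * 1) + Matrix.trace (sᴴ * u) := by
        rw [mul_add, Matrix.trace_add, Matrix.mul_smul, Matrix.trace_smul, smul_eq_mul]
      rw [hsplit, htr1, mul_one] at h0
      have him := (Complex.le_def.mp h0).2
      simp only [Complex.zero_im, Complex.add_im, Complex.ofReal_im, zero_add] at him
      exact him.symm
    -- step 2: s is hermitian
    have hsherm : s.IsHermitian := by
      have hdS : (s - sᴴ) ∈ S := S.sub_mem hsS (hstar s hsS)
      have hwS : Complex.I • (s - sᴴ) ∈ S := S.smul_mem _ hdS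
      have hwh : (Complex.I • (s - sᴴ)).IsHermitian := by
        show (Complex.I • (s - sᴴ))ᴴ = _
        rw [Matrix.conjTranspose_smul, Matrix.conjTranspose_sub,
          Matrix.conjTranspose_conjTranspose, Complex.star_def, Complex.conj_I]
        rw [neg_smul, ← smul_neg, neg_sub]
      have h2 := hreal _ hwS hwh
      -- trace (sᴴ * w) is real; also trace (s * w) = conj (trace (sᴴ * w))
      have hconj : Matrix.trace (s * (Complex.I • (s - sᴴ)))
          = (starRingEnd ℂ) (Matrix.trace (sᴴ * (Complex.I • (s - sᴴ)))) := by
        have : (starRingEnd ℂ) (Matrix.trace (sᴴ * (Complex.I • (s - sᴴ))))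
            = Matrix.trace ((sᴴ * (Complex.I • (s - sᴴ)))ᴴ) := by
          rw [Matrix.trace_conjTranspose]; rfl
        rw [this, Matrix.conjTranspose_mul, Matrix.conjTranspose_conjTranspose, hwh.eq,
          Matrix.trace_mul_comm]
      have h3 : Matrix.trace ((s - sᴴ)ᴴ * (Complex.I • (s - sᴴ))) = 0 := by
        rw [Matrix.conjTranspose_sub, Matrix.conjTranspose_conjTranspose, Matrix.sub_mul,
          Matrix.trace_sub, hconj]
        rw [Complex.conj_eq_iff_im.mpr h2]
        exact sub_self _
      rw [Matrix.mul_smul, Matrix.trace_smul, smul_eq_mul, mul_eq_zero] at h3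
      have h4 : Matrix.trace ((s - sᴴ)ᴴ * (s - sᴴ)) = 0 :=
        h3.resolve_left Complex.I_ne_zero
      have h5 : s - sᴴ = 0 := stmt12_eq_zero_of_trace h4
      show sᴴ = s
      have := sub_eq_zero.mp h5
      exact this.symm
    -- step 3: trace s = 1
    have htrs : Matrix.trace s = 1 := by
      rw [hsherm.eq, Matrix.mul_one] at htr1
      exact htr1
    obtain ⟨ρ, hρ, hρt, horth⟩ := stmt12_exists_density hn S h1 hsS hsherm hpos htrs
    refine ⟨ρ, ⟨hρ, hρt⟩, ?_⟩
    have hπ1 := (hπmem ρ hρ.1).1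
    have hπ2 := (hπmem ρ hρ.1).2
    have hdS : (s - π ρ) ∈ S := S.sub_mem hsS hπ1
    have hdh : (s - π ρ).IsHermitian := hsherm.sub hπ2
    have horth2 : Matrix.trace ((s - π ρ) * (s - π ρ)) = 0 := by
      have hA := hπorth ρ hρ.1 (s - π ρ) hdS hdh
      have hB := horth (s - π ρ) hdS hdh
      have hsplit : (s - π ρ) * (s - π ρ)
          = (ρ - π ρ) * (s - π ρ) - (ρ - s) * (s - π ρ) := by
        rw [← Matrix.sub_mul]
        congr 1
        abel
      rw [hsplit, Matrix.trace_sub, hA, hB, sub_zero]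
    have h4 : Matrix.trace ((s - π ρ)ᴴ * (s - π ρ)) = 0 := by rwa [hdh.eq]
    have h5 : s - π ρ = 0 := stmt12_eq_zero_of_trace h4
    have := sub_eq_zero.mp h5
    exact this.symm
  · rintro ⟨ρ, ⟨hρ, hρt⟩, rfl⟩
    have hπ1 := (hπmem ρ hρ.1).1
    have hπ2 := (hπmem ρ hρ.1).2
    refine ⟨hπ1, ?_, ?_⟩
    · intro a haS hapsd
      have horth := hπorth ρ hρ.1 a haS hapsd.1
      have hkey : Matrix.trace ((π ρ)ᴴ * a) = Matrix.trace (ρ * a) := by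
        rw [hπ2.eq]
        rw [Matrix.sub_mul, Matrix.trace_sub, sub_eq_zero] at horth
        exact horth.symm
      rw [hkey]
      exact stmt12_trace_mul_nonneg hρ hapsd
    · have horth := hπorth ρ hρ.1 1 h1 Matrix.isHermitian_one
      rw [hπ2.eq, Matrix.mul_one]
      rw [Matrix.mul_one, Matrix.trace_sub, sub_eq_zero] at horth
      rw [← horth]
      exact hρt
end

section
/- The set of density matrices M_n (translated by −𝟙/n to contain the origin in its relative interior) has no non-exposed faces: every face of M_n is an exposed face. -/
open ComplexOrder

/-- An exposed face of a set `C` of complex matrices (w.r.t. the real linear structure):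
either `∅` or the set of maximizers over `C` of a real linear functional. -/
def MatIsExposedFace {n : ℕ} (C F : Set (Matrix (Fin n) (Fin n) ℂ)) : Prop :=
  F = ∅ ∨ ∃ l : Matrix (Fin n) (Fin n) ℂ →ₗ[ℝ] ℝ, F = {x ∈ C | ∀ y ∈ C, l y ≤ l x}

open Matrix

variable {n : ℕ}

-- basic trace facts for PSD matrices
lemma trace_psd_nonneg {A : Matrix (Fin n) (Fin n) ℂ} (hA : A.PosSemidef) : 0 ≤ A.trace := by
  rw [Matrix.trace]
  apply Finset.sum_nonneg
  intro i _
  have := hA.dotProduct_mulVec_nonneg (Pi.single i 1)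
  simpa [dotProduct, Matrix.mulVec, Pi.single_apply, Finset.sum_ite_eq] using this

lemma trace_conjTranspose_mul_self_eq_zero {A : Matrix (Fin n) (Fin n) ℂ}
    (h : (Aᴴ * A).trace = 0) : A = 0 := by
  have h' : ∑ j, ∑ i, star (A i j) * A i j = 0 := by
    simpa [Matrix.trace, Matrix.diag, Matrix.mul_apply, Matrix.conjTranspose_apply] using h
  ext i j
  have hnn : ∀ j ∈ Finset.univ, (0:ℂ) ≤ ∑ i, star (A i j) * A i j := by
    intro j _; exact Finset.sum_nonneg fun i _ => star_mul_self_nonneg _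
  have h1 := (Finset.sum_eq_zero_iff_of_nonneg hnn).mp h' j (Finset.mem_univ j)
  have h2 := (Finset.sum_eq_zero_iff_of_nonneg (fun i _ => star_mul_self_nonneg (A i j))).mp h1 i
    (Finset.mem_univ i)
  rw [Complex.star_def, ← Complex.normSq_eq_conj_mul_self] at h2
  exact_mod_cast Complex.normSq_eq_zero.mp (by exact_mod_cast h2)

lemma psd_smul {A : Matrix (Fin n) (Fin n) ℂ} (hA : A.PosSemidef) {r : ℝ} (hr : 0 ≤ r) :
    (r • A).PosSemidef := by
  refine Matrix.PosSemidef.of_dotProduct_mulVec_nonneg ?_ (fun x => ?_)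
  · unfold Matrix.IsHermitian
    rw [Matrix.conjTranspose_smul, hA.1.eq, star_trivial]
  · have : star x ⬝ᵥ (r • A) *ᵥ x = (r : ℂ) * (star x ⬝ᵥ A *ᵥ x) := by
      rw [Matrix.smul_mulVec, dotProduct_smul]
      simp [Complex.real_smul]
    rw [this]
    exact mul_nonneg (by exact_mod_cast hr) (hA.dotProduct_mulVec_nonneg x)

-- columns bridging: A * B = 0 iff each column of B is killed by A
lemma mul_eq_zero_of_cols {A B : Matrix (Fin n) (Fin n) ℂ}
    (h : ∀ j, A *ᵥ (fun i => B i j) = 0) : A * B = 0 := by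
  ext k j
  have := congrFun (h j) k
  simpa [Matrix.mulVec, dotProduct, Matrix.mul_apply] using this

lemma cols_ker_of_mul_eq_zero {A B : Matrix (Fin n) (Fin n) ℂ}
    (h : A * B = 0) (j : Fin n) : A *ᵥ (fun i => B i j) = 0 := by
  ext k
  have := congrFun (congrFun h k) j
  simpa [Matrix.mulVec, dotProduct, Matrix.mul_apply] using this

lemma exists_support_proj {ρ : Matrix (Fin n) (Fin n) ℂ} (hρ : ρ.PosSemidef) (htr : ρ.trace = 1) :
    ∃ p : Matrix (Fin n) (Fin n) ℂ,
      p.PosSemidef ∧ p * p = p ∧ (1 - p).PosSemidef ∧ ρ * (1 - p) = 0 ∧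
      ∃ ε : ℝ, 0 < ε ∧ (ρ - ε • p).PosSemidef := by
  classical
  set h := hρ.1 with hh
  set U : Matrix (Fin n) (Fin n) ℂ := (h.eigenvectorUnitary : Matrix (Fin n) (Fin n) ℂ) with hU
  set d : Fin n → ℝ := h.eigenvalues with hd
  have hdnn : ∀ i, 0 ≤ d i := fun i => hρ.eigenvalues_nonneg i
  have hQ2 : star U * U = 1 := Matrix.mem_unitaryGroup_iff'.mp h.eigenvectorUnitary.2
  have hQ1 : U * star U = 1 := Matrix.mem_unitaryGroup_iff.mp h.eigenvectorUnitary.2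
  have hspec : ρ = U * Matrix.diagonal (RCLike.ofReal ∘ d) * star U := h.spectral_theorem
  have conj_mul : ∀ D1 D2 : Matrix (Fin n) (Fin n) ℂ,
      (U * D1 * star U) * (U * D2 * star U) = U * (D1 * D2) * star U := by
    intro D1 D2
    calc (U * D1 * star U) * (U * D2 * star U)
        = U * D1 * (star U * U) * D2 * star U := by noncomm_ring
      _ = U * (D1 * D2) * star U := by rw [hQ2]; noncomm_ring
  have conjPSD : ∀ f : Fin n → ℝ, (∀ i, 0 ≤ f i) →
      (U * Matrix.diagonal (RCLike.ofReal ∘ f) * star U).PosSemidef := by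
    intro f hf
    rw [Matrix.star_eq_conjTranspose U]
    refine (Matrix.posSemidef_diagonal_iff.mpr ?_).mul_mul_conjTranspose_same U
    intro i
    simp only [Function.comp_apply]
    exact Complex.zero_le_real.mpr (hf i)
  set χ : Fin n → ℝ := fun i => if 0 < d i then 1 else 0 with hχ
  set p : Matrix (Fin n) (Fin n) ℂ := U * Matrix.diagonal (RCLike.ofReal ∘ χ) * star U with hp
  have hpPSD : p.PosSemidef := conjPSD χ (by intro i; simp only [hχ]; split <;> norm_num)
  have hone : (1 : Matrix (Fin n) (Fin n) ℂ) = U * 1 * star U := by rw [mul_one, hQ1]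
  have hdiagsub : ∀ f g : Fin n → ℝ,
      (Matrix.diagonal (RCLike.ofReal ∘ f) : Matrix (Fin n) (Fin n) ℂ)
          - Matrix.diagonal (RCLike.ofReal ∘ g)
        = Matrix.diagonal (RCLike.ofReal ∘ fun i => f i - g i) := by
    intro f g
    ext i j
    by_cases hij : i = j <;> simp [Matrix.diagonal_apply, hij]
  have hdiag1 : (Matrix.diagonal (RCLike.ofReal ∘ fun _ => (1:ℝ)) : Matrix (Fin n) (Fin n) ℂ)
      = 1 := by
    ext i j
    by_cases hij : i = j <;> simp [Matrix.diagonal_apply, hij, Matrix.one_apply]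
  have honemp : (1 : Matrix (Fin n) (Fin n) ℂ) - p
      = U * Matrix.diagonal (RCLike.ofReal ∘ fun i => 1 - χ i) * star U := by
    have h1 : (1 : Matrix (Fin n) (Fin n) ℂ)
        = U * Matrix.diagonal (RCLike.ofReal ∘ fun _ => (1:ℝ)) * star U := by
      rw [hdiag1, ← hone]
    rw [h1, hp, ← Matrix.sub_mul, ← Matrix.mul_sub, hdiagsub]
  have h1mpPSD : ((1 : Matrix (Fin n) (Fin n) ℂ) - p).PosSemidef := by
    rw [honemp]
    refine conjPSD _ ?_
    intro i; simp only [hχ]; split <;> norm_num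
  have hpp : p * p = p := by
    rw [hp, conj_mul, Matrix.diagonal_mul_diagonal]
    have : (fun i => (RCLike.ofReal ∘ χ) i * (RCLike.ofReal ∘ χ) i)
        = (RCLike.ofReal ∘ χ : Fin n → ℂ) := by
      funext i
      simp only [Function.comp_apply, hχ]
      split <;> norm_num
    rw [this]
  have hρq : ρ * (1 - p) = 0 := by
    rw [honemp, hspec, conj_mul, Matrix.diagonal_mul_diagonal]
    have : (fun i => (RCLike.ofReal ∘ d) i * (RCLike.ofReal ∘ fun i => 1 - χ i) i)
        = fun _ => (0:ℂ) := by
      funext i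
      simp only [Function.comp_apply, hχ]
      rcases lt_or_eq_of_le (hdnn i) with hi | hi
      · simp [hi]
      · simp [← hi]
    rw [this]
    simp
  have hTne : (Finset.univ.filter (fun i => 0 < d i)).Nonempty := by
    by_contra hc
    rw [Finset.not_nonempty_iff_eq_empty, Finset.filter_eq_empty_iff] at hc
    have hz : ∀ i, d i = 0 := fun i => le_antisymm (not_lt.mp (hc (Finset.mem_univ i))) (hdnn i)
    have : ρ = 0 := by
      rw [hspec]
      have : (Matrix.diagonal (RCLike.ofReal ∘ d) : Matrix (Fin n) (Fin n) ℂ) = 0 := by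
        ext i j
        by_cases hij : i = j <;> simp [Matrix.diagonal_apply, hij, hz]
      rw [this]; simp
    rw [this] at htr; simp at htr
  set T := (Finset.univ.filter (fun i => 0 < d i)).image d with hT
  have hTne' : T.Nonempty := hTne.image d
  obtain ⟨i0, hi0, hdi0⟩ := Finset.mem_image.mp (T.min'_mem hTne')
  set ε : ℝ := T.min' hTne' with hε
  have hεpos : 0 < ε := hdi0 ▸ (Finset.mem_filter.mp hi0).2
  refine ⟨p, hpPSD, hpp, h1mpPSD, hρq, ε, hεpos, ?_⟩
  have hsub : ρ - ε • p = U * Matrix.diagonal (RCLike.ofReal ∘ fun i => d i - ε * χ i) * star U := by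
    rw [hspec, hp]
    have hsm : ε • (U * Matrix.diagonal (RCLike.ofReal ∘ χ) * star U)
        = U * Matrix.diagonal (RCLike.ofReal ∘ fun i => ε * χ i) * star U := by
      have hde : (Matrix.diagonal (RCLike.ofReal ∘ fun i => ε * χ i) : Matrix (Fin n) (Fin n) ℂ)
          = ε • Matrix.diagonal (RCLike.ofReal ∘ χ) := by
        ext i j
        by_cases hij : i = j <;> simp [Matrix.diagonal_apply, hij, Complex.real_smul]
      rw [hde, Matrix.mul_smul, Matrix.smul_mul]
    rw [hsm, ← Matrix.sub_mul, ← Matrix.mul_sub, hdiagsub]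
  rw [hsub]
  refine conjPSD _ ?_
  intro i
  simp only [hχ]
  by_cases hi : 0 < d i
  · have : ε ≤ d i := Finset.min'_le _ _ (by
      rw [hT]; exact Finset.mem_image_of_mem d (Finset.mem_filter.mpr ⟨Finset.mem_univ i, hi⟩))
    simp only [hi, if_pos, mul_one]
    linarith
  · simp only [hi, if_neg, not_false_iff, mul_zero, sub_zero]
    exact hdnn i

lemma one_sub_psd {x : Matrix (Fin n) (Fin n) ℂ} (hx : x.PosSemidef) (htr : x.trace = 1) :
    ((1 : Matrix (Fin n) (Fin n) ℂ) - x).PosSemidef := by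
  classical
  set h := hx.1 with hh
  set U : Matrix (Fin n) (Fin n) ℂ := (h.eigenvectorUnitary : Matrix (Fin n) (Fin n) ℂ) with hU
  set d : Fin n → ℝ := h.eigenvalues with hd
  have hdnn : ∀ i, 0 ≤ d i := fun i => hx.eigenvalues_nonneg i
  have hQ2 : star U * U = 1 := Matrix.mem_unitaryGroup_iff'.mp h.eigenvectorUnitary.2
  have hQ1 : U * star U = 1 := Matrix.mem_unitaryGroup_iff.mp h.eigenvectorUnitary.2
  have hspec : x = U * Matrix.diagonal (RCLike.ofReal ∘ d) * star U := h.spectral_theorem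
  -- trace is sum of eigenvalues
  have htrace : (∑ i, (d i : ℂ)) = 1 := by
    have : x.trace = (Matrix.diagonal (RCLike.ofReal ∘ d) : Matrix (Fin n) (Fin n) ℂ).trace := by
      rw [hspec, Matrix.trace_mul_cycle, hQ2, Matrix.one_mul]
    rw [htr] at this
    rw [this]
    simp [Matrix.trace_diagonal]
  have hsum : ∑ i, d i = 1 := by
    have := htrace
    rw [← Complex.ofReal_sum] at this
    exact_mod_cast this
  have hle1 : ∀ i, d i ≤ 1 := by
    intro i
    rw [← hsum]
    exact Finset.single_le_sum (fun j _ => hdnn j) (Finset.mem_univ i)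
  have h1 : (1 : Matrix (Fin n) (Fin n) ℂ) - x
      = U * Matrix.diagonal (RCLike.ofReal ∘ fun i => 1 - d i) * star U := by
    have hdiag1 : (Matrix.diagonal (RCLike.ofReal ∘ fun _ => (1:ℝ)) : Matrix (Fin n) (Fin n) ℂ)
        = 1 := by
      ext i j
      by_cases hij : i = j <;> simp [Matrix.diagonal_apply, hij, Matrix.one_apply]
    have hone : (1 : Matrix (Fin n) (Fin n) ℂ)
        = U * Matrix.diagonal (RCLike.ofReal ∘ fun _ => (1:ℝ)) * star U := by
      rw [hdiag1, mul_one, hQ1]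
    have hdiagsub : (Matrix.diagonal (RCLike.ofReal ∘ fun _ => (1:ℝ)) : Matrix (Fin n) (Fin n) ℂ)
          - Matrix.diagonal (RCLike.ofReal ∘ d)
        = Matrix.diagonal (RCLike.ofReal ∘ fun i => 1 - d i) := by
      ext i j
      by_cases hij : i = j <;> simp [Matrix.diagonal_apply, hij]
    rw [hone, hspec, ← Matrix.sub_mul, ← Matrix.mul_sub, hdiagsub]
  rw [h1, Matrix.star_eq_conjTranspose U]
  refine (Matrix.posSemidef_diagonal_iff.mpr ?_).mul_mul_conjTranspose_same U
  intro i
  simp only [Function.comp_apply]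
  have h2 : (0:ℂ) ≤ ((1 - d i : ℝ) : ℂ) := Complex.zero_le_real.mpr (by linarith [hle1 i])
  exact h2

lemma trace_proj {q x : Matrix (Fin n) (Fin n) ℂ} (hq : q.PosSemidef) (hqq : q * q = q)
    (hx : x.PosSemidef) :
    0 ≤ (q * x).trace ∧ ((q * x).trace = 0 ↔ q * x = 0) := by
  classical
  open scoped MatrixOrder in
  set s := CFC.sqrt x with hs
  have hsPSD : s.PosSemidef := by
    open scoped MatrixOrder in exact (CFC.sqrt_nonneg x).posSemidef
  have hss : s * s = x := by
    open scoped MatrixOrder in exact CFC.sqrt_mul_sqrt_self x hx.nonneg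
  set A := q * s with hA
  have hAH : Aᴴ = s * q := by
    rw [hA, Matrix.conjTranspose_mul, hsPSD.1.eq, hq.1.eq]
  have hAHA : Aᴴ * A = s * q * s := by
    rw [hAH, hA, Matrix.mul_assoc, ← Matrix.mul_assoc q q s, hqq, ← Matrix.mul_assoc]
  have htreq : (q * x).trace = (Aᴴ * A).trace := by
    rw [hAHA, ← hss, ← Matrix.mul_assoc]
    exact Matrix.trace_mul_cycle q s s
  constructor
  · rw [htreq]
    exact trace_psd_nonneg (Matrix.posSemidef_conjTranspose_mul_self A)
  · constructor
    · intro h0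
      rw [htreq] at h0
      have hA0 : A = 0 := trace_conjTranspose_mul_self_eq_zero h0
      rw [← hss, ← Matrix.mul_assoc, ← hA, hA0, Matrix.zero_mul]
    · intro h0
      rw [h0, Matrix.trace_zero]

/-- the set of `n × n` density matrices has no non-exposed faces:
every face (convex extreme subset) is an exposed face. -/
theorem stmt14 {n : ℕ}
    (M : Set (Matrix (Fin n) (Fin n) ℂ))
    (hM : M = {ρ : Matrix (Fin n) (Fin n) ℂ | ρ.PosSemidef ∧ ρ.trace = 1}) :
    ∀ F : Set (Matrix (Fin n) (Fin n) ℂ),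
      Convex ℝ F → IsExtreme ℝ M F → MatIsExposedFace M F := by
  intro F hFconv hFext
  by_cases hFe : F = ∅
  · left; exact hFe
  right
  classical
  have hmem : ∀ a ∈ M, a.PosSemidef ∧ a.trace = 1 := by
    intro a ha; rw [hM] at ha; exact ha
  have hmem' : ∀ a : Matrix (Fin n) (Fin n) ℂ, a.PosSemidef → a.trace = 1 → a ∈ M := by
    intro a h1 h2; rw [hM]; exact ⟨h1, h2⟩
  -- pick an element of F with minimal kernel dimension
  set K : Matrix (Fin n) (Fin n) ℂ → Submodule ℂ (Fin n → ℂ) :=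
    fun a => LinearMap.ker a.mulVecLin with hK
  set S : Set ℕ := {k | ∃ a ∈ F, Module.finrank ℂ (K a) = k} with hS
  have hSne : S.Nonempty := by
    obtain ⟨a, ha⟩ := Set.nonempty_iff_ne_empty.mpr hFe
    exact ⟨_, a, ha, rfl⟩
  obtain ⟨ρ0, hρ0F, hρ0rk⟩ := Nat.sInf_mem hSne
  have hminrk : ∀ a ∈ F, sInf S ≤ Module.finrank ℂ (K a) := by
    intro a ha; exact Nat.sInf_le ⟨a, ha, rfl⟩
  have hρ0M : ρ0 ∈ M := hFext.1 hρ0F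
  obtain ⟨hρ0PSD, hρ0tr⟩ := hmem ρ0 hρ0M
  obtain ⟨p, hpPSD, hpp, hqPSD, hρq, ε, hεpos, hρεp⟩ := exists_support_proj hρ0PSD hρ0tr
  set q : Matrix (Fin n) (Fin n) ℂ := 1 - p with hq
  have hqH : qᴴ = q := hqPSD.1.eq
  have hpH : pᴴ = p := hpPSD.1.eq
  have hqq : q * q = q := by
    rw [hq, Matrix.sub_mul, Matrix.mul_sub, Matrix.mul_sub, hpp]
    simp only [Matrix.one_mul, Matrix.mul_one]
    abel
  have hqρ0 : q * ρ0 = 0 := by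
    have := congrArg Matrix.conjTranspose hρq
    rwa [Matrix.conjTranspose_mul, hqH, hρ0PSD.1.eq, Matrix.conjTranspose_zero] at this
  -- kernel of ρ0 is contained in kernel of any element of F
  have hker : ∀ x ∈ F, K ρ0 ≤ K x := by
    intro x hxF
    obtain ⟨hxPSD, hxtr⟩ := hmem x (hFext.1 hxF)
    set σ : Matrix (Fin n) (Fin n) ℂ := (1/2 : ℝ) • ρ0 + (1/2 : ℝ) • x with hσ
    have hσF : σ ∈ F := hFconv hρ0F hxF (by norm_num) (by norm_num) (by norm_num)
    have hσker : K σ ≤ K ρ0 ⊓ K x := by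
      intro v hv
      rw [hK, LinearMap.mem_ker, Matrix.mulVecLin_apply] at hv
      have hquad : star v ⬝ᵥ σ *ᵥ v = 0 := by rw [hv, dotProduct_zero]
      have hexp : star v ⬝ᵥ σ *ᵥ v
          = (1/2 : ℝ) • (star v ⬝ᵥ ρ0 *ᵥ v) + (1/2 : ℝ) • (star v ⬝ᵥ x *ᵥ v) := by
        rw [hσ, Matrix.add_mulVec, dotProduct_add,
          Matrix.smul_mulVec, Matrix.smul_mulVec,
          dotProduct_smul, dotProduct_smul]
      rw [hquad] at hexp
      have hhalf : (0:ℂ) ≤ ((1/2 : ℝ) : ℂ) := Complex.zero_le_real.mpr (by norm_num)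
      have ha : (0:ℂ) ≤ (1/2 : ℝ) • (star v ⬝ᵥ ρ0 *ᵥ v) := by
        rw [Complex.real_smul]
        exact mul_nonneg hhalf (hρ0PSD.dotProduct_mulVec_nonneg v)
      have hb : (0:ℂ) ≤ (1/2 : ℝ) • (star v ⬝ᵥ x *ᵥ v) := by
        rw [Complex.real_smul]
        exact mul_nonneg hhalf (hxPSD.dotProduct_mulVec_nonneg v)
      obtain ⟨h1, h2⟩ := (add_eq_zero_iff_of_nonneg ha hb).mp hexp.symm
      rw [Complex.real_smul, mul_eq_zero] at h1 h2
      have h1' : star v ⬝ᵥ ρ0 *ᵥ v = 0 := by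
        rcases h1 with h | h
        · norm_num at h
        · exact h
      have h2' : star v ⬝ᵥ x *ᵥ v = 0 := by
        rcases h2 with h | h
        · norm_num at h
        · exact h
      rw [Submodule.mem_inf]
      constructor
      · show v ∈ LinearMap.ker ρ0.mulVecLin
        rw [LinearMap.mem_ker, Matrix.mulVecLin_apply]
        exact (hρ0PSD.dotProduct_mulVec_zero_iff v).mp h1'
      · show v ∈ LinearMap.ker x.mulVecLin
        rw [LinearMap.mem_ker, Matrix.mulVecLin_apply]
        exact (hxPSD.dotProduct_mulVec_zero_iff v).mp h2'
    have hσρ0 : K σ ≤ K ρ0 := hσker.trans inf_le_left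
    have heq : K σ = K ρ0 := by
      refine Submodule.eq_of_le_of_finrank_le hσρ0 ?_
      rw [hρ0rk]
      exact hminrk σ hσF
    rw [← heq]
    exact hσker.trans inf_le_right
  -- hence x * q = 0 and q * x = 0 for x ∈ F
  have hxq0 : ∀ x ∈ F, x * q = 0 := by
    intro x hxF
    refine mul_eq_zero_of_cols ?_
    intro j
    have hcol : ρ0 *ᵥ (fun i => q i j) = 0 := cols_ker_of_mul_eq_zero hρq j
    have : (fun i => q i j) ∈ K ρ0 := by
      rw [hK, LinearMap.mem_ker, Matrix.mulVecLin_apply]; exact hcol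
    have := hker x hxF this
    rw [hK, LinearMap.mem_ker, Matrix.mulVecLin_apply] at this
    exact this
  -- the exposing functional
  set l : Matrix (Fin n) (Fin n) ℂ →ₗ[ℝ] ℝ :=
    { toFun := fun a => ((p * a).trace).re
      map_add' := by
        intro a b
        simp [Matrix.mul_add, Matrix.trace_add]
      map_smul' := by
        intro r a
        simp [Matrix.mul_smul, Matrix.trace_smul, Complex.real_smul] } with hl
  have hlval : ∀ a : Matrix (Fin n) (Fin n) ℂ, l a = ((p * a).trace).re := fun a => rfl
  -- value bound on M
  have hbound : ∀ y ∈ M, l y ≤ 1 ∧ (l y = 1 ↔ q * y = 0) := by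
    intro y hyM
    obtain ⟨hyPSD, hytr⟩ := hmem y hyM
    obtain ⟨htnn, htiff⟩ := trace_proj hqPSD hqq hyPSD
    have hsplit : (p * y).trace = 1 - (q * y).trace := by
      have : p * y = y - q * y := by rw [hq, Matrix.sub_mul, Matrix.one_mul]; abel
      rw [this, Matrix.trace_sub, hytr]
    have htre : 0 ≤ ((q * y).trace).re ∧ ((q * y).trace).im = 0 := by
      rw [Complex.le_def] at htnn
      exact ⟨by simpa using htnn.1, by simpa using htnn.2.symm⟩
    constructor
    · rw [hlval, hsplit]
      simp only [Complex.sub_re, Complex.one_re]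
      linarith [htre.1]
    · rw [hlval, hsplit]
      simp only [Complex.sub_re, Complex.one_re]
      constructor
      · intro h
        have hre : ((q * y).trace).re = 0 := by linarith
        have : (q * y).trace = 0 := Complex.ext hre htre.2
        exact htiff.mp this
      · intro h
        have h0 : (q * y).trace = 0 := htiff.mpr h
        rw [h0]
        simp
  -- elements of F achieve the maximum value 1
  have hlF : ∀ x ∈ F, l x = 1 := by
    intro x hxF
    obtain ⟨hxPSD, hxtr⟩ := hmem x (hFext.1 hxF)
    have hx' : q * x = 0 := by
      have := congrArg Matrix.conjTranspose (hxq0 x hxF)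
      rwa [Matrix.conjTranspose_mul, hqH, hxPSD.1.eq, Matrix.conjTranspose_zero] at this
    exact ((hbound x (hFext.1 hxF)).2).mpr hx'
  refine ⟨l, ?_⟩
  ext x
  constructor
  · intro hxF
    refine ⟨hFext.1 hxF, ?_⟩
    intro y hyM
    rw [hlF x hxF]
    exact (hbound y hyM).1
  · rintro ⟨hxM, hmax⟩
    obtain ⟨hxPSD, hxtr⟩ := hmem x hxM
    have hlx1 : l x = 1 := by
      have h1 : (1:ℝ) ≤ l x := by
        rw [← hlF ρ0 hρ0F]
        exact hmax ρ0 hρ0M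
      have h2 := (hbound x hxM).1
      linarith
    have hqx : q * x = 0 := (hbound x hxM).2.mp hlx1
    have hxq : x * q = 0 := by
      have := congrArg Matrix.conjTranspose hqx
      rwa [Matrix.conjTranspose_mul, hqH, hxPSD.1.eq, Matrix.conjTranspose_zero] at this
    have hpx : p * x = x := by
      have : p * x = x - q * x := by rw [hq, Matrix.sub_mul, Matrix.one_mul]; abel
      rw [this, hqx, sub_zero]
    have hxp : x * p = x := by
      have : x * p = x - x * q := by rw [hq, Matrix.mul_sub, Matrix.mul_one]; abel
      rw [this, hxq, sub_zero]
    -- p - x is PSD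
    have hpmx : (p - x).PosSemidef := by
      have h1 : p - x = p * (1 - x) * pᴴ := by
        rw [hpH, Matrix.mul_sub, Matrix.mul_one, Matrix.sub_mul, hpp, hpx, hxp]
      rw [h1]
      exact (one_sub_psd hxPSD hxtr).mul_mul_conjTranspose_same p
    have hρεx : (ρ0 - ε • x).PosSemidef := by
      have h1 : ρ0 - ε • x = (ρ0 - ε • p) + ε • (p - x) := by
        rw [smul_sub]; abel
      rw [h1]
      exact hρεp.add (psd_smul hpmx (le_of_lt hεpos))
    set t : ℝ := min ε (1/2) with ht
    have htpos : 0 < t := lt_min hεpos (by norm_num)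
    have htle : t ≤ ε := min_le_left _ _
    have htlt1 : t < 1 := lt_of_le_of_lt (min_le_right _ _) (by norm_num)
    have h1mt : (0:ℝ) < 1 - t := by linarith
    have hρtx : (ρ0 - t • x).PosSemidef := by
      have h1 : ρ0 - t • x = (ρ0 - ε • x) + (ε - t) • x := by
        rw [sub_smul]; abel
      rw [h1]
      exact hρεx.add (psd_smul hxPSD (by linarith))
    set z : Matrix (Fin n) (Fin n) ℂ := (1 - t)⁻¹ • (ρ0 - t • x) with hz
    have hzPSD : z.PosSemidef := psd_smul hρtx (le_of_lt (inv_pos.mpr h1mt))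
    have hztr : z.trace = 1 := by
      rw [hz, Matrix.trace_smul, Matrix.trace_sub, Matrix.trace_smul, hρ0tr, hxtr]
      rw [Complex.real_smul, Complex.real_smul, mul_one]
      rw [show ((1:ℂ) - (t:ℂ)) = ((1 - t : ℝ) : ℂ) by push_cast; ring]
      rw [← Complex.ofReal_mul, inv_mul_cancel₀ (ne_of_gt h1mt)]
      simp
    have hzM : z ∈ M := hmem' z hzPSD hztr
    have hcomb : t • x + (1 - t) • z = ρ0 := by
      rw [hz, smul_smul, mul_inv_cancel₀ (ne_of_gt h1mt), one_smul]
      abel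
    have hseg : ρ0 ∈ openSegment ℝ x z :=
      ⟨t, 1 - t, htpos, h1mt, by ring, hcomb⟩
    exact hFext.2 hxM hzM hρ0F hseg
end

section
/- Let C ⊆ ℝ^m be a convex set with nonempty interior, let F be a proper exposed face of C, and suppose the normal cone N = N_C(F) has dimension d and possesses d linearly independent exposed rays each of which is the normal cone of C at some point of C. Then there exist d mutually distinct coatoms of the lattice of exposed faces of C whose intersection is F. -/
open RealInnerProductSpace

/-- The ray generated by a vector `u`. -/
def rayOf {m : ℕ} (u : EuclideanSpace ℝ (Fin m)) : Set (EuclideanSpace ℝ (Fin m)) :=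
  {v | ∃ a : ℝ, 0 ≤ a ∧ v = a • u}

/-- From a relative interior point one can move a bit past it away from any point of the set,
staying in the set. -/
lemma exists_extend {m : ℕ} {F : Set (EuclideanSpace ℝ (Fin m))}
    {x₀ x : EuclideanSpace ℝ (Fin m)}
    (hx₀ : x₀ ∈ intrinsicInterior ℝ F) (hx : x ∈ F) :
    ∃ t : ℝ, 0 < t ∧ x₀ + t • (x₀ - x) ∈ F := by
  obtain ⟨y, hy, hyx⟩ := mem_intrinsicInterior.mp hx₀
  rw [mem_interior_iff_mem_nhds, Metric.mem_nhds_iff] at hy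
  obtain ⟨ε, hε, hball⟩ := hy
  set n : ℝ := ‖x₀ - x‖ with hn
  have hn0 : 0 ≤ n := norm_nonneg _
  set t : ℝ := ε / (2 * (n + 1)) with ht
  have htpos : 0 < t := by positivity
  refine ⟨t, htpos, ?_⟩
  set z : EuclideanSpace ℝ (Fin m) := x₀ + t • (x₀ - x) with hz
  have hx₀F : x₀ ∈ F := intrinsicInterior_subset hx₀
  have hzmem : z ∈ affineSpan ℝ F := by
    have h1 : x ∈ affineSpan ℝ F := subset_affineSpan ℝ F hx
    have h2 : x₀ ∈ affineSpan ℝ F := subset_affineSpan ℝ F hx₀F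
    have := AffineMap.lineMap_mem (1 + t) h1 h2
    have heq : AffineMap.lineMap x x₀ (1 + t) = z := by
      simp only [AffineMap.lineMap_apply_module, hz]
      module
    rwa [heq] at this
  have hdist : dist (⟨z, hzmem⟩ : affineSpan ℝ F) y < ε := by
    rw [Subtype.dist_eq, hyx, dist_eq_norm]
    have : z - x₀ = t • (x₀ - x) := by rw [hz]; abel
    rw [this, norm_smul, Real.norm_eq_abs, abs_of_pos htpos, ← hn]
    have h1 : t * n ≤ t * (n + 1) := by nlinarith
    have h2 : t * (n + 1) = ε / 2 := by
      rw [ht]; field_simp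
    linarith
  exact hball hdist

/-- let `F` be a proper exposed face of a convex set `C` with nonempty
interior, let `N = N_C(F)` (the normal cone at a relative interior point `x₀` of `F`) have
dimension `d`, and suppose `N` has `d` linearly independent exposed rays each of which is a
normal cone of `C` at some point.  Then there are `d` mutually distinct coatoms of the
exposed-face lattice of `C` whose intersection is `F`. -/
theorem stmt17 {m d : ℕ} (C : Set (EuclideanSpace ℝ (Fin m))) (hC : Convex ℝ C)
    (hint : (interior C).Nonempty)
    (F : Set (EuclideanSpace ℝ (Fin m))) (hF : IsExposed ℝ C F)
    (hFne : F ≠ ∅) (hFC : F ≠ C)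
    (x₀ : EuclideanSpace ℝ (Fin m)) (hx₀ : x₀ ∈ intrinsicInterior ℝ F)
    (N : Set (EuclideanSpace ℝ (Fin m))) (hN : N = normalCone C x₀)
    (hdim : Module.finrank ℝ (Submodule.span ℝ N) = d)
    (f : Fin d → EuclideanSpace ℝ (Fin m)) (hlin : LinearIndependent ℝ f)
    (hrays : ∀ i, f i ≠ 0 ∧ IsExposed ℝ N (rayOf (f i)) ∧
      ∃ y ∈ C, normalCone C y = rayOf (f i)) :
    ∃ G : Fin d → Set (EuclideanSpace ℝ (Fin m)),
      Function.Injective G ∧ (∀ i, IsCoatomExposedFace C (G i)) ∧ (⋂ i, G i) = F := by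
  classical
  have hFnonempty : F.Nonempty := Set.nonempty_iff_ne_empty.mpr hFne
  obtain ⟨l, hl⟩ := hF hFnonempty
  set u : EuclideanSpace ℝ (Fin m) := (InnerProductSpace.toDual ℝ _).symm l with hu
  have hul : ∀ z, ⟪u, z⟫ = l z := fun z => InnerProductSpace.toDual_symm_apply
  have hx₀F : x₀ ∈ F := intrinsicInterior_subset hx₀
  have hFsub : F ⊆ C := hF.subset
  have hx₀C : x₀ ∈ C := hFsub hx₀F
  have hx₀max : ∀ z ∈ C, l z ≤ l x₀ := by
    have h := hx₀F; rw [hl] at h; exact h.2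
  have huN : u ∈ N := by
    rw [hN]; intro z hz
    have : ⟪u, z - x₀⟫ = l z - l x₀ := by rw [inner_sub_right, hul, hul]
    rw [this]; linarith [hx₀max z hz]
  have hfN : ∀ i, f i ∈ N := fun i =>
    (hrays i).2.1.subset ⟨1, zero_le_one, (one_smul _ _).symm⟩
  have hfNC : ∀ i, ∀ z ∈ C, ⟪f i, z⟫ ≤ ⟪f i, x₀⟫ := by
    intro i z hz
    have h := (hN ▸ hfN i) z hz
    rw [inner_sub_right] at h; linarith
  choose y hyC hyN using fun i => (hrays i).2.2
  have hyMax : ∀ i, ∀ z ∈ C, ⟪f i, z⟫ ≤ ⟪f i, y i⟫ := by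
    intro i z hz
    have hfi : f i ∈ normalCone C (y i) := by
      rw [hyN i]; exact ⟨1, zero_le_one, (one_smul _ _).symm⟩
    have h := hfi z hz
    rw [inner_sub_right] at h; linarith
  set G : Fin d → Set (EuclideanSpace ℝ (Fin m)) :=
    fun i => {x ∈ C | ∀ z ∈ C, ⟪f i, z⟫ ≤ ⟪f i, x⟫} with hG
  have hGexp : ∀ i, IsExposed ℝ C (G i) := by
    intro i _
    exact ⟨innerSL ℝ (f i), by simp [hG, innerSL_apply_apply]⟩
  have hyG : ∀ i, y i ∈ G i := fun i => ⟨hyC i, hyMax i⟩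
  have hconst : ∀ v ∈ N, ∀ x ∈ F, ⟪v, x⟫ = ⟪v, x₀⟫ := by
    intro v hv x hx
    have h1 : ⟪v, x - x₀⟫ ≤ 0 := (hN ▸ hv) x (hFsub hx)
    obtain ⟨t, htpos, hzF⟩ := exists_extend hx₀ hx
    have h2 : ⟪v, (x₀ + t • (x₀ - x)) - x₀⟫ ≤ 0 := (hN ▸ hv) _ (hFsub hzF)
    have h3 : (x₀ + t • (x₀ - x)) - x₀ = t • (x₀ - x) := by abel
    rw [h3, inner_smul_right, inner_sub_right] at h2
    rw [inner_sub_right] at h1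
    nlinarith
  have hFG : ∀ i, F ⊆ G i := by
    intro i x hx
    exact ⟨hFsub hx, fun z hz => by
      rw [hconst (f i) (hfN i) x hx]; exact hfNC i z hz⟩
  have hdpos : 0 < d := by
    rcases Nat.eq_zero_or_pos d with hd0 | h
    · exfalso
      have hbot : Submodule.span ℝ N = ⊥ :=
        Submodule.finrank_eq_zero.mp (by rw [hdim, hd0])
      have hu0 : u = 0 := by
        have : u ∈ Submodule.span ℝ N := Submodule.subset_span huN
        rw [hbot, Submodule.mem_bot] at this; exact this
      have hl0 : ∀ z, l z = 0 := fun z => by rw [← hul, hu0, inner_zero_left]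
      apply hFC
      rw [hl]
      ext x
      simp [hl0]
    · exact h
  have hGne : ∀ i, G i ≠ C := by
    intro i hGC
    obtain ⟨z, hz⟩ := hint
    obtain ⟨ε, hε, hball⟩ := Metric.isOpen_iff.mp isOpen_interior z hz
    have hfi0 : (0:ℝ) < ‖f i‖ := norm_pos_iff.mpr (hrays i).1
    set t : ℝ := ε / (2 * ‖f i‖) with ht
    have htpos : 0 < t := by positivity
    have hw : z + t • f i ∈ C := by
      apply interior_subset
      apply hball
      rw [Metric.mem_ball, dist_eq_norm]
      have h1 : z + t • f i - z = t • f i := by abel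
      rw [h1, norm_smul, Real.norm_eq_abs, abs_of_pos htpos]
      have h2 : t * ‖f i‖ = ε / 2 := by rw [ht]; field_simp
      linarith
    have hzG : z ∈ G i := by rw [hGC]; exact interior_subset hz
    have hle := hzG.2 _ hw
    rw [inner_add_right, real_inner_smul_right, real_inner_self_eq_norm_sq] at hle
    nlinarith [mul_pos htpos (pow_pos hfi0 2)]
  have hGmax : ∀ i, ∀ G', IsExposed ℝ C G' → G i ⊆ G' → G' = G i ∨ G' = C := by
    intro i G' hG' hsub
    obtain ⟨l', hl'⟩ := hG' ⟨y i, hsub (hyG i)⟩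
    set v : EuclideanSpace ℝ (Fin m) := (InnerProductSpace.toDual ℝ _).symm l' with hv
    have hvl : ∀ z, ⟪v, z⟫ = l' z := fun z => InnerProductSpace.toDual_symm_apply
    have hyG' : y i ∈ G' := hsub (hyG i)
    have hymax : ∀ z ∈ C, l' z ≤ l' (y i) := by
      have h := hyG'; rw [hl'] at h; exact h.2
    have hvN : v ∈ normalCone C (y i) := by
      intro z hz
      have : ⟪v, z - y i⟫ = l' z - l' (y i) := by rw [inner_sub_right, hvl, hvl]
      rw [this]; linarith [hymax z hz]
    rw [hyN i] at hvN
    obtain ⟨a, ha, hva⟩ := hvN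
    have hkey : ∀ w, l' w = a * ⟪f i, w⟫ := by
      intro w; rw [← hvl, hva, real_inner_smul_left]
    rcases eq_or_lt_of_le ha with ha0 | hapos
    · right
      have hl'0 : ∀ w, l' w = 0 := fun w => by rw [hkey, ← ha0, zero_mul]
      rw [hl']; ext x; simp [hl'0]
    · left
      rw [hl']
      ext x
      simp only [hG, Set.mem_setOf_eq]
      constructor
      · rintro ⟨hxC, hmax⟩
        refine ⟨hxC, fun z hz => ?_⟩
        have := hmax z hz
        rw [hkey, hkey] at this
        exact (mul_le_mul_iff_right₀ hapos).mp this
      · rintro ⟨hxC, hmax⟩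
        refine ⟨hxC, fun z hz => ?_⟩
        rw [hkey, hkey]
        exact (mul_le_mul_iff_right₀ hapos).mpr (hmax z hz)
  have hGinj : Function.Injective G := by
    intro i j hij
    by_contra hne
    have hyj : y j ∈ G i := by rw [hij]; exact hyG j
    have hfi : f i ∈ normalCone C (y j) := by
      intro z hz
      rw [inner_sub_right]
      linarith [hyj.2 z hz]
    rw [hyN j] at hfi
    obtain ⟨a, ha, hfa⟩ := hfi
    have hmem : f i ∈ Submodule.span ℝ (f '' {j}) := by
      rw [Set.image_singleton]
      rw [hfa]
      exact Submodule.smul_mem _ a (Submodule.subset_span rfl)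
    exact hlin.notMem_span_image (by simpa using hne) hmem
  have hspan : Submodule.span ℝ (Set.range f) = Submodule.span ℝ N := by
    apply Submodule.eq_of_le_of_finrank_le
      (Submodule.span_mono (Set.range_subset_iff.mpr hfN))
    rw [hdim, finrank_span_eq_card hlin, Fintype.card_fin]
  have huspan : u ∈ Submodule.span ℝ (Set.range f) := by
    rw [hspan]; exact Submodule.subset_span huN
  obtain ⟨c, hc⟩ := (Submodule.mem_span_range_iff_exists_fun ℝ).mp huspan
  refine ⟨G, hGinj, fun i => ⟨hGexp i, hGne i, hGmax i⟩, ?_⟩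
  apply Set.Subset.antisymm
  · intro x hx
    simp only [Set.mem_iInter] at hx
    have hxC : x ∈ C := (hx ⟨0, hdpos⟩).1
    have hxeq : ∀ i, ⟪f i, x⟫ = ⟪f i, x₀⟫ := fun i =>
      le_antisymm (hfNC i x hxC) ((hx i).2 x₀ hx₀C)
    have hlx : l x = l x₀ := by
      rw [← hul, ← hul, ← hc, sum_inner, sum_inner]
      exact Finset.sum_congr rfl fun i _ => by
        rw [real_inner_smul_left, real_inner_smul_left, hxeq i]
    rw [hl]
    exact ⟨hxC, fun z hz => by rw [hlx]; exact hx₀max z hz⟩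
  · exact Set.subset_iInter hFG
end

section
/- Let K ⊆ ℝ^m be a convex body with 0 in its interior and K° its polar. Then K° has no non-exposed points (every extreme point of K° is exposed) if and only if for every proper normal cone N of K, every extreme ray of N is a normal cone of K at some point of K. -/
open RealInnerProductSpace

/-- The polar `K° = {u | ⟨u, x⟩ ≤ 1 ∀ x ∈ K}`. -/
def polarSet {m : ℕ} (K : Set (EuclideanSpace ℝ (Fin m))) : Set (EuclideanSpace ℝ (Fin m)) :=
  {u | ∀ x ∈ K, @inner ℝ _ _ u x ≤ 1}

section Aux

variable {m : ℕ} {K : Set (EuclideanSpace ℝ (Fin m))}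

lemma mem_normalCone_iff {z u : EuclideanSpace ℝ (Fin m)} :
    u ∈ normalCone K z ↔ ∀ y ∈ K, ⟪u, y⟫ ≤ ⟪u, z⟫ := by
  simp [normalCone, inner_sub_right, sub_nonpos]

lemma mem_polarSet_iff {u : EuclideanSpace ℝ (Fin m)} :
    u ∈ polarSet K ↔ ∀ x ∈ K, ⟪u, x⟫ ≤ 1 := Iff.rfl

/-- positivity of support on interior points -/
lemma exists_pos_inner (h0 : (0 : EuclideanSpace ℝ (Fin m)) ∈ interior K)
    {u : EuclideanSpace ℝ (Fin m)} (hu : u ≠ 0) : ∃ z ∈ K, 0 < ⟪u, z⟫ := by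
  obtain ⟨ε, hε, hball⟩ := Metric.mem_nhds_iff.mp (mem_interior_iff_mem_nhds.mp h0)
  have hun : (0:ℝ) < ‖u‖ := norm_pos_iff.mpr hu
  refine ⟨(ε / (2 * ‖u‖)) • u, hball ?_, ?_⟩
  · simp only [Metric.mem_ball, dist_zero_right, norm_smul, Real.norm_eq_abs]
    rw [abs_of_pos (by positivity)]
    rw [div_mul_eq_mul_div, mul_comm]
    calc ‖u‖ * ε / (2 * ‖u‖) = ε / 2 := by field_simp
    _ < ε := by linarith
  · rw [real_inner_smul_right, real_inner_self_eq_norm_sq]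
    positivity

lemma exists_max_inner (h0 : (0 : EuclideanSpace ℝ (Fin m)) ∈ interior K)
    (hcomp : IsCompact K) (u : EuclideanSpace ℝ (Fin m)) :
    ∃ z ∈ K, ∀ w ∈ K, ⟪u, w⟫ ≤ ⟪u, z⟫ := by
  obtain ⟨z, hz, hmax⟩ := hcomp.exists_isMaxOn ⟨0, interior_subset h0⟩
    ((continuous_const.inner continuous_id).continuousOn :
      ContinuousOn (fun w : EuclideanSpace ℝ (Fin m) => ⟪u, w⟫) K)
  exact ⟨z, hz, fun w hw => hmax hw⟩

lemma zero_mem_polarSet : (0 : EuclideanSpace ℝ (Fin m)) ∈ polarSet K := by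
  intro x _; simp

/-- the polar has `0` in its interior (metric ball version). -/
lemma ball_subset_polarSet (hcomp : IsCompact K) :
    ∃ δ > (0:ℝ), Metric.ball (0 : EuclideanSpace ℝ (Fin m)) δ ⊆ polarSet K := by
  obtain ⟨r, hr⟩ := (Metric.isBounded_iff_subset_closedBall 0).mp hcomp.isBounded
  set R : ℝ := max r 1 with hR
  have hR1 : (1:ℝ) ≤ R := le_max_right _ _
  have hRpos : (0:ℝ) < R := lt_of_lt_of_le one_pos hR1
  refine ⟨1 / R, by positivity, fun u hu => ?_⟩
  intro x hx
  have hxr : ‖x‖ ≤ R := le_trans (by simpa using hr hx) (le_max_left _ _)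
  have hun : ‖u‖ < 1 / R := by simpa using hu
  have : ⟪u, x⟫ < 1 := by
    calc ⟪u, x⟫ ≤ ‖u‖ * ‖x‖ := real_inner_le_norm u x
      _ ≤ ‖u‖ * R := by nlinarith [norm_nonneg u]
      _ < (1 / R) * R := by nlinarith [norm_nonneg u]
      _ = 1 := by field_simp
  linarith

/-- if `0` is an extreme point of the polar, the polar is `{0}`. -/
lemma polar_eq_zero_of_extreme_zero (hcomp : IsCompact K)
    (hx : (0 : EuclideanSpace ℝ (Fin m)) ∈ Set.extremePoints ℝ (polarSet K)) :
    polarSet K = {0} := by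
  obtain ⟨δ, hδ, hball⟩ := ball_subset_polarSet (K := K) hcomp
  ext v
  simp only [Set.mem_singleton_iff]
  constructor
  · intro hv
    by_contra hvne
    have hvn : (0:ℝ) < ‖v‖ := norm_pos_iff.mpr hvne
    set w : EuclideanSpace ℝ (Fin m) := (δ / (2 * ‖v‖)) • v with hw
    have hwn : ‖w‖ = δ / 2 := by
      rw [hw, norm_smul, Real.norm_eq_abs, abs_of_pos (by positivity)]
      field_simp
    have hwmem : w ∈ polarSet K := hball (by
      simp only [Metric.mem_ball, dist_zero_right, hwn]; linarith)
    have hwmem' : -w ∈ polarSet K := hball (by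
      simp only [Metric.mem_ball, dist_zero_right, norm_neg, hwn]; linarith)
    have : (0 : EuclideanSpace ℝ (Fin m)) ∈ openSegment ℝ w (-w) := by
      refine ⟨1/2, 1/2, by norm_num, by norm_num, by norm_num, ?_⟩
      rw [smul_neg]; abel
    have hw0 := ((mem_extremePoints.mp hx).2 w hwmem (-w) hwmem' this).1
    rw [hw0, norm_zero] at hwn
    linarith
  · rintro rfl; exact zero_mem_polarSet

/-- a nonzero extreme point of the polar attains value 1 on K. -/
lemma extreme_point_attains (h0 : (0 : EuclideanSpace ℝ (Fin m)) ∈ interior K)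
    (hcomp : IsCompact K) {x : EuclideanSpace ℝ (Fin m)}
    (hx : x ∈ Set.extremePoints ℝ (polarSet K)) (hxne : x ≠ 0) :
    ∃ z ∈ K, (∀ w ∈ K, ⟪x, w⟫ ≤ ⟪x, z⟫) ∧ ⟪x, z⟫ = 1 := by
  obtain ⟨z, hz, hmax⟩ := exists_max_inner h0 hcomp x
  obtain ⟨z', hz', hz'pos⟩ := exists_pos_inner h0 hxne
  have hc : 0 < ⟪x, z⟫ := lt_of_lt_of_le hz'pos (hmax z' hz')
  have hc1 : ⟪x, z⟫ ≤ 1 := (mem_extremePoints.mp hx).1 z hz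
  rcases eq_or_lt_of_le hc1 with heq | hlt
  · exact ⟨z, hz, hmax, heq⟩
  · exfalso
    set c := ⟪x, z⟫ with hcdef
    have hx' : (c⁻¹ • x) ∈ polarSet K := by
      intro w hw
      rw [real_inner_smul_left]
      rw [inv_mul_le_iff₀ hc, mul_one]
      exact hmax w hw
    have hseg : x ∈ openSegment ℝ (0 : EuclideanSpace ℝ (Fin m)) (c⁻¹ • x) := by
      refine ⟨1 - c, c, by linarith, hc, by ring, ?_⟩
      rw [smul_zero, smul_smul, mul_inv_cancel₀ (ne_of_gt hc), one_smul, zero_add]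
    have := (mem_extremePoints.mp hx).2 0 zero_mem_polarSet (c⁻¹ • x) hx' hseg
    exact hxne this.1.symm

/-- bipolar: if `⟪v,y⟫ ≤ 1` for all `v ∈ K°`, then `y ∈ K`. -/
lemma mem_of_forall_polar (hK : Convex ℝ K) (hcomp : IsCompact K)
    (h0 : (0 : EuclideanSpace ℝ (Fin m)) ∈ interior K)
    {y : EuclideanSpace ℝ (Fin m)} (hy : ∀ v ∈ polarSet K, ⟪v, y⟫ ≤ 1) : y ∈ K := by
  by_contra hyK
  obtain ⟨f, s, hfs, hsy⟩ := geometric_hahn_banach_closed_point hK hcomp.isClosed hyK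
  have hs : (0:ℝ) < s := by
    have := hfs 0 (interior_subset h0)
    simpa using this
  set w := (InnerProductSpace.toDual ℝ (EuclideanSpace ℝ (Fin m))).symm f with hwdef
  have hwf : ∀ v, ⟪w, v⟫ = f v := fun v => InnerProductSpace.toDual_symm_apply
  have hmem : (s⁻¹ • w) ∈ polarSet K := by
    intro a ha
    rw [real_inner_smul_left, hwf]
    rw [inv_mul_le_iff₀ hs, mul_one]
    exact le_of_lt (hfs a ha)
  have := hy _ hmem
  rw [real_inner_smul_left, hwf] at this
  rw [inv_mul_le_iff₀ hs, mul_one] at this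
  linarith

lemma seg_eq_one {p q A B : ℝ} (hp : 0 < p) (hq : 0 < q) (hpq : p + q = 1)
    (hA : A ≤ 1) (hB : B ≤ 1) (hsum : p * A + q * B = 1) : A = 1 ∧ B = 1 := by
  constructor <;> nlinarith

end Aux

/-- for a convex body `K` with `0` in its interior, the polar `K°` has no
non-exposed points (every extreme point of `K°` is exposed) iff for every proper normal
cone `N` of `K`, every extreme ray of `N` is a normal cone of `K` at some point of `K`. -/
theorem stmt18 {m : ℕ} (K : Set (EuclideanSpace ℝ (Fin m))) (hK : Convex ℝ K)
    (hcomp : IsCompact K) (h0 : (0 : EuclideanSpace ℝ (Fin m)) ∈ interior K) :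
    (∀ x ∈ Set.extremePoints ℝ (polarSet K), IsExposed ℝ (polarSet K) {x}) ↔
      (∀ z ∈ K, normalCone K z ≠ Set.univ → normalCone K z ≠ {0} →
        ∀ R, IsRay R → IsExtreme ℝ (normalCone K z) R →
          ∃ y ∈ K, normalCone K y = R) := by
  constructor
  · -- forward: exposedness of extreme points ⇒ extreme rays are normal cones
    intro h z hz hNuniv hN0 R hR hext
    obtain ⟨u0, hu0ne, hRdef⟩ := hR
    have hu0R : u0 ∈ R := by rw [hRdef]; exact ⟨1, zero_le_one, (one_smul ℝ u0).symm⟩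
    have hu0N : u0 ∈ normalCone K z := hext.1 hu0R
    have hmaxu0 : ∀ w ∈ K, ⟪u0, w⟫ ≤ ⟪u0, z⟫ := mem_normalCone_iff.mp hu0N
    obtain ⟨z', hz', hz'pos⟩ := exists_pos_inner h0 hu0ne
    set c0 := ⟪u0, z⟫ with hc0
    have hc0pos : 0 < c0 := lt_of_lt_of_le hz'pos (hmaxu0 z' hz')
    set u := c0⁻¹ • u0 with hu
    have huz : ⟪u, z⟫ = 1 := by
      rw [hu, real_inner_smul_left, ← hc0]
      exact inv_mul_cancel₀ hc0pos.ne'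
    have hupolar : u ∈ polarSet K := by
      intro w hw
      rw [hu, real_inner_smul_left, inv_mul_le_iff₀ hc0pos, mul_one]
      exact hmaxu0 w hw
    have huR : u ∈ R := by rw [hRdef]; exact ⟨c0⁻¹, by positivity, rfl⟩
    have hune : u ≠ 0 := by
      intro h'
      rw [h', inner_zero_left] at huz
      norm_num at huz
    have key : ∀ x' ∈ R, ⟪x', z⟫ = 1 → x' = u := by
      intro x' hx' hxz'
      rw [hRdef] at hx'
      obtain ⟨a, ha, rfl⟩ := hx'
      rw [real_inner_smul_left, ← hc0] at hxz'
      have ha' : a = c0⁻¹ := eq_inv_of_mul_eq_one_left hxz'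
      rw [ha', ← hu]
    have huext : u ∈ Set.extremePoints ℝ (polarSet K) := by
      rw [mem_extremePoints]
      refine ⟨hupolar, fun x₁ hx₁ x₂ hx₂ hseg => ?_⟩
      obtain ⟨p, q, hp, hq, hpq, hsum⟩ := hseg
      have h1 : ⟪x₁, z⟫ ≤ 1 := hx₁ z hz
      have h2 : ⟪x₂, z⟫ ≤ 1 := hx₂ z hz
      have hcomb : p * ⟪x₁, z⟫ + q * ⟪x₂, z⟫ = 1 := by
        rw [← huz, ← hsum, inner_add_left, real_inner_smul_left, real_inner_smul_left]
      obtain ⟨he1, he2⟩ := seg_eq_one hp hq hpq h1 h2 hcomb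
      have hx₁N : x₁ ∈ normalCone K z :=
        mem_normalCone_iff.mpr (fun y hy => by rw [he1]; exact hx₁ y hy)
      have hx₂N : x₂ ∈ normalCone K z :=
        mem_normalCone_iff.mpr (fun y hy => by rw [he2]; exact hx₂ y hy)
      obtain ⟨hx₁R, hx₂R⟩ : x₁ ∈ R ∧ x₂ ∈ R := ⟨hext.2 hx₁N hx₂N huR ⟨p, q, hp, hq, hpq, hsum⟩,
        hext.right_mem_of_mem_openSegment hx₁N hx₂N huR ⟨p, q, hp, hq, hpq, hsum⟩⟩
      exact ⟨key x₁ hx₁R he1, key x₂ hx₂R he2⟩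
    obtain ⟨l, hl⟩ := h u huext ⟨u, rfl⟩
    have humem : u ∈ polarSet K ∧ ∀ y ∈ polarSet K, l y ≤ l u := by
      have : u ∈ {x | x ∈ polarSet K ∧ ∀ y ∈ polarSet K, l y ≤ l x} := by
        rw [← hl]; exact rfl
      exact this
    have hlmax : ∀ y ∈ polarSet K, l y ≤ l u := humem.2
    set c := l u with hc
    have hlc : 0 < c := by
      rcases lt_or_ge 0 c with h' | h'
      · exact h'
      · exfalso
        have h0mem : (0 : EuclideanSpace ℝ (Fin m)) ∈
            {x | x ∈ polarSet K ∧ ∀ y ∈ polarSet K, l y ≤ l x} := by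
          refine ⟨zero_mem_polarSet, fun y hy => ?_⟩
          have := hlmax y hy
          rw [map_zero]
          calc l y ≤ c := this
            _ ≤ 0 := h'
        rw [← hl] at h0mem
        exact hune (Set.mem_singleton_iff.mp h0mem).symm
    set w0 := (InnerProductSpace.toDual ℝ (EuclideanSpace ℝ (Fin m))).symm l with hw0
    have hw0f : ∀ v, ⟪w0, v⟫ = l v := fun v => InnerProductSpace.toDual_symm_apply
    set y := c⁻¹ • w0 with hy
    have hyval : ∀ v, ⟪v, y⟫ = c⁻¹ * l v := by
      intro v
      rw [hy, real_inner_smul_right, real_inner_comm, hw0f]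
    have hyK : y ∈ K := by
      apply mem_of_forall_polar hK hcomp h0
      intro v hv
      rw [hyval, inv_mul_le_iff₀ hlc, mul_one]
      exact hlmax v hv
    have huy : ⟪u, y⟫ = 1 := by
      rw [hyval, ← hc]
      exact inv_mul_cancel₀ hlc.ne'
    have huniq : ∀ v ∈ polarSet K, ⟪v, y⟫ = 1 → v = u := by
      intro v hv hvy
      rw [hyval] at hvy
      have hlv : l v = c := by field_simp [hlc.ne'] at hvy; linarith
      have hvmem : v ∈ {x | x ∈ polarSet K ∧ ∀ y' ∈ polarSet K, l y' ≤ l x} := by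
        refine ⟨hv, fun y' hy' => ?_⟩
        rw [hlv, hc]
        exact hlmax y' hy'
      rw [← hl] at hvmem
      exact Set.mem_singleton_iff.mp hvmem
    refine ⟨y, hyK, ?_⟩
    ext w
    rw [hRdef]
    simp only [Set.mem_setOf_eq]
    constructor
    · intro hwN
      rcases eq_or_ne w 0 with rfl | hwne
      · exact ⟨0, le_refl 0, by simp⟩
      · have hmaxw := mem_normalCone_iff.mp hwN
        set d := ⟪w, y⟫ with hd
        obtain ⟨pp, hpp, hpppos⟩ := exists_pos_inner h0 hwne
        have hdpos : 0 < d := lt_of_lt_of_le hpppos (hmaxw pp hpp)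
        have hwp : d⁻¹ • w ∈ polarSet K := by
          intro q' hq'
          rw [real_inner_smul_left, inv_mul_le_iff₀ hdpos, mul_one]
          exact hmaxw q' hq'
        have hwy : ⟪d⁻¹ • w, y⟫ = 1 := by
          rw [real_inner_smul_left, ← hd]
          exact inv_mul_cancel₀ hdpos.ne'
        have hwu : d⁻¹ • w = u := huniq _ hwp hwy
        refine ⟨d * c0⁻¹, by positivity, ?_⟩
        have hwdu : w = d • u := by
          rw [← hwu, smul_smul, mul_inv_cancel₀ hdpos.ne', one_smul]
        rw [hwdu, hu, smul_smul]
    · rintro ⟨a, ha, rfl⟩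
      apply mem_normalCone_iff.mpr
      intro q' hq'
      rw [real_inner_smul_left, real_inner_smul_left]
      have h1 : ⟪u0, q'⟫ ≤ c0 := by rw [hc0]; exact hmaxu0 q' hq'
      have h2 : ⟪u0, y⟫ = c0 := by
        have h3 := huy
        rw [hu, real_inner_smul_left, inv_mul_eq_one₀ hc0pos.ne'] at h3
        exact h3.symm
      rw [h2]
      nlinarith
  · -- backward: extreme rays are normal cones ⇒ extreme points exposed
    intro h x hx
    rcases eq_or_ne x 0 with rfl | hxne
    · have hp := polar_eq_zero_of_extreme_zero hcomp hx
      intro _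
      refine ⟨0, ?_⟩
      ext v
      simp only [Set.mem_singleton_iff, Set.mem_setOf_eq, hp,
        ContinuousLinearMap.zero_apply, le_refl, implies_true, and_true]
    · obtain ⟨z, hz, hmax, hxz⟩ := extreme_point_attains h0 hcomp hx hxne
      have hxpolar : x ∈ polarSet K := (mem_extremePoints.mp hx).1
      set N := normalCone K z with hNdef
      have hzero : ∀ v ∈ N, ⟪v, z⟫ ≤ 0 → v = 0 := by
        intro v hvN hvz
        by_contra hvne
        obtain ⟨p, hp, hppos⟩ := exists_pos_inner h0 hvne
        have := mem_normalCone_iff.mp hvN p hp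
        linarith
      set R : Set (EuclideanSpace ℝ (Fin m)) := {v | ∃ a : ℝ, 0 ≤ a ∧ v = a • x} with hRdef
      have hRN : R ⊆ N := by
        rintro v ⟨a, ha, rfl⟩
        apply mem_normalCone_iff.mpr
        intro q' hq'
        rw [real_inner_smul_left, real_inner_smul_left, hxz]
        have := hxpolar q' hq'
        nlinarith
      have hNuniv : N ≠ Set.univ := by
        intro hN
        have hmem : -x ∈ N := by rw [hN]; exact Set.mem_univ _
        have h1 := mem_normalCone_iff.mp hmem 0 (interior_subset h0)
        rw [inner_zero_right, inner_neg_left, hxz] at h1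
        linarith
      have hN0 : N ≠ {0} := by
        intro hN
        have hxN : x ∈ N := hRN ⟨1, zero_le_one, (one_smul ℝ x).symm⟩
        rw [hN] at hxN
        exact hxne hxN
      have hray : IsRay R := ⟨x, hxne, hRdef⟩
      have hextreme : IsExtreme ℝ N R := by
        refine ⟨hRN, ?_⟩
        intro x₁ hx₁ x₂ hx₂ v hvR hseg
        suffices x₁ ∈ R ∧ x₂ ∈ R from this.1
        obtain ⟨a, ha, rfl⟩ := hvR
        obtain ⟨p, q, hp, hq, hpq, hsum⟩ := hseg
        set c₁ := ⟪x₁, z⟫ with hc1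
        set c₂ := ⟪x₂, z⟫ with hc2
        have hc₁ : 0 ≤ c₁ := by
          have := mem_normalCone_iff.mp hx₁ 0 (interior_subset h0)
          rw [inner_zero_right] at this
          exact this
        have hc₂ : 0 ≤ c₂ := by
          have := mem_normalCone_iff.mp hx₂ 0 (interior_subset h0)
          rw [inner_zero_right] at this
          exact this
        have hcomb : p * c₁ + q * c₂ = a := by
          have h' : ⟪p • x₁ + q • x₂, z⟫ = ⟪a • x, z⟫ := by rw [hsum]
          rw [inner_add_left, real_inner_smul_left, real_inner_smul_left,
            real_inner_smul_left, hxz, mul_one, ← hc1, ← hc2] at h'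
          exact h'
        rcases eq_or_lt_of_le hc₁ with h₁ | h₁
        · have hx₁0 : x₁ = 0 := hzero x₁ hx₁ (le_of_eq h₁.symm)
          refine ⟨⟨0, le_refl 0, by rw [hx₁0, zero_smul]⟩, ?_⟩
          have h' : q • x₂ = a • x := by rw [← hsum, hx₁0, smul_zero, zero_add]
          refine ⟨a / q, div_nonneg ha hq.le, ?_⟩
          have := congrArg (fun t => q⁻¹ • t) h'
          simpa [smul_smul, inv_mul_cancel₀ hq.ne', div_eq_inv_mul] using this
        rcases eq_or_lt_of_le hc₂ with h₂ | h₂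
        · have hx₂0 : x₂ = 0 := hzero x₂ hx₂ (le_of_eq h₂.symm)
          refine ⟨?_, ⟨0, le_refl 0, by rw [hx₂0, zero_smul]⟩⟩
          have h' : p • x₁ = a • x := by rw [← hsum, hx₂0, smul_zero, add_zero]
          refine ⟨a / p, div_nonneg ha hp.le, ?_⟩
          have := congrArg (fun t => p⁻¹ • t) h'
          simpa [smul_smul, inv_mul_cancel₀ hp.ne', div_eq_inv_mul] using this
        have hapos : 0 < a := by nlinarith
        have hx₁p : c₁⁻¹ • x₁ ∈ polarSet K := by
          intro q' hq'
          rw [real_inner_smul_left, inv_mul_le_iff₀ h₁, mul_one]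
          exact mem_normalCone_iff.mp hx₁ q' hq'
        have hx₂p : c₂⁻¹ • x₂ ∈ polarSet K := by
          intro q' hq'
          rw [real_inner_smul_left, inv_mul_le_iff₀ h₂, mul_one]
          exact mem_normalCone_iff.mp hx₂ q' hq'
        have heq : (p / a) • x₁ + (q / a) • x₂ = x := by
          have h' : (p / a) • x₁ + (q / a) • x₂ = a⁻¹ • (p • x₁ + q • x₂) := by
            rw [smul_add, smul_smul, smul_smul, div_eq_inv_mul, div_eq_inv_mul]
          rw [h', hsum, smul_smul, inv_mul_cancel₀ hapos.ne', one_smul]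
        have e1 : (p * c₁ / a) * c₁⁻¹ = p / a := by
          field_simp
        have e2 : (q * c₂ / a) * c₂⁻¹ = q / a := by
          field_simp
        have hseg' : x ∈ openSegment ℝ (c₁⁻¹ • x₁) (c₂⁻¹ • x₂) := by
          refine ⟨p * c₁ / a, q * c₂ / a, by positivity, by positivity, ?_, ?_⟩
          · rw [← add_div, hcomb, div_self hapos.ne']
          · rw [smul_smul, smul_smul, e1, e2]
            exact heq
        obtain ⟨hh1, hh2⟩ := (mem_extremePoints.mp hx).2 _ hx₁p _ hx₂p hseg'
        constructor
        · refine ⟨c₁, hc₁, ?_⟩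
          rw [← hh1, smul_smul, mul_inv_cancel₀ h₁.ne', one_smul]
        · refine ⟨c₂, hc₂, ?_⟩
          rw [← hh2, smul_smul, mul_inv_cancel₀ h₂.ne', one_smul]
      obtain ⟨y, hyK, hNy⟩ := h z hz hNuniv hN0 R hray hextreme
      have hxNy : x ∈ normalCone K y := by
        rw [hNy]
        exact ⟨1, zero_le_one, (one_smul ℝ x).symm⟩
      have hxy : ⟪x, y⟫ = 1 := by
        have h1 : ⟪x, y⟫ ≤ 1 := hxpolar y hyK
        have h2 := mem_normalCone_iff.mp hxNy z hz
        rw [hxz] at h2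
        linarith
      intro _
      refine ⟨InnerProductSpace.toDual ℝ (EuclideanSpace ℝ (Fin m)) y, ?_⟩
      ext v
      simp only [Set.mem_singleton_iff, Set.mem_setOf_eq, InnerProductSpace.toDual_apply_apply]
      constructor
      · rintro rfl
        refine ⟨hxpolar, fun w hw => ?_⟩
        have a1 : ⟪y, w⟫ = ⟪w, y⟫ := real_inner_comm _ _
        have a2 : ⟪y, v⟫ = ⟪v, y⟫ := real_inner_comm _ _
        have a3 : ⟪w, y⟫ ≤ 1 := hw y hyK
        linarith [hxy]
      · rintro ⟨hv, hvmax⟩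
        have h1 : ⟪v, y⟫ = 1 := by
          have h2 := hvmax x hxpolar
          have a2 : ⟪y, x⟫ = ⟪x, y⟫ := real_inner_comm _ _
          have a3 : ⟪y, v⟫ = ⟪v, y⟫ := real_inner_comm _ _
          have h3 := hv y hyK
          linarith
        have hvNy : v ∈ normalCone K y :=
          mem_normalCone_iff.mpr (fun q' hq' => by rw [h1]; exact hv q' hq')
        rw [hNy] at hvNy
        obtain ⟨a, ha, rfl⟩ := hvNy
        rw [real_inner_smul_left, hxy, mul_one] at h1
        rw [h1, one_smul]
end

section
/- Let C ⊆ ℝ^m be a convex body with nonempty interior such that for every proper normal cone N of C, every nonempty face of N is a normal cone of C. Then the lattice of exposed faces of C is coatomistic: every exposed face of C is the intersection of the coatoms of the exposed-face lattice containing it. -/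
open scoped RealInnerProductSpace

lemma relint_sub {m : ℕ} {C F : Set (EuclideanSpace ℝ (Fin m))} (hFC : F ⊆ C)
    {z : EuclideanSpace ℝ (Fin m)} (hz : z ∈ intrinsicInterior ℝ F)
    {f : EuclideanSpace ℝ (Fin m)} (hf : f ∈ F) :
    normalCone C z ⊆ normalCone C f := by
  obtain ⟨z', hz'int, hz'eq⟩ := hz
  have hzF : (z' : EuclideanSpace ℝ (Fin m)) ∈ F := by
    have := interior_subset hz'int
    exact this
  subst hz'eq
  set z : EuclideanSpace ℝ (Fin m) := (z' : EuclideanSpace ℝ (Fin m)) with hzdef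
  -- find t > 0 with z + t • (z - f) ∈ F
  have hfspan : f ∈ affineSpan ℝ F := subset_affineSpan ℝ F hf
  set γ : ℝ → affineSpan ℝ F := fun t =>
    ⟨t • (z -ᵥ f) +ᵥ z, AffineSubspace.smul_vsub_vadd_mem _ t z'.2 hfspan z'.2⟩ with hγ
  have hγcont : Continuous γ := by
    apply Continuous.subtype_mk
    fun_prop
  have hγ0 : γ 0 = z' := by
    apply Subtype.ext
    simp [hγ, hzdef]
  have hopen : IsOpen (γ ⁻¹' interior ((↑) ⁻¹' F : Set (affineSpan ℝ F))) :=
    isOpen_interior.preimage hγcont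
  have h0mem : (0 : ℝ) ∈ γ ⁻¹' interior ((↑) ⁻¹' F : Set (affineSpan ℝ F)) := by
    simp [Set.mem_preimage, hγ0, hz'int]
  obtain ⟨δ, hδ, hball⟩ := Metric.isOpen_iff.mp hopen 0 h0mem
  have htmem : γ (δ/2) ∈ interior ((↑) ⁻¹' F : Set (affineSpan ℝ F)) := by
    apply hball
    rw [Metric.mem_ball, dist_zero_right]
    rw [Real.norm_eq_abs, abs_of_pos (by linarith)]
    linarith
  have hfF : (δ/2) • (z - f) + z ∈ F := by
    have h := interior_subset htmem
    rw [Set.mem_preimage] at h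
    exact h
  intro u hu y hy
  have h1 : ⟪u, f - z⟫ ≤ 0 := hu f (hFC hf)
  have h2 : ⟪u, ((δ/2) • (z - f) + z) - z⟫ ≤ 0 := hu _ (hFC hfF)
  have h3 : ((δ/2) • (z - f) + z) - z = (δ/2) • (z - f) := by abel
  rw [h3, real_inner_smul_right] at h2
  have h4 : ⟪u, z - f⟫ ≤ 0 := by nlinarith
  have h5 : ⟪u, z - f⟫ = -⟪u, f - z⟫ := by
    rw [← inner_neg_right]; congr 1; abel
  have h6 : ⟪u, f - z⟫ = 0 := by rw [h5] at h4; linarith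
  have h7 : ⟪u, y - z⟫ ≤ 0 := hu y hy
  have : y - f = (y - z) + (z - f) := by abel
  calc ⟪u, y - f⟫ = ⟪u, y - z⟫ + ⟪u, z - f⟫ := by rw [this, inner_add_right]
  _ ≤ 0 := by rw [h5, h6]; linarith

set_option maxHeartbeats 1000000 in
lemma keyLemma {m : ℕ} {C : Set (EuclideanSpace ℝ (Fin m))}
    (hint : (interior C).Nonempty)
    (hfaces : ∀ z ∈ C, normalCone C z ≠ Set.univ → normalCone C z ≠ {0} →
      ∀ T : Set (EuclideanSpace ℝ (Fin m)), T.Nonempty → Convex ℝ T →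
        IsExtreme ℝ (normalCone C z) T → ∃ y ∈ C, normalCone C y = T)
    {z x w : EuclideanSpace ℝ (Fin m)} (hz : z ∈ C) (hx : x ∈ C)
    (hw : w ∈ normalCone C z) (hwx : ⟪w, x - z⟫ < 0) :
    ∃ v ∈ normalCone C z,
      IsCoatomExposedFace C {c | c ∈ C ∧ ∀ c' ∈ C, ⟪v, c' - c⟫ ≤ 0} ∧
        x ∉ {c | c ∈ C ∧ ∀ c' ∈ C, ⟪v, c' - c⟫ ≤ 0} := by
  classical
  obtain ⟨z₀, hz₀⟩ := hint
  obtain ⟨ε, hε, hball⟩ := Metric.isOpen_iff.mp isOpen_interior z₀ hz₀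
  set N := normalCone C z with hN
  set e := z₀ - z with he
  have hmemN : ∀ u, u ∈ N ↔ ∀ y ∈ C, ⟪u, y - z⟫ ≤ 0 := fun u => Iff.rfl
  -- (a) strict inequality
  have hstrict : ∀ u ∈ N, ⟪u, e⟫ ≤ -(ε / 2 * ‖u‖) := by
    intro u hu
    rcases eq_or_ne u 0 with rfl | hu0
    · simp
    · have hnu : (0:ℝ) < ‖u‖ := norm_pos_iff.mpr hu0
      have hy : z₀ + (ε / 2 * ‖u‖⁻¹) • u ∈ C := by
        apply interior_subset
        apply hball
        rw [Metric.mem_ball, dist_eq_norm]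
        have h1 : z₀ + (ε / 2 * ‖u‖⁻¹) • u - z₀ = (ε / 2 * ‖u‖⁻¹) • u := by abel
        rw [h1, norm_smul, Real.norm_eq_abs, abs_of_pos (by positivity)]
        rw [mul_assoc, inv_mul_cancel₀ (ne_of_gt hnu)]
        linarith
      have h2 := hu _ hy
      have h3 : z₀ + (ε / 2 * ‖u‖⁻¹) • u - z = e + (ε / 2 * ‖u‖⁻¹) • u := by
        rw [he]; abel
      rw [h3, inner_add_right, real_inner_smul_right, real_inner_self_eq_norm_mul_norm] at h2
      have h4 : ε / 2 * ‖u‖⁻¹ * (‖u‖ * ‖u‖) = ε / 2 * ‖u‖ := by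
        field_simp
      rw [h4] at h2
      linarith
  -- N is a cone
  have hNcone : ∀ (t : ℝ), 0 ≤ t → ∀ u ∈ N, t • u ∈ N := by
    intro t ht u hu y hy
    rw [real_inner_smul_left]
    exact mul_nonpos_iff.mpr (Or.inl ⟨ht, hu y hy⟩)
  have hw0 : w ≠ 0 := by rintro rfl; simp at hwx
  have hwe : ⟪w, e⟫ < 0 := by
    have := hstrict w hw
    have : -(ε / 2 * ‖w‖) < 0 := by
      have : (0:ℝ) < ‖w‖ := norm_pos_iff.mpr hw0
      nlinarith
    linarith [hstrict w hw]
  -- the base B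
  set B := {u | u ∈ N ∧ ⟪u, e⟫ = -1} with hB
  have hNclosed : IsClosed N := by
    have h1 : N = ⋂ y ∈ C, {u : EuclideanSpace ℝ (Fin m) | ⟪u, y - z⟫ ≤ 0} := by
      ext u; simp [hmemN, Set.mem_iInter]
    rw [h1]
    exact isClosed_biInter fun y _ =>
      isClosed_le (continuous_id.inner continuous_const) continuous_const
  have hBclosed : IsClosed B := by
    have h1 : B = N ∩ {u | ⟪u, e⟫ = -1} := rfl
    rw [h1]
    exact hNclosed.inter (isClosed_eq (continuous_id.inner continuous_const) continuous_const)
  have hBcompact : IsCompact B := by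
    rw [Metric.isCompact_iff_isClosed_bounded]
    refine ⟨hBclosed, ?_⟩
    rw [Metric.isBounded_iff_subset_closedBall 0]
    refine ⟨2 / ε, fun u hu => ?_⟩
    rw [Metric.mem_closedBall, dist_zero_right]
    have h1 := hstrict u hu.1
    rw [hu.2] at h1
    rw [le_div_iff₀ hε]
    nlinarith [norm_nonneg u]
  have hNconvex : Convex ℝ N := by
    intro u1 hu1 u2 hu2 a b ha hb _
    intro y hy
    rw [inner_add_left, real_inner_smul_left, real_inner_smul_left]
    have h1 := hu1 y hy
    have h2 := hu2 y hy
    nlinarith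
  have hBconvex : Convex ℝ B := by
    intro u1 hu1 u2 hu2 a b ha hb hab
    refine ⟨hNconvex hu1.1 hu2.1 ha hb hab, ?_⟩
    rw [inner_add_left, real_inner_smul_left, real_inner_smul_left, hu1.2, hu2.2]
    ring_nf
    linarith
  -- normalized w
  have hwB : (-⟪w, e⟫)⁻¹ • w ∈ B := by
    refine ⟨hNcone _ (inv_nonneg.mpr (by linarith : (0:ℝ) ≤ -⟪w, e⟫)) w hw, ?_⟩
    rw [real_inner_smul_left, inv_neg, neg_mul, inv_mul_cancel₀ (ne_of_lt hwe)]
  have hwxs : ⟪(-⟪w, e⟫)⁻¹ • w, x - z⟫ < 0 := by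
    rw [real_inner_smul_left]
    apply mul_neg_of_pos_of_neg _ hwx
    rw [inv_pos]
    linarith
  -- Krein-Milman
  have hKM := closure_convexHull_extremePoints hBcompact hBconvex
  have hexist : ∃ v ∈ B.extremePoints ℝ, ⟪v, x - z⟫ < 0 := by
    by_contra hcon
    push_neg at hcon
    have hsub : B ⊆ {u : EuclideanSpace ℝ (Fin m) | 0 ≤ ⟪u, x - z⟫} := by
      rw [← hKM]
      refine closure_minimal (convexHull_min (fun v hv => hcon v hv) ?_) ?_
      · intro u1 h1 u2 h2 a b ha hb hab
        simp only [Set.mem_setOf_eq] at *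
        rw [inner_add_left, real_inner_smul_left, real_inner_smul_left]
        nlinarith
      · exact isClosed_le continuous_const (continuous_id.inner continuous_const)
    have := hsub hwB
    simp only [Set.mem_setOf_eq] at this
    linarith
  obtain ⟨v, hvext, hvx⟩ := hexist
  have hvB : v ∈ B := hvext.1
  have hvN : v ∈ N := hvB.1
  have hv0 : v ≠ 0 := by
    rintro rfl
    have := hvB.2
    simp at this
  -- the ray T
  set T := {u : EuclideanSpace ℝ (Fin m) | ∃ t : ℝ, 0 ≤ t ∧ u = t • v} with hT
  have hvT : v ∈ T := ⟨1, zero_le_one, (one_smul ℝ v).symm⟩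
  have hTne : T.Nonempty := ⟨v, hvT⟩
  have hTconv : Convex ℝ T := by
    rintro u1 ⟨t1, ht1, rfl⟩ u2 ⟨t2, ht2, rfl⟩ a b ha hb hab
    exact ⟨a * t1 + b * t2, by positivity, by rw [smul_smul, smul_smul, add_smul]⟩
  have hTN : T ⊆ N := by
    rintro u ⟨t, ht, rfl⟩
    exact hNcone t ht v hvN
  have hText : IsExtreme ℝ N T := by
    refine ⟨hTN, ?_⟩
    rintro u1 hu1 u2 hu2 p ⟨t, ht, rfl⟩ ⟨a, b, ha, hb, hab, hcomb⟩
    rcases eq_or_ne u1 0 with rfl | h1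
    · exact ⟨0, le_refl 0, (zero_smul ℝ v).symm⟩
    rcases eq_or_ne u2 0 with rfl | h2
    · refine ⟨a⁻¹ * t, by positivity, ?_⟩
      rw [smul_zero, add_zero] at hcomb
      rw [mul_smul, ← hcomb, inv_smul_smul₀ (ne_of_gt ha)]
    · have hs1 : (0:ℝ) < -⟪u1, e⟫ := by
        have := hstrict u1 hu1
        have hn : (0:ℝ) < ‖u1‖ := norm_pos_iff.mpr h1
        nlinarith
      have hs2 : (0:ℝ) < -⟪u2, e⟫ := by
        have := hstrict u2 hu2
        have hn : (0:ℝ) < ‖u2‖ := norm_pos_iff.mpr h2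
        nlinarith
      set s1 := -⟪u1, e⟫ with hs1def
      set s2 := -⟪u2, e⟫ with hs2def
      have hte : t = a * s1 + b * s2 := by
        have h5 : ⟪a • u1 + b • u2, e⟫ = ⟪(t : ℝ) • v, e⟫ := by rw [hcomb]
        rw [inner_add_left, real_inner_smul_left, real_inner_smul_left,
          real_inner_smul_left, hvB.2] at h5
        rw [hs1def, hs2def]
        linarith
      have htpos : (0:ℝ) < t := by rw [hte]; positivity
      have hs1' : s1 ≠ 0 := ne_of_gt hs1
      have hs2' : s2 ≠ 0 := ne_of_gt hs2
      have hu1B : s1⁻¹ • u1 ∈ B := by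
        refine ⟨hNcone _ (inv_nonneg.mpr hs1.le) u1 hu1, ?_⟩
        rw [real_inner_smul_left]
        rw [show ⟪u1, e⟫ = -s1 by rw [hs1def]; ring]
        rw [mul_neg, inv_mul_cancel₀ hs1']
      have hu2B : s2⁻¹ • u2 ∈ B := by
        refine ⟨hNcone _ (inv_nonneg.mpr hs2.le) u2 hu2, ?_⟩
        rw [real_inner_smul_left]
        rw [show ⟪u2, e⟫ = -s2 by rw [hs2def]; ring]
        rw [mul_neg, inv_mul_cancel₀ hs2']
      have hseg : v ∈ openSegment ℝ (s1⁻¹ • u1) (s2⁻¹ • u2) := by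
        refine ⟨a * s1 / t, b * s2 / t, by positivity, by positivity, ?_, ?_⟩
        · have ht' : t ≠ 0 := ne_of_gt htpos
          field_simp
          linarith
        · rw [smul_smul, smul_smul]
          have ht' : t ≠ 0 := ne_of_gt htpos
          have e1 : a * s1 / t * s1⁻¹ = a / t := by field_simp
          have e2 : b * s2 / t * s2⁻¹ = b / t := by field_simp
          rw [e1, e2]
          have : (a / t) • u1 + (b / t) • u2 = t⁻¹ • (a • u1 + b • u2) := by
            rw [smul_add, smul_smul, smul_smul]
            rw [div_eq_inv_mul, div_eq_inv_mul]
          rw [this, hcomb, inv_smul_smul₀ (ne_of_gt htpos)]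
      have e1 := hvext.2 hu1B hu2B hseg
      exact ⟨s1, hs1.le, by rw [← e1, smul_smul, mul_inv_cancel₀ (ne_of_gt hs1), one_smul]⟩
  -- apply hfaces
  have hNuniv : N ≠ Set.univ := by
    intro hcontr
    have h1 := hstrict w hw
    have h2 := hstrict (-w) (by rw [hcontr]; trivial)
    rw [inner_neg_left] at h2
    rw [norm_neg] at h2
    have : (0:ℝ) < ‖w‖ := norm_pos_iff.mpr hw0
    nlinarith
  have hN0 : N ≠ {0} := by
    intro hcontr
    rw [hcontr] at hw
    exact hw0 hw
  obtain ⟨y, hyC, hyT⟩ := hfaces z hz hNuniv hN0 T hTne hTconv hText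
  -- the coatom G
  set G := {c | c ∈ C ∧ ∀ c' ∈ C, ⟪v, c' - c⟫ ≤ 0} with hG
  have hxG : x ∉ G := by
    rintro ⟨-, hmax⟩
    have h1 := hmax z hz
    rw [inner_sub_right] at h1
    rw [inner_sub_right] at hvx
    linarith
  have hzG : z ∈ G := ⟨hz, fun c' hc' => hvN c' hc'⟩
  have hyG : y ∈ G := by
    refine ⟨hyC, fun c' hc' => ?_⟩
    have : v ∈ normalCone C y := by rw [hyT]; exact hvT
    exact this c' hc'
  have hGexp : IsExposed ℝ C G := by
    intro _
    refine ⟨innerSL ℝ v, ?_⟩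
    ext c
    simp only [hG, Set.mem_setOf_eq, innerSL_apply_apply, inner_sub_right, sub_nonpos]
  have hGC : G ≠ C := fun hcontr => hxG (hcontr ▸ hx)
  refine ⟨v, hvN, ⟨hGexp, hGC, ?_⟩, hxG⟩
  intro H hH hGH
  rcases eq_or_ne H C with hHC | hHC
  · exact Or.inr hHC
  left
  obtain ⟨l, hHl⟩ := hH ⟨y, hGH hyG⟩
  set v' := (InnerProductSpace.toDual ℝ (EuclideanSpace ℝ (Fin m))).symm l with hv'
  have hv'app : ∀ c, ⟪v', c⟫ = l c := fun c => InnerProductSpace.toDual_symm_apply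
  have hyH : y ∈ H := hGH hyG
  have hv'N : v' ∈ normalCone C y := by
    intro c' hc'
    rw [inner_sub_right, hv'app, hv'app, sub_nonpos]
    rw [hHl] at hyH
    exact hyH.2 c' hc'
  rw [hyT] at hv'N
  obtain ⟨t, ht, hv'v⟩ := hv'N
  rcases eq_or_lt_of_le ht with ht0 | htpos
  · exfalso
    apply hHC
    have hl0 : ∀ c, l c = 0 := by
      intro c
      rw [← hv'app, hv'v, ← ht0, zero_smul, inner_zero_left]
    rw [hHl]
    ext c
    simp [hl0]
  · rw [hHl]
    ext c
    simp only [hG, Set.mem_setOf_eq]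
    constructor
    · rintro ⟨hc, hmax⟩
      refine ⟨hc, fun c' hc' => ?_⟩
      have := hmax c' hc'
      rw [← hv'app, ← hv'app, hv'v, real_inner_smul_left, real_inner_smul_left] at this
      have h6 : ⟪v, c'⟫ ≤ ⟪v, c⟫ := le_of_mul_le_mul_left this htpos
      rw [inner_sub_right, sub_nonpos]
      exact h6
    · rintro ⟨hc, hmax⟩
      refine ⟨hc, fun c' hc' => ?_⟩
      have := hmax c' hc'
      rw [inner_sub_right, sub_nonpos] at this
      rw [← hv'app, ← hv'app, hv'v, real_inner_smul_left, real_inner_smul_left]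
      exact mul_le_mul_of_nonneg_left this ht


/-- if `C` is a convex body with nonempty interior such that every nonempty
face of every proper normal cone of `C` is a normal cone of `C`, then the lattice of exposed
faces of `C` is coatomistic: every exposed face `F` is the infimum (intersection within the
lattice, i.e. together with the top element `C`) of the coatoms containing it. -/
theorem stmt19 {m : ℕ} (C : Set (EuclideanSpace ℝ (Fin m))) (hC : Convex ℝ C)
    (hcomp : IsCompact C) (hint : (interior C).Nonempty)
    (hfaces : ∀ z ∈ C, normalCone C z ≠ Set.univ → normalCone C z ≠ {0} →
      ∀ T : Set (EuclideanSpace ℝ (Fin m)), T.Nonempty → Convex ℝ T →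
        IsExtreme ℝ (normalCone C z) T → ∃ y ∈ C, normalCone C y = T) :
    ∀ F, IsExposed ℝ C F → F = C ∩ ⋂₀ {G | IsCoatomExposedFace C G ∧ F ⊆ G} := by
  intro F hF
  rcases Set.eq_empty_or_nonempty F with hFe | hFne
  · -- empty face
    subst hFe
    apply Set.eq_of_subset_of_subset (Set.empty_subset _)
    rintro x ⟨hxC, hxall⟩
    rw [Set.mem_sInter] at hxall
    by_cases hsing : ∃ c ∈ C, c ≠ x
    · obtain ⟨c, hcC, hcx⟩ := hsing
      have hCne : C.Nonempty := ⟨x, hxC⟩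
      obtain ⟨z, hzC, hzmax⟩ := hcomp.exists_isMaxOn hCne
        ((continuous_const.inner continuous_id).continuousOn
          (f := fun y => (⟪c - x, y⟫ : ℝ)))
      have hwN : c - x ∈ normalCone C z := by
        intro y hy
        rw [inner_sub_right, sub_nonpos]
        exact hzmax hy
      have hwx : ⟪c - x, x - z⟫ < 0 := by
        have h1 : ⟪c - x, c⟫ ≤ ⟪c - x, z⟫ := hzmax hcC
        have h2 : (0:ℝ) < ⟪c - x, c - x⟫ := by
          rw [real_inner_self_eq_norm_mul_norm]
          have : (0:ℝ) < ‖c - x‖ := norm_pos_iff.mpr (sub_ne_zero.mpr hcx)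
          nlinarith
        rw [inner_sub_right] at h2 ⊢
        linarith
      obtain ⟨v, hvN, hco, hxG⟩ := keyLemma hint hfaces hzC hxC hwN hwx
      exact hxG (hxall _ ⟨hco, Set.empty_subset _⟩)
    · push_neg at hsing
      have hCx : C = {x} := Set.eq_singleton_iff_unique_mem.mpr ⟨hxC, hsing⟩
      have hco : IsCoatomExposedFace C ∅ := by
        refine ⟨fun h => absurd h (by simp), ?_, ?_⟩
        · rw [hCx]
          exact (Set.singleton_ne_empty x).symm
        · intro G hG hsub
          rcases G.eq_empty_or_nonempty with h | h
          · exact Or.inl h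
          · right
            obtain ⟨l, hGl⟩ := hG h
            have hGsub : G ⊆ C := by rw [hGl]; exact fun a ha => ha.1
            rw [hCx] at hGsub ⊢
            exact (h.subset_singleton_iff).mp hGsub
      exact absurd (hxall ∅ ⟨hco, Set.empty_subset _⟩) (Set.notMem_empty x)
  · -- nonempty face
    have hFsub : F ⊆ C := hF.subset
    have hFconv : Convex ℝ F := hF.convex hC
    obtain ⟨z, hzint⟩ := Set.Nonempty.intrinsicInterior hFconv hFne
    have hzF : z ∈ F := intrinsicInterior_subset hzint
    apply Set.eq_of_subset_of_subset
    · intro f hf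
      refine ⟨hFsub hf, ?_⟩
      rw [Set.mem_sInter]
      rintro G ⟨-, hFG⟩
      exact hFG hf
    · rintro x ⟨hxC, hxall⟩
      rw [Set.mem_sInter] at hxall
      by_contra hxF
      obtain ⟨l, hFl⟩ := hF hFne
      set w := (InnerProductSpace.toDual ℝ (EuclideanSpace ℝ (Fin m))).symm l with hwdef
      have hwapp : ∀ c, ⟪w, c⟫ = l c := fun c => InnerProductSpace.toDual_symm_apply
      have hzF' := hzF
      rw [hFl] at hzF'
      have hlx : l x < l z := by
        rcases lt_or_eq_of_le (hzF'.2 x hxC) with h | h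
        · exact h
        · exact absurd (by rw [hFl]; exact ⟨hxC, fun y hy => h ▸ hzF'.2 y hy⟩) hxF
      have hwN : w ∈ normalCone C z := fun y hy => by
        rw [inner_sub_right, hwapp, hwapp, sub_nonpos]
        exact hzF'.2 y hy
      have hwx : ⟪w, x - z⟫ < 0 := by
        rw [inner_sub_right, hwapp, hwapp]
        linarith
      obtain ⟨v, hvN, hco, hxG⟩ := keyLemma hint hfaces hzF'.1 hxC hwN hwx
      apply hxG
      apply hxall
      refine ⟨hco, fun f hf => ?_⟩
      exact ⟨hFsub hf, fun c' hc' => relint_sub hFsub hzint hf hvN c' hc'⟩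
end
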